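/- arXiv:1811.02876 — 4 statements merged into one kernel-verified Lean document; each statement's English description precedes it below -/
import Mathlib

section
/- Let d be a positive integer with d ≡ 0 or 2 (mod 6). Then there exist x, y ∈ L_d with (x.x) = (y.y) = 0 and (x.y) = 1 (an embedding of the hyperbolic plane U into L_d, automatically primitive) if and only if there exist coprime integers a, b with 2(a² − ab + b²) = d (i.e. d is primitively represented by the lattice A₂). -/
open scoped BigOperators

noncomputable section

/-- The negative definite `E₈` Gram matrix. -/
def E8M : Matrix (Fin 8) (Fin 8) ℤ := - CartanMatrix.E₈

/-- The Gram matrix of the Mukai lattice `Λ̃ = E₈(-1)² ⊕ U₁ ⊕ U₂ ⊕ U₃ ⊕ U₄` on `ℤ²⁴`,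
where the last hyperbolic summand `U₄` carries the sign-changed pairing `(e₄.f₄) = -1`. -/
def gramM : Fin 24 → Fin 24 → ℤ := fun i j =>
  if i.val < 8 ∧ j.val < 8 then
    E8M ⟨i.val % 8, Nat.mod_lt _ (by norm_num)⟩ ⟨j.val % 8, Nat.mod_lt _ (by norm_num)⟩
  else if 8 ≤ i.val ∧ i.val < 16 ∧ 8 ≤ j.val ∧ j.val < 16 then
    E8M ⟨(i.val - 8) % 8, Nat.mod_lt _ (by norm_num)⟩ ⟨(j.val - 8) % 8, Nat.mod_lt _ (by norm_num)⟩
  else if (i.val = 16 ∧ j.val = 17) ∨ (i.val = 17 ∧ j.val = 16) ∨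
      (i.val = 18 ∧ j.val = 19) ∨ (i.val = 19 ∧ j.val = 18) ∨
      (i.val = 20 ∧ j.val = 21) ∨ (i.val = 21 ∧ j.val = 20) then 1
  else if (i.val = 22 ∧ j.val = 23) ∨ (i.val = 23 ∧ j.val = 22) then -1
  else 0

/-- The bilinear (Mukai) form of the lattice `Λ̃`. -/
def MB (x y : Fin 24 → ℤ) : ℤ := ∑ i, ∑ j, gramM i j * x i * y j

/-- `λ₁ = e₄ - f₄`. -/
def l1 : Fin 24 → ℤ := Pi.single 22 1 - Pi.single 23 1

/-- `λ₂ = e₃ + f₃ + f₄`. -/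
def l2 : Fin 24 → ℤ := Pi.single 20 1 + Pi.single 21 1 + Pi.single 23 1

/-- `μ₁ = e₃ - f₃`. -/
def m1 : Fin 24 → ℤ := Pi.single 20 1 - Pi.single 21 1

/-- `μ₂ = -e₃ - e₄ - f₄`. -/
def m2 : Fin 24 → ℤ := -(Pi.single 20 1) - Pi.single 22 1 - Pi.single 23 1

lemma MB_add_left (x y z : Fin 24 → ℤ) : MB (x + y) z = MB x z + MB y z := by
  simp only [MB, Pi.add_apply, ← Finset.sum_add_distrib]
  refine Finset.sum_congr rfl fun i _ => Finset.sum_congr rfl fun j _ => ?_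
  ring

lemma MB_smul_left (c : ℤ) (x y : Fin 24 → ℤ) : MB (c • x) y = c * MB x y := by
  simp only [MB, Finset.mul_sum]
  refine Finset.sum_congr rfl fun i _ => Finset.sum_congr rfl fun j _ => ?_
  simp only [Pi.smul_apply, smul_eq_mul]; ring

/-- The saturation of a submodule. -/
def sat {R M : Type*} [CommRing R] [IsDomain R] [AddCommGroup M] [Module R M]
    (N : Submodule R M) : Submodule R M where
  carrier := {x | ∃ n : R, n ≠ 0 ∧ n • x ∈ N}
  add_mem' := by
    rintro x y ⟨n, hn, hx⟩ ⟨m, hm, hy⟩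
    refine ⟨n * m, mul_ne_zero hn hm, ?_⟩
    have h1 : (n * m) • (x + y) = m • (n • x) + n • (m • y) := by
      rw [smul_add, mul_comm n m, mul_smul, mul_smul, smul_comm m n y]
    rw [h1]
    exact N.add_mem (N.smul_mem m hx) (N.smul_mem n hy)
  zero_mem' := ⟨1, one_ne_zero, by simp⟩
  smul_mem' := by
    rintro c x ⟨n, hn, hx⟩
    exact ⟨n, hn, by rw [smul_comm]; exact N.smul_mem c hx⟩

/-- Isometries of the Mukai lattice `Λ̃`. -/
def IsIsomM (g : (Fin 24 → ℤ) ≃ₗ[ℤ] (Fin 24 → ℤ)) : Prop := ∀ x y, MB (g x) (g y) = MB x y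

end
/-- The Noether–Lefschetz vector `v_d ∈ Λ̃`: for `d ≡ 0 (mod 6)` it is `e₁ - (d/6) f₁`, and
for `d ≡ 2 (mod 6)` it is `3(e₁ - ((d-2)/6) f₁) + μ₁ - μ₂`. -/
def vdM (d : ℤ) : Fin 24 → ℤ :=
  if d % 6 = 0 then Pi.single 16 1 - (d / 6) • Pi.single 17 1
  else (3 : ℤ) • (Pi.single 16 1 - ((d - 2) / 6) • Pi.single 17 1) + m1 - m2

/-- `L_d`, the saturation of `ℤλ₁ + ℤλ₂ + ℤv_d` in `Λ̃`. -/
def LdSub (d : ℤ) : Submodule ℤ (Fin 24 → ℤ) :=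
  sat (Submodule.span ℤ ({l1, l2, vdM d} : Set (Fin 24 → ℤ)))

set_option maxHeartbeats 1000000
def s16 : Fin 24 → ℤ := Pi.single 16 1
def s17 : Fin 24 → ℤ := Pi.single 17 1
def s20 : Fin 24 → ℤ := Pi.single 20 1
def s23 : Fin 24 → ℤ := Pi.single 23 1
lemma Pl1l1 : MB l1 l1 = 2 := by decide
lemma Pl1l2 : MB l1 l2 = -1 := by decide
lemma Pl1s16 : MB l1 s16 = 0 := by decide
lemma Pl1s17 : MB l1 s17 = 0 := by decide
lemma Pl1s20 : MB l1 s20 = 0 := by decide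
lemma Pl1s23 : MB l1 s23 = -1 := by decide
lemma Pl2l1 : MB l2 l1 = -1 := by decide
lemma Pl2l2 : MB l2 l2 = 2 := by decide
lemma Pl2s16 : MB l2 s16 = 0 := by decide
lemma Pl2s17 : MB l2 s17 = 0 := by decide
lemma Pl2s20 : MB l2 s20 = 1 := by decide
lemma Pl2s23 : MB l2 s23 = 0 := by decide
lemma Ps16l1 : MB s16 l1 = 0 := by decide
lemma Ps16l2 : MB s16 l2 = 0 := by decide
lemma Ps16s16 : MB s16 s16 = 0 := by decide
lemma Ps16s17 : MB s16 s17 = 1 := by decide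
lemma Ps16s20 : MB s16 s20 = 0 := by decide
lemma Ps16s23 : MB s16 s23 = 0 := by decide
lemma Ps17l1 : MB s17 l1 = 0 := by decide
lemma Ps17l2 : MB s17 l2 = 0 := by decide
lemma Ps17s16 : MB s17 s16 = 1 := by decide
lemma Ps17s17 : MB s17 s17 = 0 := by decide
lemma Ps17s20 : MB s17 s20 = 0 := by decide
lemma Ps17s23 : MB s17 s23 = 0 := by decide
lemma Ps20l1 : MB s20 l1 = 0 := by decide
lemma Ps20l2 : MB s20 l2 = 1 := by decide
lemma Ps20s16 : MB s20 s16 = 0 := by decide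
lemma Ps20s17 : MB s20 s17 = 0 := by decide
lemma Ps20s20 : MB s20 s20 = 0 := by decide
lemma Ps20s23 : MB s20 s23 = 0 := by decide
lemma Ps23l1 : MB s23 l1 = -1 := by decide
lemma Ps23l2 : MB s23 l2 = 0 := by decide
lemma Ps23s16 : MB s23 s16 = 0 := by decide
lemma Ps23s17 : MB s23 s17 = 0 := by decide
lemma Ps23s20 : MB s23 s20 = 0 := by decide
lemma Ps23s23 : MB s23 s23 = 0 := by decide

lemma MB_add_right (x y z : Fin 24 → ℤ) : MB x (y + z) = MB x y + MB x z := by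
  simp only [MB, Pi.add_apply, ← Finset.sum_add_distrib]
  refine Finset.sum_congr rfl fun i _ => Finset.sum_congr rfl fun j _ => ?_
  ring

lemma MB_smul_right (c : ℤ) (x y : Fin 24 → ℤ) : MB x (c • y) = c * MB x y := by
  simp only [MB, Finset.mul_sum]
  refine Finset.sum_congr rfl fun i _ => Finset.sum_congr rfl fun j _ => ?_
  simp only [Pi.smul_apply, smul_eq_mul]; ring

lemma MB_sub_left (x y z : Fin 24 → ℤ) : MB (x - y) z = MB x z - MB y z := by
  have h := MB_add_left x (-y) z
  have h2 : MB (-y) z = -MB y z := by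
    have := MB_smul_left (-1) y z
    simpa using this
  simpa [sub_eq_add_neg, h2] using h

lemma MB_sub_right (x y z : Fin 24 → ℤ) : MB x (y - z) = MB x y - MB x z := by
  have h := MB_add_right x y (-z)
  have h2 : MB x (-z) = -MB x z := by
    have := MB_smul_right (-1) x z
    simpa using this
  simpa [sub_eq_add_neg, h2] using h

/-- basis vector `v_d` for `d ≡ 0 (mod 6)`, with `n = d/6` -/
def vb0 (n : ℤ) : Fin 24 → ℤ := s16 - n • s17

/-- the generator `v_d` for `d ≡ 2 (mod 6)`, with `m = (d-2)/6` -/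
def wv (m : ℤ) : Fin 24 → ℤ := (3:ℤ) • (s16 - m • s17) + m1 - m2

/-- the extra basis vector `w = (v_d + λ₂ - λ₁)/3` of the saturation, for `d ≡ 2 (mod 6)` -/
def wb (m : ℤ) : Fin 24 → ℤ := s16 - m • s17 + s20 + s23

lemma MB_c0 (n p q r s t u : ℤ) :
    MB (p • l1 + q • l2 + r • vb0 n) (s • l1 + t • l2 + u • vb0 n)
      = 2*p*s - p*t - q*s + 2*q*t - 2*n*r*u := by
  simp only [vb0, MB_add_left, MB_add_right, MB_smul_left, MB_smul_right,
    MB_sub_left, MB_sub_right, Pl1l1, Pl1l2, Pl2l1, Pl2l2, Pl1s16, Pl1s17,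
    Pl2s16, Pl2s17, Ps16l1, Ps17l1, Ps16l2, Ps17l2, Ps16s16, Ps16s17, Ps17s16, Ps17s17]
  ring

lemma MB_c2 (m p q r s t u : ℤ) :
    MB (p • l1 + q • l2 + r • wb m) (s • l1 + t • l2 + u • wb m)
      = 2*p*s - p*t - q*s + 2*q*t - p*u - r*s + q*u + r*t - 2*m*r*u := by
  simp only [wb, MB_add_left, MB_add_right, MB_smul_left, MB_smul_right,
    MB_sub_left, MB_sub_right, Pl1l1, Pl1l2, Pl2l1, Pl2l2, Pl1s16, Pl1s17,
    Pl1s20, Pl1s23, Pl2s16, Pl2s17, Pl2s20, Pl2s23, Ps16l1, Ps17l1, Ps20l1, Ps23l1,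
    Ps16l2, Ps17l2, Ps20l2, Ps23l2, Ps16s16, Ps16s17, Ps17s16, Ps17s17,
    Ps16s20, Ps16s23, Ps17s20, Ps17s23, Ps20s16, Ps20s17, Ps20s20, Ps20s23,
    Ps23s16, Ps23s17, Ps23s20, Ps23s23]
  ring

lemma mem_sat {N : Submodule ℤ (Fin 24 → ℤ)} {x : Fin 24 → ℤ} :
    x ∈ sat N ↔ ∃ c : ℤ, c ≠ 0 ∧ c • x ∈ N := Iff.rfl

def S0 (n : ℤ) : Submodule ℤ (Fin 24 → ℤ) where
  carrier := {x | x 17 = -(n * x 16) ∧ x 21 = x 20 ∧ x 23 = x 20 - x 22 ∧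
    ∀ i : Fin 24, (i.val < 16 ∨ i.val = 18 ∨ i.val = 19) → x i = 0}
  add_mem' := by
    rintro x y ⟨h1, h2, h3, h4⟩ ⟨g1, g2, g3, g4⟩
    refine ⟨?_, ?_, ?_, fun i hi => ?_⟩ <;> simp only [Pi.add_apply]
    · rw [h1, g1]; ring
    · rw [h2, g2]
    · rw [h3, g3]; ring
    · rw [h4 i hi, g4 i hi]; ring
  zero_mem' := by
    refine ⟨?_, ?_, ?_, fun i hi => ?_⟩ <;> simp
  smul_mem' := by
    rintro c x ⟨h1, h2, h3, h4⟩
    refine ⟨?_, ?_, ?_, fun i hi => ?_⟩ <;> simp only [Pi.smul_apply, smul_eq_mul]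
    · rw [h1]; ring
    · rw [h2]
    · rw [h3]; ring
    · rw [h4 i hi]; ring

def S2 (m : ℤ) : Submodule ℤ (Fin 24 → ℤ) where
  carrier := {x | x 17 = -(m * x 16) ∧ x 20 = x 21 + x 16 ∧ x 23 = x 21 + x 16 - x 22 ∧
    ∀ i : Fin 24, (i.val < 16 ∨ i.val = 18 ∨ i.val = 19) → x i = 0}
  add_mem' := by
    rintro x y ⟨h1, h2, h3, h4⟩ ⟨g1, g2, g3, g4⟩
    refine ⟨?_, ?_, ?_, fun i hi => ?_⟩ <;> simp only [Pi.add_apply]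
    · rw [h1, g1]; ring
    · rw [h2, g2]; ring
    · rw [h3, g3]; ring
    · rw [h4 i hi, g4 i hi]; ring
  zero_mem' := by
    refine ⟨?_, ?_, ?_, fun i hi => ?_⟩ <;> simp
  smul_mem' := by
    rintro c x ⟨h1, h2, h3, h4⟩
    refine ⟨?_, ?_, ?_, fun i hi => ?_⟩ <;> simp only [Pi.smul_apply, smul_eq_mul]
    · rw [h1]; ring
    · rw [h2]; ring
    · rw [h3]; ring
    · rw [h4 i hi]; ring

lemma l1_mem_S0 (n : ℤ) : l1 ∈ S0 n := by
  refine ⟨?_, by decide, by decide, by decide⟩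
  rw [show l1 17 = 0 by decide, show l1 16 = 0 by decide]; ring

lemma l2_mem_S0 (n : ℤ) : l2 ∈ S0 n := by
  refine ⟨?_, by decide, by decide, by decide⟩
  rw [show l2 17 = 0 by decide, show l2 16 = 0 by decide]; ring

lemma sA : ∀ i : Fin 24, (i.val < 16 ∨ i.val = 18 ∨ i.val = 19) →
    s16 i = 0 ∧ s17 i = 0 ∧ m1 i = 0 ∧ m2 i = 0 := by decide

lemma vb0_mem_S0 (n : ℤ) : vb0 n ∈ S0 n := by
  refine ⟨?_, ?_, ?_, fun i hi => ?_⟩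
  · show vb0 n 17 = -(n * vb0 n 16)
    simp [vb0, show s16 17 = 0 by decide, show s17 17 = 1 by decide,
      show s16 16 = 1 by decide, show s17 16 = 0 by decide]
  · show vb0 n 21 = vb0 n 20
    simp [vb0, show s16 21 = 0 by decide, show s17 21 = 0 by decide,
      show s16 20 = 0 by decide, show s17 20 = 0 by decide]
  · show vb0 n 23 = vb0 n 20 - vb0 n 22
    simp [vb0, show s16 23 = 0 by decide, show s17 23 = 0 by decide,
      show s16 20 = 0 by decide, show s17 20 = 0 by decide,
      show s16 22 = 0 by decide, show s17 22 = 0 by decide]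
  · show vb0 n i = 0
    simp [vb0, (sA i hi).1, (sA i hi).2.1]

lemma l1_mem_S2 (m : ℤ) : l1 ∈ S2 m := by
  refine ⟨?_, by decide, by decide, by decide⟩
  rw [show l1 17 = 0 by decide, show l1 16 = 0 by decide]; ring

lemma l2_mem_S2 (m : ℤ) : l2 ∈ S2 m := by
  refine ⟨?_, by decide, by decide, by decide⟩
  rw [show l2 17 = 0 by decide, show l2 16 = 0 by decide]; ring

lemma wv_mem_S2 (m : ℤ) : wv m ∈ S2 m := by
  have e : ∀ j : Fin 24, wv m j = 3 * (s16 j) - 3 * m * (s17 j) + m1 j - m2 j := by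
    intro j; simp [wv, Pi.smul_apply, Pi.sub_apply, Pi.add_apply]; ring
  refine ⟨?_, ?_, ?_, fun i hi => ?_⟩
  · rw [e 17, e 16]
    simp [show s16 17 = 0 by decide, show s17 17 = 1 by decide,
      show s16 16 = 1 by decide, show s17 16 = 0 by decide,
      show m1 17 = 0 by decide, show m2 17 = 0 by decide,
      show m1 16 = 0 by decide, show m2 16 = 0 by decide]
    ring
  · rw [e 20, e 21, e 16]
    simp [show s16 20 = 0 by decide, show s17 20 = 0 by decide,
      show s16 21 = 0 by decide, show s17 21 = 0 by decide,
      show s16 16 = 1 by decide, show s17 16 = 0 by decide,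
      show m1 20 = 1 by decide, show m2 20 = -1 by decide,
      show m1 21 = -1 by decide, show m2 21 = 0 by decide,
      show m1 16 = 0 by decide, show m2 16 = 0 by decide]
  · rw [e 23, e 21, e 16, e 22]
    simp [show s16 23 = 0 by decide, show s17 23 = 0 by decide,
      show s16 21 = 0 by decide, show s17 21 = 0 by decide,
      show s16 16 = 1 by decide, show s17 16 = 0 by decide,
      show s16 22 = 0 by decide, show s17 22 = 0 by decide,
      show m1 23 = 0 by decide, show m2 23 = -1 by decide,
      show m1 21 = -1 by decide, show m2 21 = 0 by decide,
      show m1 16 = 0 by decide, show m2 16 = 0 by decide,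
      show m1 22 = 0 by decide, show m2 22 = -1 by decide]
  · rw [e i]
    rcases sA i hi with ⟨a1, a2, a3, a4⟩
    rw [a1, a2, a3, a4]; ring

lemma S0_comb (n : ℤ) (x : Fin 24 → ℤ) (hx : x ∈ S0 n) :
    x = x 22 • l1 + x 20 • l2 + x 16 • vb0 n := by
  obtain ⟨h1, h2, h3, h4⟩ := hx
  funext i
  simp only [Pi.add_apply, Pi.smul_apply, smul_eq_mul, l1, l2, vb0, s16, s17, Pi.sub_apply]
  by_cases c16 : i = 16
  · subst c16; simp [Pi.single_apply]
  · by_cases c17 : i = 17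
    · subst c17; simp [Pi.single_apply]; linarith
    · by_cases c20 : i = 20
      · subst c20; simp [Pi.single_apply]
      · by_cases c21 : i = 21
        · subst c21; simp [Pi.single_apply]; linarith
        · by_cases c22 : i = 22
          · subst c22; simp [Pi.single_apply]
          · by_cases c23 : i = 23
            · subst c23; simp [Pi.single_apply]; linarith
            · have hz : x i = 0 := by
                apply h4
                have := i.isLt
                have e16 : i.val ≠ 16 := fun h => c16 (Fin.ext h)
                have e17 : i.val ≠ 17 := fun h => c17 (Fin.ext h)
                have e20 : i.val ≠ 20 := fun h => c20 (Fin.ext h)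
                have e21 : i.val ≠ 21 := fun h => c21 (Fin.ext h)
                have e22 : i.val ≠ 22 := fun h => c22 (Fin.ext h)
                have e23 : i.val ≠ 23 := fun h => c23 (Fin.ext h)
                omega
              rw [hz, Pi.single_eq_of_ne c16, Pi.single_eq_of_ne c17,
                Pi.single_eq_of_ne c20, Pi.single_eq_of_ne c21,
                Pi.single_eq_of_ne c22, Pi.single_eq_of_ne c23]
              ring

lemma S2_comb (m : ℤ) (x : Fin 24 → ℤ) (hx : x ∈ S2 m) :
    x = x 22 • l1 + x 21 • l2 + x 16 • wb m := by
  obtain ⟨h1, h2, h3, h4⟩ := hx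
  funext i
  simp only [Pi.add_apply, Pi.smul_apply, smul_eq_mul, l1, l2, wb, s16, s17, s20, s23,
    Pi.sub_apply]
  by_cases c16 : i = 16
  · subst c16; simp [Pi.single_apply]
  · by_cases c17 : i = 17
    · subst c17; simp [Pi.single_apply]; linarith
    · by_cases c20 : i = 20
      · subst c20; simp [Pi.single_apply]; linarith
      · by_cases c21 : i = 21
        · subst c21; simp [Pi.single_apply]
        · by_cases c22 : i = 22
          · subst c22; simp [Pi.single_apply]
          · by_cases c23 : i = 23
            · subst c23; simp [Pi.single_apply]; linarith
            · have hz : x i = 0 := by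
                apply h4
                have := i.isLt
                have e16 : i.val ≠ 16 := fun h => c16 (Fin.ext h)
                have e17 : i.val ≠ 17 := fun h => c17 (Fin.ext h)
                have e20 : i.val ≠ 20 := fun h => c20 (Fin.ext h)
                have e21 : i.val ≠ 21 := fun h => c21 (Fin.ext h)
                have e22 : i.val ≠ 22 := fun h => c22 (Fin.ext h)
                have e23 : i.val ≠ 23 := fun h => c23 (Fin.ext h)
                omega
              rw [hz, Pi.single_eq_of_ne c16, Pi.single_eq_of_ne c17,
                Pi.single_eq_of_ne c20, Pi.single_eq_of_ne c21,
                Pi.single_eq_of_ne c22, Pi.single_eq_of_ne c23]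
              ring

lemma wb3 (m p q r : ℤ) : (3:ℤ) • (p • l1 + q • l2 + r • wb m)
    = (3*p - r) • l1 + (3*q + r) • l2 + r • wv m := by
  funext i
  simp only [Pi.add_apply, Pi.smul_apply, smul_eq_mul, Pi.sub_apply, l1, l2, wb, wv,
    s16, s17, s20, s23, m1, m2, Pi.neg_apply]
  ring

lemma span_le_S0 (n : ℤ) (hv : vdM (6*n) = vb0 n) :
    Submodule.span ℤ ({l1, l2, vdM (6*n)} : Set (Fin 24 → ℤ)) ≤ S0 n := by
  rw [Submodule.span_le]
  rintro y hy
  simp only [Set.mem_insert_iff, Set.mem_singleton_iff] at hy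
  rcases hy with rfl | rfl | rfl
  · exact l1_mem_S0 _
  · exact l2_mem_S0 _
  · rw [hv]; exact vb0_mem_S0 _

lemma LdSub0_char (d : ℤ) (h6 : d % 6 = 0) (x : Fin 24 → ℤ) :
    x ∈ LdSub d ↔ ∃ p q r : ℤ, x = p • l1 + q • l2 + r • vb0 (d/6) := by
  have hv : vdM d = vb0 (d/6) := by rw [vdM, if_pos h6]; rfl
  constructor
  · rintro ⟨c, hc, hcx⟩
    have hspan : Submodule.span ℤ ({l1, l2, vdM d} : Set (Fin 24 → ℤ)) ≤ S0 (d/6) := by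
      rw [Submodule.span_le]
      rintro y hy
      simp only [Set.mem_insert_iff, Set.mem_singleton_iff] at hy
      rcases hy with rfl | rfl | rfl
      · exact l1_mem_S0 _
      · exact l2_mem_S0 _
      · rw [hv]; exact vb0_mem_S0 _
    obtain ⟨H1, H2, H3, H4⟩ := hspan hcx
    simp only [Pi.smul_apply, smul_eq_mul] at H1 H2 H3 H4
    have h1 : x 17 = -(d/6 * x 16) := by
      apply mul_left_cancel₀ hc; rw [H1]; ring
    have h2 : x 21 = x 20 := by
      apply mul_left_cancel₀ hc; rw [H2]
    have h3 : x 23 = x 20 - x 22 := by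
      apply mul_left_cancel₀ hc; rw [H3]; ring
    have h4 : ∀ i : Fin 24, (i.val < 16 ∨ i.val = 18 ∨ i.val = 19) → x i = 0 := by
      intro i hi
      rcases mul_eq_zero.1 (H4 i hi) with h | h
      · exact absurd h hc
      · exact h
    exact ⟨x 22, x 20, x 16, S0_comb _ x ⟨h1, h2, h3, h4⟩⟩
  · rintro ⟨p, q, r, rfl⟩
    refine ⟨1, one_ne_zero, ?_⟩
    rw [one_smul]
    have hl1 : l1 ∈ Submodule.span ℤ ({l1, l2, vdM d} : Set (Fin 24 → ℤ)) :=
      Submodule.subset_span (by simp)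
    have hl2 : l2 ∈ Submodule.span ℤ ({l1, l2, vdM d} : Set (Fin 24 → ℤ)) :=
      Submodule.subset_span (by simp)
    have hvd : vb0 (d/6) ∈ Submodule.span ℤ ({l1, l2, vdM d} : Set (Fin 24 → ℤ)) := by
      rw [← hv]; exact Submodule.subset_span (by simp)
    exact Submodule.add_mem _ (Submodule.add_mem _ (Submodule.smul_mem _ _ hl1)
      (Submodule.smul_mem _ _ hl2)) (Submodule.smul_mem _ _ hvd)

lemma LdSub2_char (d : ℤ) (h6 : d % 6 = 2) (x : Fin 24 → ℤ) :
    x ∈ LdSub d ↔ ∃ p q r : ℤ, x = p • l1 + q • l2 + r • wb ((d-2)/6) := by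
  have hv : vdM d = wv ((d-2)/6) := by
    rw [vdM, if_neg (by omega)]; rfl
  constructor
  · rintro ⟨c, hc, hcx⟩
    have hspan : Submodule.span ℤ ({l1, l2, vdM d} : Set (Fin 24 → ℤ)) ≤ S2 ((d-2)/6) := by
      rw [Submodule.span_le]
      rintro y hy
      simp only [Set.mem_insert_iff, Set.mem_singleton_iff] at hy
      rcases hy with rfl | rfl | rfl
      · exact l1_mem_S2 _
      · exact l2_mem_S2 _
      · rw [hv]; exact wv_mem_S2 _
    obtain ⟨H1, H2, H3, H4⟩ := hspan hcx
    simp only [Pi.smul_apply, smul_eq_mul] at H1 H2 H3 H4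
    have h1 : x 17 = -((d-2)/6 * x 16) := by
      apply mul_left_cancel₀ hc; rw [H1]; ring
    have h2 : x 20 = x 21 + x 16 := by
      apply mul_left_cancel₀ hc; rw [H2]; ring
    have h3 : x 23 = x 21 + x 16 - x 22 := by
      apply mul_left_cancel₀ hc; rw [H3]; ring
    have h4 : ∀ i : Fin 24, (i.val < 16 ∨ i.val = 18 ∨ i.val = 19) → x i = 0 := by
      intro i hi
      rcases mul_eq_zero.1 (H4 i hi) with h | h
      · exact absurd h hc
      · exact h
    exact ⟨x 22, x 21, x 16, S2_comb _ x ⟨h1, h2, h3, h4⟩⟩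
  · rintro ⟨p, q, r, rfl⟩
    refine ⟨3, by norm_num, ?_⟩
    rw [wb3]
    have hl1 : l1 ∈ Submodule.span ℤ ({l1, l2, vdM d} : Set (Fin 24 → ℤ)) :=
      Submodule.subset_span (by simp)
    have hl2 : l2 ∈ Submodule.span ℤ ({l1, l2, vdM d} : Set (Fin 24 → ℤ)) :=
      Submodule.subset_span (by simp)
    have hvd : wv ((d-2)/6) ∈ Submodule.span ℤ ({l1, l2, vdM d} : Set (Fin 24 → ℤ)) := by
      rw [← hv]; exact Submodule.subset_span (by simp)
    exact Submodule.add_mem _ (Submodule.add_mem _ (Submodule.smul_mem _ _ hl1)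
      (Submodule.smul_mem _ _ hl2)) (Submodule.smul_mem _ _ hvd)

private lemma phi_pos_of_ne {a b : ℤ} (h : ¬(a = 0 ∧ b = 0)) : 0 < a^2 - a*b + b^2 := by
  rcases lt_or_ge 0 (a^2 - a*b + b^2) with h' | h'
  · exact h'
  · exfalso
    have hb : b = 0 := by nlinarith [sq_nonneg (2*a - b), sq_nonneg b]
    have ha : a = 0 := by nlinarith [sq_nonneg a]
    exact h ⟨ha, hb⟩

/-- Division of a primitively represented number by a represented prime. -/
lemma dlp (p e f a b : ℤ) (hp : Prime p) (hef : e^2 - e*f + f^2 = p)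
    (hab : IsCoprime a b) (hdvd : p ∣ a^2 - a*b + b^2) :
    ∃ a' b' : ℤ, IsCoprime a' b' ∧ p * (a'^2 - a'*b' + b'^2) = a^2 - a*b + b^2 := by
  obtain ⟨w, hw⟩ := hdvd
  have hXY : (b*e - a*f) * (a*f + b*e - b*f) = b^2 * p - f^2 * (a^2 - a*b + b^2) := by
    linear_combination b^2 * hef
  have hdXY : p ∣ (b*e - a*f) * (a*f + b*e - b*f) := by
    refine ⟨b^2 - f^2 * w, ?_⟩
    rw [hXY, hw]; ring
  rcases hp.dvd_mul.1 hdXY with hX | hY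
  · -- p ∣ be - af ; use α π̄
    have hI1 : (a*e - a*f + b*f)^2 - (a*e - a*f + b*f)*(b*e - a*f) + (b*e - a*f)^2
        = (a^2 - a*b + b^2) * p := by linear_combination (a^2 - a*b + b^2) * hef
    have hpA : p ∣ (a*e - a*f + b*f) := by
      have h2 : p ∣ (a*e - a*f + b*f)^2 := by
        obtain ⟨x, hx⟩ := hX
        refine ⟨(a^2 - a*b + b^2) + (a*e - a*f + b*f)*x - (b*e - a*f)*x, ?_⟩
        linear_combination hI1 + ((a*e - a*f + b*f) - (b*e - a*f))*hx
      exact hp.dvd_of_dvd_pow h2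
    obtain ⟨a', ha'⟩ := hpA
    obtain ⟨b', hb'⟩ := hX
    have hpne : p ≠ 0 := hp.ne_zero
    refine ⟨a', b', ?_, ?_⟩
    · have hae : e*a' - f*b' = a := by
        apply mul_left_cancel₀ hpne
        linear_combination -(e*ha') + f*hb' + a*hef
      have hbe : f*a' + e*b' - f*b' = b := by
        apply mul_left_cancel₀ hpne
        linear_combination -(f*ha') - (e - f)*hb' + b*hef
      obtain ⟨u, v, huv⟩ := hab
      exact ⟨u*e + v*f, v*e - u*f - v*f, by linear_combination u*hae + v*hbe + huv⟩
    · apply mul_left_cancel₀ hpne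
      linear_combination hI1 - ((a*e - a*f + b*f) + p*a' - p*b')*ha'
        - ((b*e - a*f) + p*b' - (a*e - a*f + b*f))*hb'
  · -- p ∣ af + be - bf ; use α π
    have hI2 : (a*e - b*f)^2 - (a*e - b*f)*(a*f + b*e - b*f) + (a*f + b*e - b*f)^2
        = (a^2 - a*b + b^2) * p := by linear_combination (a^2 - a*b + b^2) * hef
    have hpA : p ∣ (a*e - b*f) := by
      have h2 : p ∣ (a*e - b*f)^2 := by
        obtain ⟨x, hx⟩ := hY
        refine ⟨(a^2 - a*b + b^2) + (a*e - b*f)*x - (a*f + b*e - b*f)*x, ?_⟩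
        linear_combination hI2 + ((a*e - b*f) - (a*f + b*e - b*f))*hx
      exact hp.dvd_of_dvd_pow h2
    obtain ⟨a', ha'⟩ := hpA
    obtain ⟨b', hb'⟩ := hY
    have hpne : p ≠ 0 := hp.ne_zero
    refine ⟨a', b', ?_, ?_⟩
    · have hae : (e - f)*a' + f*b' = a := by
        apply mul_left_cancel₀ hpne
        linear_combination -((e - f)*ha') - f*hb' + a*hef
      have hbe : e*b' - f*a' = b := by
        apply mul_left_cancel₀ hpne
        linear_combination f*ha' - e*hb' + b*hef
      obtain ⟨u, v, huv⟩ := hab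
      exact ⟨u*e - u*f - v*f, u*f + v*e, by linear_combination u*hae + v*hbe + huv⟩
    · apply mul_left_cancel₀ hpne
      linear_combination hI2 - ((a*e - b*f) + p*a' - p*b')*ha'
        - ((a*f + b*e - b*f) + p*b' - (a*e - b*f))*hb'

set_option maxHeartbeats 2000000 in
/-- Every prime dividing a primitively represented number is itself represented. -/
lemma lemP : ∀ p : ℕ, Nat.Prime p → ∀ a b : ℤ, IsCoprime a b →
    (p:ℤ) ∣ a^2 - a*b + b^2 → ∃ e f : ℤ, IsCoprime e f ∧ e^2 - e*f + f^2 = p := by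
  intro p
  induction p using Nat.strong_induction_on with
  | _ p IH =>
    intro hp a b hab hdvd
    have hpp : Prime (p:ℤ) := Nat.prime_iff_prime_int.mp hp
    have inner : ∀ l : ℕ, ∀ a b : ℤ, IsCoprime a b →
        a^2 - a*b + b^2 = (p:ℤ) * l → 0 < l → l < p →
        ∃ e f : ℤ, IsCoprime e f ∧ e^2 - e*f + f^2 = p := by
      intro l
      induction l using Nat.strong_induction_on with
      | _ l IHl =>
        intro a b hab hval hl0 hlp
        by_cases hl1 : l = 1
        · subst hl1
          exact ⟨a, b, hab, by rw [hval]; norm_num⟩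
        · have hq : l.minFac.Prime := Nat.minFac_prime hl1
          have hql : l.minFac ∣ l := Nat.minFac_dvd l
          have hqp : l.minFac < p := lt_of_le_of_lt (Nat.le_of_dvd hl0 hql) hlp
          have hqdvd : ((l.minFac : ℕ):ℤ) ∣ a^2 - a*b + b^2 := by
            rw [hval]
            exact Dvd.dvd.mul_left (Int.natCast_dvd_natCast.2 hql) _
          obtain ⟨e, f, hef, hefq⟩ := IH l.minFac hqp hq a b hab hqdvd
          obtain ⟨a', b', hab', heq'⟩ := dlp ((l.minFac : ℕ):ℤ) e f a b
            (Nat.prime_iff_prime_int.mp hq) hefq hab hqdvd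
          have hqz : ((l.minFac : ℕ):ℤ) ≠ 0 := by
            exact_mod_cast hq.ne_zero
          have hlq : (l:ℤ) = ((l.minFac : ℕ):ℤ) * ((l/l.minFac : ℕ):ℤ) := by
            exact_mod_cast (Nat.mul_div_cancel' hql).symm
          have hl' : a'^2 - a'*b' + b'^2 = (p:ℤ) * ((l/l.minFac : ℕ):ℤ) := by
            apply mul_left_cancel₀ hqz
            rw [heq', hval, hlq]; ring
          exact IHl (l / l.minFac) (Nat.div_lt_self hl0 hq.two_le) a' b' hab' hl'
            (Nat.div_pos (Nat.minFac_le hl0) (Nat.minFac_pos l))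
            (lt_of_le_of_lt (Nat.div_le_self _ _) hlp)
    by_cases hp3 : p = 3
    · subst hp3
      exact ⟨2, 1, ⟨1, -1, by ring⟩, by norm_num⟩
    by_cases hp2 : p = 2
    · exfalso
      subst hp2
      obtain ⟨w, hw⟩ := hdvd
      rcases Int.even_or_odd a with ⟨j, hj⟩ | ⟨j, hj⟩ <;>
        rcases Int.even_or_odd b with ⟨k, hk⟩ | ⟨k, hk⟩ <;> subst hj <;> subst hk
      · obtain ⟨u, v, huv⟩ := hab
        have : (2:ℤ) ∣ 1 := ⟨u*j + v*k, by linear_combination -huv⟩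
        norm_num at this
      · have : (2:ℤ) ∣ 1 :=
          ⟨w - (2*j^2 - 2*j*k - j + 2*k^2 + 2*k), by push_cast at hw ⊢; linear_combination hw⟩
        norm_num at this
      · have : (2:ℤ) ∣ 1 :=
          ⟨w - (2*j^2 + 2*j - 2*j*k - k + 2*k^2), by push_cast at hw ⊢; linear_combination hw⟩
        norm_num at this
      · have : (2:ℤ) ∣ 1 :=
          ⟨w - (2*j^2 + j - 2*j*k + 2*k^2 + k), by push_cast at hw ⊢; linear_combination hw⟩
        norm_num at this
    have hp5 : 5 ≤ p := by
      have h4 : p ≠ 4 := by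
        intro h; rw [h] at hp; norm_num at hp
      have := hp.two_le
      omega
    have hppos : (0:ℤ) < (p:ℤ) := by exact_mod_cast hp.pos
    set a₀ := Int.bmod a p with ha₀
    set b₀ := Int.bmod b p with hb₀
    obtain ⟨u, hu⟩ : (p:ℤ) ∣ a₀ - a := Int.dvd_bmod_sub_self
    obtain ⟨v, hv⟩ : (p:ℤ) ∣ b₀ - b := Int.dvd_bmod_sub_self
    have ha' : a₀ = a + (p:ℤ)*u := by linarith
    have hb' : b₀ = b + (p:ℤ)*v := by linarith
    obtain ⟨w, hw⟩ := hdvd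
    have hdvd0 : (p:ℤ) ∣ a₀^2 - a₀*b₀ + b₀^2 := by
      refine ⟨w + (2*a*u - a*v - b*u + 2*b*v + (p:ℤ)*(u^2 - u*v + v^2)), ?_⟩
      rw [ha', hb']; linear_combination hw
    have hnz : ¬(a₀ = 0 ∧ b₀ = 0) := by
      rintro ⟨h0, h0'⟩
      rw [h0] at ha'; rw [h0'] at hb'
      obtain ⟨s, t, hst⟩ := hab
      have : (p:ℤ) ∣ 1 := ⟨-(s*u) - t*v, by linear_combination -s*ha' - t*hb' - hst⟩
      have h1 := Int.le_of_dvd one_pos this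
      omega
    have hpos := phi_pos_of_ne hnz
    have hb2a : -(p:ℤ) ≤ 2*a₀ ∧ 2*a₀ ≤ (p:ℤ) := by
      have h1 := Int.le_bmod (x := a) hp.pos
      have h2 := Int.bmod_le (x := a) hp.pos
      have h3 : 2*((p/2 : ℕ):ℤ) ≤ (p:ℤ) := by omega
      have h4 : 2*(((p-1)/2 : ℕ):ℤ) + 1 ≤ (p:ℤ) := by omega
      rw [← ha₀] at h1 h2
      omega
    have hb2b : -(p:ℤ) ≤ 2*b₀ ∧ 2*b₀ ≤ (p:ℤ) := by
      have h1 := Int.le_bmod (x := b) hp.pos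
      have h2 := Int.bmod_le (x := b) hp.pos
      have h3 : 2*((p/2 : ℕ):ℤ) ≤ (p:ℤ) := by omega
      have h4 : 2*(((p-1)/2 : ℕ):ℤ) + 1 ≤ (p:ℤ) := by omega
      rw [← hb₀] at h1 h2
      omega
    have hbound : 4*(a₀^2 - a₀*b₀ + b₀^2) ≤ 3*(p:ℤ)^2 := by
      nlinarith [hb2a.1, hb2a.2, hb2b.1, hb2b.2, sq_nonneg (a₀ + b₀), sq_nonneg (a₀ - b₀)]
    set g : ℕ := Int.gcd a₀ b₀ with hgdef
    have hg0 : 0 < g := by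
      rcases Nat.eq_zero_or_pos g with h | h
      · rw [hgdef] at h
        exact absurd (Int.gcd_eq_zero_iff.mp h) hnz
      · exact h
    obtain ⟨a₁, ha₁⟩ : ((g:ℤ)) ∣ a₀ := Int.gcd_dvd_left _ _
    obtain ⟨b₁, hb₁⟩ : ((g:ℤ)) ∣ b₀ := Int.gcd_dvd_right _ _
    have hgz : (g:ℤ) ≠ 0 := by exact_mod_cast hg0.ne'
    have hg1 : (1:ℤ) ≤ (g:ℤ) := by exact_mod_cast hg0
    have hab₁ : IsCoprime a₁ b₁ := by
      rw [Int.isCoprime_iff_gcd_eq_one]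
      have hgg := Int.gcd_div_gcd_div_gcd (i := a₀) (j := b₀) (by rw [← hgdef]; exact hg0)
      have e1 : a₀ / (g:ℤ) = a₁ := by rw [ha₁]; exact Int.mul_ediv_cancel_left _ hgz
      have e2 : b₀ / (g:ℤ) = b₁ := by rw [hb₁]; exact Int.mul_ediv_cancel_left _ hgz
      rw [← hgdef] at hgg
      rwa [e1, e2] at hgg
    have hsplit : a₀^2 - a₀*b₀ + b₀^2 = (g:ℤ)^2 * (a₁^2 - a₁*b₁ + b₁^2) := by
      rw [ha₁, hb₁]; ring
    have hphi1pos : 0 < a₁^2 - a₁*b₁ + b₁^2 := by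
      rcases lt_or_ge 0 (a₁^2 - a₁*b₁ + b₁^2) with h | h
      · exact h
      · exfalso; nlinarith [sq_nonneg (g:ℤ)]
    have hpg : ¬ (p:ℤ) ∣ (g:ℤ) := by
      intro hdg
      have hgle := Int.le_of_dvd (by exact_mod_cast hg0) hdg
      have hg2 : (p:ℤ)^2 ≤ (g:ℤ)^2 := by nlinarith
      nlinarith [hsplit, hphi1pos, hbound, hg2, sq_nonneg (g:ℤ)]
    have hpphi1 : (p:ℤ) ∣ a₁^2 - a₁*b₁ + b₁^2 := by
      rw [hsplit] at hdvd0
      rcases hpp.dvd_mul.1 hdvd0 with h | h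
      · exact absurd (hpp.dvd_of_dvd_pow h) hpg
      · exact h
    obtain ⟨l', hl'⟩ := hpphi1
    have hl'pos : 0 < l' := by
      by_contra hneg
      push_neg at hneg
      have hmp : (p:ℤ) * l' ≤ 0 := mul_nonpos_of_nonneg_of_nonpos hppos.le hneg
      rw [hl'] at hphi1pos
      linarith
    have hplpos : 0 < (p:ℤ)*l' := by rw [← hl']; exact hphi1pos
    have hg2 : (1:ℤ) ≤ (g:ℤ)^2 := by nlinarith [hg1]
    have hineq : (p:ℤ) * l' ≤ a₀^2 - a₀*b₀ + b₀^2 := by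
      rw [hsplit, hl']
      exact le_mul_of_one_le_left hplpos.le hg2
    have hl'lt : l' < (p:ℤ) := by
      by_contra hge
      push_neg at hge
      have h1 : (p:ℤ)*(p:ℤ) ≤ (p:ℤ)*l' := mul_le_mul_of_nonneg_left hge hppos.le
      nlinarith [hineq, hbound]
    lift l' to ℕ using hl'pos.le with l''
    exact inner l'' a₁ b₁ hab₁ hl' (by exact_mod_cast hl'pos) (by exact_mod_cast hl'lt)

/-- Any positive divisor of a primitively represented number is primitively represented. -/
lemma lemM : ∀ l : ℕ, ∀ m : ℤ, 0 < m → ∀ a b : ℤ, IsCoprime a b →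
    a^2 - a*b + b^2 = m * l → ∃ a' b' : ℤ, IsCoprime a' b' ∧ a'^2 - a'*b' + b'^2 = m := by
  intro l
  induction l using Nat.strong_induction_on with
  | _ l IHl =>
    intro m hm a b hab hval
    by_cases hl0 : l = 0
    · exfalso
      subst hl0
      have h0 : a^2 - a*b + b^2 = 0 := by rw [hval]; norm_num
      have hb : b = 0 := by nlinarith [sq_nonneg (2*a - b), sq_nonneg b]
      have ha : a = 0 := by nlinarith [sq_nonneg a]
      rw [ha, hb] at hab
      rcases hab with ⟨u, v, huv⟩
      norm_num at huv
    by_cases hl1 : l = 1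
    · subst hl1
      exact ⟨a, b, hab, by rw [hval]; norm_num⟩
    · have hq : l.minFac.Prime := Nat.minFac_prime hl1
      have hql : l.minFac ∣ l := Nat.minFac_dvd l
      have hl0' : 0 < l := Nat.pos_of_ne_zero hl0
      have hqdvd : ((l.minFac : ℕ):ℤ) ∣ a^2 - a*b + b^2 := by
        rw [hval]
        exact Dvd.dvd.mul_left (Int.natCast_dvd_natCast.2 hql) _
      obtain ⟨e, f, hef, hefq⟩ := lemP l.minFac hq a b hab hqdvd
      obtain ⟨a', b', hab', heq'⟩ := dlp ((l.minFac : ℕ):ℤ) e f a b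
        (Nat.prime_iff_prime_int.mp hq) hefq hab hqdvd
      have hqz : ((l.minFac : ℕ):ℤ) ≠ 0 := by exact_mod_cast hq.ne_zero
      have hlq : (l:ℤ) = ((l.minFac : ℕ):ℤ) * ((l/l.minFac : ℕ):ℤ) := by
        exact_mod_cast (Nat.mul_div_cancel' hql).symm
      have hl' : a'^2 - a'*b' + b'^2 = m * ((l/l.minFac : ℕ):ℤ) := by
        apply mul_left_cancel₀ hqz
        rw [heq', hval, hlq]; ring
      exact IHl (l / l.minFac) (Nat.div_lt_self hl0' hq.two_le) m hm a' b' hab' hl'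

/-- If `c² + 3 = 4Mk` with `M > 0` then `M` is primitively represented by `x² - xy + y²`. -/
lemma ntmain (M c k : ℤ) (hM : 0 < M) (h : c^2 + 3 = 4*M*k) :
    ∃ a b : ℤ, IsCoprime a b ∧ a^2 - a*b + b^2 = M := by
  rcases Int.even_or_odd c with ⟨j, hj⟩ | ⟨j, hj⟩
  · exfalso
    subst hj
    have h4 : 4 * (M*k - j^2) = 3 := by linear_combination -h
    omega
  · subst hj
    have hval : (j+1)^2 - (j+1)*1 + 1^2 = M * k := by
      have h4 : 4*((j+1)^2 - (j+1)*1 + 1^2) = 4*(M*k) := by linear_combination h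
      linarith
    have hkpos : 0 < k := by
      by_contra hneg
      push_neg at hneg
      have : M * k ≤ 0 := mul_nonpos_of_nonneg_of_nonpos hM.le hneg
      nlinarith [sq_nonneg (2*j + 1)]
    lift k to ℕ using hkpos.le with k'
    exact lemM k' M hM (j+1) 1 (isCoprime_one_right) (by exact_mod_cast hval)

/-- forward key identity, case `d ≡ 0 (mod 6)` -/
lemma key0 (n p q r s t u : ℤ)
    (h1 : 2*p*p - p*q - q*p + 2*q*q - 2*n*r*r = 0)
    (h2 : 2*s*s - s*t - t*s + 2*t*t - 2*n*u*u = 0)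
    (h3 : 2*p*s - p*t - q*s + 2*q*t - 2*n*r*u = 1) :
    (3*(q*s - p*t))^2 + 3 = 4*(3*n)*(-(r*u)) := by
  have h1' : p^2 - p*q + q^2 = n*r^2 := by linarith [h1]
  have h2' : s^2 - s*t + t^2 = n*u^2 := by linarith [h2]
  linear_combination (12*(s^2 - s*t + t^2))*h1' + (12*n*r^2)*h2'
    - 3*(2*p*s - p*t - q*s + 2*q*t + 1 + 2*n*r*u)*h3

/-- forward key identity, case `d ≡ 2 (mod 6)` -/
lemma key2 (m p q r s t u : ℤ)
    (h1 : 2*p*p - p*q - q*p + 2*q*q - p*r - r*p + q*r + r*q - 2*m*r*r = 0)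
    (h2 : 2*s*s - s*t - t*s + 2*t*t - s*u - u*s + t*u + u*t - 2*m*u*u = 0)
    (h3 : 2*p*s - p*t - q*s + 2*q*t - p*u - r*s + q*u + r*t - 2*m*r*u = 1) :
    ((2*p - q - r)*(s - 2*t - u) - (p - 2*q - r)*(2*s - t - u))^2 + 3
      = 4*(3*m+1)*(-(r*u)) := by
  have h1' : p^2 - p*q + q^2 - p*r + q*r - m*r^2 = 0 := by linarith [h1]
  have h2' : s^2 - s*t + t^2 - s*u + t*u - m*u^2 = 0 := by linarith [h2]
  have hN1 : (p - 2*q - r)^2 - (p - 2*q - r)*(2*p - q - r) + (2*p - q - r)^2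
      = (3*m+1)*r^2 := by linear_combination 3*h1'
  have hN2 : (s - 2*t - u)^2 - (s - 2*t - u)*(2*s - t - u) + (2*s - t - u)^2
      = (3*m+1)*u^2 := by linear_combination 3*h2'
  have hT : 2*(p - 2*q - r)*(s - 2*t - u) - (p - 2*q - r)*(2*s - t - u)
      - (2*p - q - r)*(s - 2*t - u) + 2*(2*p - q - r)*(2*s - t - u)
      = 3 + 2*(3*m+1)*r*u := by linear_combination 3*h3
  have key3 : 3*(((2*p - q - r)*(s - 2*t - u) - (p - 2*q - r)*(2*s - t - u))^2 + 3
      + 4*(3*m+1)*(r*u)) = 0 := by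
    linear_combination (4*((s - 2*t - u)^2 - (s - 2*t - u)*(2*s - t - u) + (2*s - t - u)^2))*hN1
      + (4*(3*m+1)*r^2)*hN2
      - (2*(p - 2*q - r)*(s - 2*t - u) - (p - 2*q - r)*(2*s - t - u)
        - (2*p - q - r)*(s - 2*t - u) + 2*(2*p - q - r)*(2*s - t - u) + 3 + 2*(3*m+1)*r*u)*hT
  linarith [key3]

/-- backward construction identities, case `d ≡ 0 (mod 6)` -/
lemma quad0 (n p q S T : ℤ) (hn1 : p^2 - p*q + q^2 = n)
    (hst : S*(2*p - q) + T*(2*q - p) = 1) :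
    (2*p*p - p*q - q*p + 2*q*q - 2*n*1*1 = 0) ∧
    (2*(-(S^2 - S*T + T^2)*p + S)*(-(S^2 - S*T + T^2)*p + S)
      - (-(S^2 - S*T + T^2)*p + S)*(-(S^2 - S*T + T^2)*q + T)
      - (-(S^2 - S*T + T^2)*q + T)*(-(S^2 - S*T + T^2)*p + S)
      + 2*(-(S^2 - S*T + T^2)*q + T)*(-(S^2 - S*T + T^2)*q + T)
      - 2*n*(-(S^2 - S*T + T^2))*(-(S^2 - S*T + T^2)) = 0) ∧
    (2*p*(-(S^2 - S*T + T^2)*p + S) - p*(-(S^2 - S*T + T^2)*q + T)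
      - q*(-(S^2 - S*T + T^2)*p + S) + 2*q*(-(S^2 - S*T + T^2)*q + T)
      - 2*n*1*(-(S^2 - S*T + T^2)) = 1) := by
  refine ⟨by linear_combination 2*hn1, ?_, ?_⟩
  · linear_combination (2*(S^2 - S*T + T^2)^2)*hn1 + (-2*(S^2 - S*T + T^2))*hst
  · linear_combination (-2*(S^2 - S*T + T^2))*hn1 + hst

/-- backward construction identities, case `d ≡ 2 (mod 6)` -/
lemma quad2 (m z1 z2 s t : ℤ)
    (hm : 3*m = (z1 - 2*z2 - 1)^2 - (z1 - 2*z2 - 1)*(2*z1 - z2 - 1) + (2*z1 - z2 - 1)^2 - 1)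
    (hst : s*(2*z1 - z2 - 1) - t*(z1 - 2*z2 - 1) = 1) :
    (2*z1*z1 - z1*z2 - z2*z1 + 2*z2*z2 - z1*1 - 1*z1 + z2*1 + 1*z2 - 2*m*1*1 = 0) ∧
    (2*(-(s^2 - s*t + t^2)*z1 + s)*(-(s^2 - s*t + t^2)*z1 + s)
      - (-(s^2 - s*t + t^2)*z1 + s)*(-(s^2 - s*t + t^2)*z2 + t)
      - (-(s^2 - s*t + t^2)*z2 + t)*(-(s^2 - s*t + t^2)*z1 + s)
      + 2*(-(s^2 - s*t + t^2)*z2 + t)*(-(s^2 - s*t + t^2)*z2 + t)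
      - (-(s^2 - s*t + t^2)*z1 + s)*(-(s^2 - s*t + t^2))
      - (-(s^2 - s*t + t^2))*(-(s^2 - s*t + t^2)*z1 + s)
      + (-(s^2 - s*t + t^2)*z2 + t)*(-(s^2 - s*t + t^2))
      + (-(s^2 - s*t + t^2))*(-(s^2 - s*t + t^2)*z2 + t)
      - 2*m*(-(s^2 - s*t + t^2))*(-(s^2 - s*t + t^2)) = 0) ∧
    (2*z1*(-(s^2 - s*t + t^2)*z1 + s) - z1*(-(s^2 - s*t + t^2)*z2 + t)
      - z2*(-(s^2 - s*t + t^2)*z1 + s) + 2*z2*(-(s^2 - s*t + t^2)*z2 + t)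
      - z1*(-(s^2 - s*t + t^2)) - 1*(-(s^2 - s*t + t^2)*z1 + s)
      + z2*(-(s^2 - s*t + t^2)) + 1*(-(s^2 - s*t + t^2)*z2 + t)
      - 2*m*1*(-(s^2 - s*t + t^2)) = 1) := by
  refine ⟨?_, ?_, ?_⟩
  · have h3 : 3*(2*z1*z1 - z1*z2 - z2*z1 + 2*z2*z2 - z1*1 - 1*z1 + z2*1 + 1*z2 - 2*m*1*1)
        = 0 := by linear_combination (-2)*hm
    linarith [h3]
  · have h3 : 3*(2*(-(s^2 - s*t + t^2)*z1 + s)*(-(s^2 - s*t + t^2)*z1 + s)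
      - (-(s^2 - s*t + t^2)*z1 + s)*(-(s^2 - s*t + t^2)*z2 + t)
      - (-(s^2 - s*t + t^2)*z2 + t)*(-(s^2 - s*t + t^2)*z1 + s)
      + 2*(-(s^2 - s*t + t^2)*z2 + t)*(-(s^2 - s*t + t^2)*z2 + t)
      - (-(s^2 - s*t + t^2)*z1 + s)*(-(s^2 - s*t + t^2))
      - (-(s^2 - s*t + t^2))*(-(s^2 - s*t + t^2)*z1 + s)
      + (-(s^2 - s*t + t^2)*z2 + t)*(-(s^2 - s*t + t^2))
      + (-(s^2 - s*t + t^2))*(-(s^2 - s*t + t^2)*z2 + t)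
      - 2*m*(-(s^2 - s*t + t^2))*(-(s^2 - s*t + t^2))) = 0 := by
      linear_combination (6*(-(s^2 - s*t + t^2)))*hst - (2*(-(s^2 - s*t + t^2))^2)*hm
    linarith [h3]
  · have h3 : 3*(2*z1*(-(s^2 - s*t + t^2)*z1 + s) - z1*(-(s^2 - s*t + t^2)*z2 + t)
      - z2*(-(s^2 - s*t + t^2)*z1 + s) + 2*z2*(-(s^2 - s*t + t^2)*z2 + t)
      - z1*(-(s^2 - s*t + t^2)) - 1*(-(s^2 - s*t + t^2)*z1 + s)
      + z2*(-(s^2 - s*t + t^2)) + 1*(-(s^2 - s*t + t^2)*z2 + t)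
      - 2*m*1*(-(s^2 - s*t + t^2))) = 3 := by
      linear_combination 3*hst - (2*(-(s^2 - s*t + t^2)))*hm
    linarith [h3]

/-- For a positive integer `d ≡ 0` or `2 (mod 6)`, the lattice `L_d` contains a
copy of the hyperbolic plane `U` iff `d` is primitively represented by `A₂`, i.e.
`2(a² - ab + b²) = d` for some coprime integers `a, b`. -/
theorem stmt_9 (d : ℤ) (hd : 0 < d) (h6 : d % 6 = 0 ∨ d % 6 = 2) :
    (∃ x y : Fin 24 → ℤ, x ∈ LdSub d ∧ y ∈ LdSub d ∧
      MB x x = 0 ∧ MB y y = 0 ∧ MB x y = 1) ↔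
    (∃ a b : ℤ, IsCoprime a b ∧ 2 * (a ^ 2 - a * b + b ^ 2) = d) := by
  rcases h6 with h0 | h2
  · -- case d ≡ 0 (mod 6)
    have hd6 : d = 6 * (d/6) := by omega
    constructor
    · rintro ⟨x, y, hx, hy, hxx, hyy, hxy⟩
      obtain ⟨p, q, r, rfl⟩ := (LdSub0_char d h0 x).1 hx
      obtain ⟨s, t, u, rfl⟩ := (LdSub0_char d h0 y).1 hy
      rw [MB_c0] at hxx hyy hxy
      obtain ⟨a, b, hab, hphi⟩ := ntmain (3*(d/6)) (3*(q*s - p*t)) (-(r*u))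
        (by omega) (key0 (d/6) p q r s t u hxx hyy hxy)
      exact ⟨a, b, hab, by rw [hphi]; omega⟩
    · rintro ⟨a, b, hab, hphi⟩
      have h3n : a^2 - a*b + b^2 = 3*(d/6) := by linarith
      obtain ⟨Q, hQ⟩ : (3:ℤ) ∣ a + b := by
        have hsq : (3:ℤ) ∣ (a+b)^2 := ⟨(d/6) + a*b, by linear_combination h3n⟩
        exact Int.prime_three.dvd_of_dvd_pow hsq
      obtain ⟨P, hP⟩ : (3:ℤ) ∣ 2*a - b := ⟨a - Q, by linarith⟩
      have ha : a = P + Q := by linarith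
      have hb : b = 2*Q - P := by linarith
      subst ha; subst hb
      have hn1 : P^2 - P*Q + Q^2 = d/6 := by
        have h9 : 3*(P^2 - P*Q + Q^2) = 3*(d/6) := by linear_combination h3n
        linarith
      obtain ⟨u1, v1, hu1⟩ := hab
      have hcop : IsCoprime P Q := ⟨u1 - v1, u1 + 2*v1, by linear_combination hu1⟩
      obtain ⟨u2, v2, hu2⟩ := hcop
      have hnd3 : ¬ (3:ℤ) ∣ (P + Q) := by
        rintro ⟨c3, hc3⟩
        have h31 : (1:ℤ) = 3 * (u1*c3 + v1*(Q - c3)) := by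
          linear_combination -hu1 + (u1 - v1)*hc3
        omega
      have hsq3 : (3:ℤ) ∣ (P + Q)^2 - 1 := by
        have h3c : (P+Q) % 3 = 1 ∨ (P+Q) % 3 = 2 := by
          have h0' : ¬ (P+Q) % 3 = 0 := fun h => hnd3 (Int.dvd_of_emod_eq_zero h)
          omega
        rcases h3c with h | h
        · obtain ⟨k, hk⟩ : ∃ k, P + Q = 3*k + 1 := ⟨(P+Q)/3, by omega⟩
          exact ⟨3*k^2 + 2*k, by rw [hk]; ring⟩
        · obtain ⟨k, hk⟩ : ∃ k, P + Q = 3*k + 2 := ⟨(P+Q)/3, by omega⟩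
          exact ⟨3*k^2 + 4*k + 1, by rw [hk]; ring⟩
      obtain ⟨w0, hw0⟩ := hsq3
      have hst : ((P+Q) - (2*u2 + v2)*w0)*(2*P - Q) + ((P+Q) - (u2 + 2*v2)*w0)*(2*Q - P)
          = 1 := by linear_combination hw0 - 3*w0*hu2
      obtain ⟨e1, e2, e3⟩ := quad0 (d/6) P Q ((P+Q) - (2*u2 + v2)*w0)
        ((P+Q) - (u2 + 2*v2)*w0) hn1 hst
      set S := (P+Q) - (2*u2 + v2)*w0 with hS
      set T := (P+Q) - (u2 + 2*v2)*w0 with hT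
      refine ⟨P • l1 + Q • l2 + (1:ℤ) • vb0 (d/6),
        (-(S^2 - S*T + T^2)*P + S) • l1 + (-(S^2 - S*T + T^2)*Q + T) • l2
          + (-(S^2 - S*T + T^2)) • vb0 (d/6), ?_, ?_, ?_, ?_, ?_⟩
      · exact (LdSub0_char d h0 _).2 ⟨P, Q, 1, rfl⟩
      · exact (LdSub0_char d h0 _).2 ⟨_, _, _, rfl⟩
      · rw [MB_c0]; exact e1
      · rw [MB_c0]; exact e2
      · rw [MB_c0]; exact e3
  · -- case d ≡ 2 (mod 6)
    have hd2 : d = 6 * ((d-2)/6) + 2 := by omega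
    constructor
    · rintro ⟨x, y, hx, hy, hxx, hyy, hxy⟩
      obtain ⟨p, q, r, rfl⟩ := (LdSub2_char d h2 x).1 hx
      obtain ⟨s, t, u, rfl⟩ := (LdSub2_char d h2 y).1 hy
      rw [MB_c2] at hxx hyy hxy
      obtain ⟨a, b, hab, hphi⟩ := ntmain (3*((d-2)/6)+1) _ (-(r*u))
        (by omega) (key2 ((d-2)/6) p q r s t u hxx hyy hxy)
      exact ⟨a, b, hab, by rw [hphi]; omega⟩
    · rintro ⟨a, b, hab, hphi⟩
      have hM : a^2 - a*b + b^2 = 3*((d-2)/6)+1 := by linarith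
      have main : ∀ A B : ℤ, IsCoprime A B → A^2 - A*B + B^2 = 3*((d-2)/6)+1 →
          (3:ℤ) ∣ A + B - 1 →
          (∃ x y : Fin 24 → ℤ, x ∈ LdSub d ∧ y ∈ LdSub d ∧
            MB x x = 0 ∧ MB y y = 0 ∧ MB x y = 1) := by
        intro A B hAB hMA ⟨c, hc⟩
        obtain ⟨z1, hz1⟩ : (3:ℤ) ∣ 2*B - A + 1 := ⟨B - c, by linarith⟩
        obtain ⟨z2, hz2⟩ : (3:ℤ) ∣ B - 2*A - 1 := ⟨c - A, by linarith⟩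
        have hA : A = z1 - 2*z2 - 1 := by linarith
        have hB : B = 2*z1 - z2 - 1 := by linarith
        subst hA; subst hB
        have hm' : 3*((d-2)/6) = (z1 - 2*z2 - 1)^2 - (z1 - 2*z2 - 1)*(2*z1 - z2 - 1)
            + (2*z1 - z2 - 1)^2 - 1 := by linarith
        obtain ⟨u0, v0, huv⟩ := hAB
        have hst : v0*(2*z1 - z2 - 1) - (-u0)*(z1 - 2*z2 - 1) = 1 := by
          linear_combination huv
        obtain ⟨e1, e2, e3⟩ := quad2 ((d-2)/6) z1 z2 v0 (-u0) hm' hst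
        refine ⟨z1 • l1 + z2 • l2 + (1:ℤ) • wb ((d-2)/6),
          (-(v0^2 - v0*(-u0) + (-u0)^2)*z1 + v0) • l1
            + (-(v0^2 - v0*(-u0) + (-u0)^2)*z2 + (-u0)) • l2
            + (-(v0^2 - v0*(-u0) + (-u0)^2)) • wb ((d-2)/6), ?_, ?_, ?_, ?_, ?_⟩
        · exact (LdSub2_char d h2 _).2 ⟨_, _, _, rfl⟩
        · exact (LdSub2_char d h2 _).2 ⟨_, _, _, rfl⟩
        · rw [MB_c2]; exact e1
        · rw [MB_c2]; exact e2
        · rw [MB_c2]; exact e3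
      have h9 : (3:ℤ) ∣ (a+b-1)*(a+b+1) := ⟨(d-2)/6 + a*b, by linear_combination hM⟩
      rcases Int.prime_three.dvd_mul.1 h9 with hc | hc
      · exact main a b hab hM hc
      · refine main (-a) (-b) ((hab.neg_left).neg_right) (by linear_combination hM) ?_
        obtain ⟨c, hc'⟩ := hc
        exact ⟨-c, by linarith⟩
end

section
/- Let d be a positive even integer and let δ ∈ Λ_d satisfy (δ.δ) = −2 and (δ.w) ∈ 2ℤ for every w ∈ Λ_d. Then d ≡ 2 (mod 8), i.e. d/2 ≡ 1 (mod 4). -/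
open scoped BigOperators

noncomputable section

/-- The Gram matrix of the K3 lattice `Λ = E₈(-1)² ⊕ U₁ ⊕ U₂ ⊕ U₃` on `ℤ²²`. -/
def gramK : Fin 22 → Fin 22 → ℤ := fun i j =>
  if i.val < 8 ∧ j.val < 8 then
    E8M ⟨i.val % 8, Nat.mod_lt _ (by norm_num)⟩ ⟨j.val % 8, Nat.mod_lt _ (by norm_num)⟩
  else if 8 ≤ i.val ∧ i.val < 16 ∧ 8 ≤ j.val ∧ j.val < 16 then
    E8M ⟨(i.val - 8) % 8, Nat.mod_lt _ (by norm_num)⟩ ⟨(j.val - 8) % 8, Nat.mod_lt _ (by norm_num)⟩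
  else if (i.val = 16 ∧ j.val = 17) ∨ (i.val = 17 ∧ j.val = 16) ∨
      (i.val = 18 ∧ j.val = 19) ∨ (i.val = 19 ∧ j.val = 18) ∨
      (i.val = 20 ∧ j.val = 21) ∨ (i.val = 21 ∧ j.val = 20) then 1
  else 0

/-- The bilinear form of the K3 lattice `Λ`. -/
def KB (x y : Fin 22 → ℤ) : ℤ := ∑ i, ∑ j, gramK i j * x i * y j

/-- The class `ℓ = e₂ + (d/2) f₂ ∈ Λ`; its orthogonal complement is `Λ_d`. -/
def ell (d : ℤ) : Fin 22 → ℤ := Pi.single 18 1 + (d / 2) • Pi.single 19 1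

/-- Isometries of the K3 lattice `Λ`. -/
def IsIsomK (g : (Fin 22 → ℤ) ≃ₗ[ℤ] (Fin 22 → ℤ)) : Prop := ∀ x y, KB (g x) (g y) = KB x y

end
private lemma c1 : ((0:Fin 21).succ) = (1:Fin 22) := by decide
private lemma c2 : ((0:Fin 20).succ.succ) = (2:Fin 22) := by decide
private lemma c3 : ((0:Fin 19).succ.succ.succ) = (3:Fin 22) := by decide
private lemma c4 : ((0:Fin 18).succ.succ.succ.succ) = (4:Fin 22) := by decide
private lemma c5 : ((0:Fin 17).succ.succ.succ.succ.succ) = (5:Fin 22) := by decide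
private lemma c6 : ((0:Fin 16).succ.succ.succ.succ.succ.succ) = (6:Fin 22) := by decide
private lemma c7 : ((0:Fin 15).succ.succ.succ.succ.succ.succ.succ) = (7:Fin 22) := by decide
private lemma c8 : ((0:Fin 14).succ.succ.succ.succ.succ.succ.succ.succ) = (8:Fin 22) := by decide
private lemma c9 : ((0:Fin 13).succ.succ.succ.succ.succ.succ.succ.succ.succ) = (9:Fin 22) := by decide
private lemma c10 : ((0:Fin 12).succ.succ.succ.succ.succ.succ.succ.succ.succ.succ) = (10:Fin 22) := by decide
private lemma c11 : ((0:Fin 11).succ.succ.succ.succ.succ.succ.succ.succ.succ.succ.succ) = (11:Fin 22) := by decide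
private lemma c12 : ((0:Fin 10).succ.succ.succ.succ.succ.succ.succ.succ.succ.succ.succ.succ) = (12:Fin 22) := by decide
private lemma c13 : ((0:Fin 9).succ.succ.succ.succ.succ.succ.succ.succ.succ.succ.succ.succ.succ) = (13:Fin 22) := by decide
private lemma c14 : ((0:Fin 8).succ.succ.succ.succ.succ.succ.succ.succ.succ.succ.succ.succ.succ.succ) = (14:Fin 22) := by decide
private lemma c15 : ((0:Fin 7).succ.succ.succ.succ.succ.succ.succ.succ.succ.succ.succ.succ.succ.succ.succ) = (15:Fin 22) := by decide
private lemma c16 : ((0:Fin 6).succ.succ.succ.succ.succ.succ.succ.succ.succ.succ.succ.succ.succ.succ.succ.succ) = (16:Fin 22) := by decide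
private lemma c17 : ((0:Fin 5).succ.succ.succ.succ.succ.succ.succ.succ.succ.succ.succ.succ.succ.succ.succ.succ.succ) = (17:Fin 22) := by decide
private lemma c18 : ((0:Fin 4).succ.succ.succ.succ.succ.succ.succ.succ.succ.succ.succ.succ.succ.succ.succ.succ.succ.succ) = (18:Fin 22) := by decide
private lemma c19 : ((0:Fin 3).succ.succ.succ.succ.succ.succ.succ.succ.succ.succ.succ.succ.succ.succ.succ.succ.succ.succ.succ) = (19:Fin 22) := by decide
private lemma c20 : ((0:Fin 2).succ.succ.succ.succ.succ.succ.succ.succ.succ.succ.succ.succ.succ.succ.succ.succ.succ.succ.succ.succ) = (20:Fin 22) := by decide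
private lemma c21 : ((0:Fin 1).succ.succ.succ.succ.succ.succ.succ.succ.succ.succ.succ.succ.succ.succ.succ.succ.succ.succ.succ.succ.succ) = (21:Fin 22) := by decide
private lemma g_0_0 : gramK 0 0 = (-2) := by decide
private lemma g_0_1 : gramK 0 1 = 0 := by decide
private lemma g_0_2 : gramK 0 2 = 1 := by decide
private lemma g_0_3 : gramK 0 3 = 0 := by decide
private lemma g_0_4 : gramK 0 4 = 0 := by decide
private lemma g_0_5 : gramK 0 5 = 0 := by decide
private lemma g_0_6 : gramK 0 6 = 0 := by decide
private lemma g_0_7 : gramK 0 7 = 0 := by decide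
private lemma g_0_8 : gramK 0 8 = 0 := by decide
private lemma g_0_9 : gramK 0 9 = 0 := by decide
private lemma g_0_10 : gramK 0 10 = 0 := by decide
private lemma g_0_11 : gramK 0 11 = 0 := by decide
private lemma g_0_12 : gramK 0 12 = 0 := by decide
private lemma g_0_13 : gramK 0 13 = 0 := by decide
private lemma g_0_14 : gramK 0 14 = 0 := by decide
private lemma g_0_15 : gramK 0 15 = 0 := by decide
private lemma g_0_16 : gramK 0 16 = 0 := by decide
private lemma g_0_17 : gramK 0 17 = 0 := by decide
private lemma g_0_18 : gramK 0 18 = 0 := by decide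
private lemma g_0_19 : gramK 0 19 = 0 := by decide
private lemma g_0_20 : gramK 0 20 = 0 := by decide
private lemma g_0_21 : gramK 0 21 = 0 := by decide
private lemma g_1_0 : gramK 1 0 = 0 := by decide
private lemma g_1_1 : gramK 1 1 = (-2) := by decide
private lemma g_1_2 : gramK 1 2 = 0 := by decide
private lemma g_1_3 : gramK 1 3 = 1 := by decide
private lemma g_1_4 : gramK 1 4 = 0 := by decide
private lemma g_1_5 : gramK 1 5 = 0 := by decide
private lemma g_1_6 : gramK 1 6 = 0 := by decide
private lemma g_1_7 : gramK 1 7 = 0 := by decide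
private lemma g_1_8 : gramK 1 8 = 0 := by decide
private lemma g_1_9 : gramK 1 9 = 0 := by decide
private lemma g_1_10 : gramK 1 10 = 0 := by decide
private lemma g_1_11 : gramK 1 11 = 0 := by decide
private lemma g_1_12 : gramK 1 12 = 0 := by decide
private lemma g_1_13 : gramK 1 13 = 0 := by decide
private lemma g_1_14 : gramK 1 14 = 0 := by decide
private lemma g_1_15 : gramK 1 15 = 0 := by decide
private lemma g_1_16 : gramK 1 16 = 0 := by decide
private lemma g_1_17 : gramK 1 17 = 0 := by decide
private lemma g_1_18 : gramK 1 18 = 0 := by decide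
private lemma g_1_19 : gramK 1 19 = 0 := by decide
private lemma g_1_20 : gramK 1 20 = 0 := by decide
private lemma g_1_21 : gramK 1 21 = 0 := by decide
private lemma g_2_0 : gramK 2 0 = 1 := by decide
private lemma g_2_1 : gramK 2 1 = 0 := by decide
private lemma g_2_2 : gramK 2 2 = (-2) := by decide
private lemma g_2_3 : gramK 2 3 = 1 := by decide
private lemma g_2_4 : gramK 2 4 = 0 := by decide
private lemma g_2_5 : gramK 2 5 = 0 := by decide
private lemma g_2_6 : gramK 2 6 = 0 := by decide
private lemma g_2_7 : gramK 2 7 = 0 := by decide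
private lemma g_2_8 : gramK 2 8 = 0 := by decide
private lemma g_2_9 : gramK 2 9 = 0 := by decide
private lemma g_2_10 : gramK 2 10 = 0 := by decide
private lemma g_2_11 : gramK 2 11 = 0 := by decide
private lemma g_2_12 : gramK 2 12 = 0 := by decide
private lemma g_2_13 : gramK 2 13 = 0 := by decide
private lemma g_2_14 : gramK 2 14 = 0 := by decide
private lemma g_2_15 : gramK 2 15 = 0 := by decide
private lemma g_2_16 : gramK 2 16 = 0 := by decide
private lemma g_2_17 : gramK 2 17 = 0 := by decide
private lemma g_2_18 : gramK 2 18 = 0 := by decide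
private lemma g_2_19 : gramK 2 19 = 0 := by decide
private lemma g_2_20 : gramK 2 20 = 0 := by decide
private lemma g_2_21 : gramK 2 21 = 0 := by decide
private lemma g_3_0 : gramK 3 0 = 0 := by decide
private lemma g_3_1 : gramK 3 1 = 1 := by decide
private lemma g_3_2 : gramK 3 2 = 1 := by decide
private lemma g_3_3 : gramK 3 3 = (-2) := by decide
private lemma g_3_4 : gramK 3 4 = 1 := by decide
private lemma g_3_5 : gramK 3 5 = 0 := by decide
private lemma g_3_6 : gramK 3 6 = 0 := by decide
private lemma g_3_7 : gramK 3 7 = 0 := by decide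
private lemma g_3_8 : gramK 3 8 = 0 := by decide
private lemma g_3_9 : gramK 3 9 = 0 := by decide
private lemma g_3_10 : gramK 3 10 = 0 := by decide
private lemma g_3_11 : gramK 3 11 = 0 := by decide
private lemma g_3_12 : gramK 3 12 = 0 := by decide
private lemma g_3_13 : gramK 3 13 = 0 := by decide
private lemma g_3_14 : gramK 3 14 = 0 := by decide
private lemma g_3_15 : gramK 3 15 = 0 := by decide
private lemma g_3_16 : gramK 3 16 = 0 := by decide
private lemma g_3_17 : gramK 3 17 = 0 := by decide
private lemma g_3_18 : gramK 3 18 = 0 := by decide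
private lemma g_3_19 : gramK 3 19 = 0 := by decide
private lemma g_3_20 : gramK 3 20 = 0 := by decide
private lemma g_3_21 : gramK 3 21 = 0 := by decide
private lemma g_4_0 : gramK 4 0 = 0 := by decide
private lemma g_4_1 : gramK 4 1 = 0 := by decide
private lemma g_4_2 : gramK 4 2 = 0 := by decide
private lemma g_4_3 : gramK 4 3 = 1 := by decide
private lemma g_4_4 : gramK 4 4 = (-2) := by decide
private lemma g_4_5 : gramK 4 5 = 1 := by decide
private lemma g_4_6 : gramK 4 6 = 0 := by decide
private lemma g_4_7 : gramK 4 7 = 0 := by decide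
private lemma g_4_8 : gramK 4 8 = 0 := by decide
private lemma g_4_9 : gramK 4 9 = 0 := by decide
private lemma g_4_10 : gramK 4 10 = 0 := by decide
private lemma g_4_11 : gramK 4 11 = 0 := by decide
private lemma g_4_12 : gramK 4 12 = 0 := by decide
private lemma g_4_13 : gramK 4 13 = 0 := by decide
private lemma g_4_14 : gramK 4 14 = 0 := by decide
private lemma g_4_15 : gramK 4 15 = 0 := by decide
private lemma g_4_16 : gramK 4 16 = 0 := by decide
private lemma g_4_17 : gramK 4 17 = 0 := by decide
private lemma g_4_18 : gramK 4 18 = 0 := by decide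
private lemma g_4_19 : gramK 4 19 = 0 := by decide
private lemma g_4_20 : gramK 4 20 = 0 := by decide
private lemma g_4_21 : gramK 4 21 = 0 := by decide
private lemma g_5_0 : gramK 5 0 = 0 := by decide
private lemma g_5_1 : gramK 5 1 = 0 := by decide
private lemma g_5_2 : gramK 5 2 = 0 := by decide
private lemma g_5_3 : gramK 5 3 = 0 := by decide
private lemma g_5_4 : gramK 5 4 = 1 := by decide
private lemma g_5_5 : gramK 5 5 = (-2) := by decide
private lemma g_5_6 : gramK 5 6 = 1 := by decide
private lemma g_5_7 : gramK 5 7 = 0 := by decide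
private lemma g_5_8 : gramK 5 8 = 0 := by decide
private lemma g_5_9 : gramK 5 9 = 0 := by decide
private lemma g_5_10 : gramK 5 10 = 0 := by decide
private lemma g_5_11 : gramK 5 11 = 0 := by decide
private lemma g_5_12 : gramK 5 12 = 0 := by decide
private lemma g_5_13 : gramK 5 13 = 0 := by decide
private lemma g_5_14 : gramK 5 14 = 0 := by decide
private lemma g_5_15 : gramK 5 15 = 0 := by decide
private lemma g_5_16 : gramK 5 16 = 0 := by decide
private lemma g_5_17 : gramK 5 17 = 0 := by decide
private lemma g_5_18 : gramK 5 18 = 0 := by decide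
private lemma g_5_19 : gramK 5 19 = 0 := by decide
private lemma g_5_20 : gramK 5 20 = 0 := by decide
private lemma g_5_21 : gramK 5 21 = 0 := by decide
private lemma g_6_0 : gramK 6 0 = 0 := by decide
private lemma g_6_1 : gramK 6 1 = 0 := by decide
private lemma g_6_2 : gramK 6 2 = 0 := by decide
private lemma g_6_3 : gramK 6 3 = 0 := by decide
private lemma g_6_4 : gramK 6 4 = 0 := by decide
private lemma g_6_5 : gramK 6 5 = 1 := by decide
private lemma g_6_6 : gramK 6 6 = (-2) := by decide
private lemma g_6_7 : gramK 6 7 = 1 := by decide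
private lemma g_6_8 : gramK 6 8 = 0 := by decide
private lemma g_6_9 : gramK 6 9 = 0 := by decide
private lemma g_6_10 : gramK 6 10 = 0 := by decide
private lemma g_6_11 : gramK 6 11 = 0 := by decide
private lemma g_6_12 : gramK 6 12 = 0 := by decide
private lemma g_6_13 : gramK 6 13 = 0 := by decide
private lemma g_6_14 : gramK 6 14 = 0 := by decide
private lemma g_6_15 : gramK 6 15 = 0 := by decide
private lemma g_6_16 : gramK 6 16 = 0 := by decide
private lemma g_6_17 : gramK 6 17 = 0 := by decide
private lemma g_6_18 : gramK 6 18 = 0 := by decide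
private lemma g_6_19 : gramK 6 19 = 0 := by decide
private lemma g_6_20 : gramK 6 20 = 0 := by decide
private lemma g_6_21 : gramK 6 21 = 0 := by decide
private lemma g_7_0 : gramK 7 0 = 0 := by decide
private lemma g_7_1 : gramK 7 1 = 0 := by decide
private lemma g_7_2 : gramK 7 2 = 0 := by decide
private lemma g_7_3 : gramK 7 3 = 0 := by decide
private lemma g_7_4 : gramK 7 4 = 0 := by decide
private lemma g_7_5 : gramK 7 5 = 0 := by decide
private lemma g_7_6 : gramK 7 6 = 1 := by decide
private lemma g_7_7 : gramK 7 7 = (-2) := by decide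
private lemma g_7_8 : gramK 7 8 = 0 := by decide
private lemma g_7_9 : gramK 7 9 = 0 := by decide
private lemma g_7_10 : gramK 7 10 = 0 := by decide
private lemma g_7_11 : gramK 7 11 = 0 := by decide
private lemma g_7_12 : gramK 7 12 = 0 := by decide
private lemma g_7_13 : gramK 7 13 = 0 := by decide
private lemma g_7_14 : gramK 7 14 = 0 := by decide
private lemma g_7_15 : gramK 7 15 = 0 := by decide
private lemma g_7_16 : gramK 7 16 = 0 := by decide
private lemma g_7_17 : gramK 7 17 = 0 := by decide
private lemma g_7_18 : gramK 7 18 = 0 := by decide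
private lemma g_7_19 : gramK 7 19 = 0 := by decide
private lemma g_7_20 : gramK 7 20 = 0 := by decide
private lemma g_7_21 : gramK 7 21 = 0 := by decide
private lemma g_8_0 : gramK 8 0 = 0 := by decide
private lemma g_8_1 : gramK 8 1 = 0 := by decide
private lemma g_8_2 : gramK 8 2 = 0 := by decide
private lemma g_8_3 : gramK 8 3 = 0 := by decide
private lemma g_8_4 : gramK 8 4 = 0 := by decide
private lemma g_8_5 : gramK 8 5 = 0 := by decide
private lemma g_8_6 : gramK 8 6 = 0 := by decide
private lemma g_8_7 : gramK 8 7 = 0 := by decide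
private lemma g_8_8 : gramK 8 8 = (-2) := by decide
private lemma g_8_9 : gramK 8 9 = 0 := by decide
private lemma g_8_10 : gramK 8 10 = 1 := by decide
private lemma g_8_11 : gramK 8 11 = 0 := by decide
private lemma g_8_12 : gramK 8 12 = 0 := by decide
private lemma g_8_13 : gramK 8 13 = 0 := by decide
private lemma g_8_14 : gramK 8 14 = 0 := by decide
private lemma g_8_15 : gramK 8 15 = 0 := by decide
private lemma g_8_16 : gramK 8 16 = 0 := by decide
private lemma g_8_17 : gramK 8 17 = 0 := by decide
private lemma g_8_18 : gramK 8 18 = 0 := by decide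
private lemma g_8_19 : gramK 8 19 = 0 := by decide
private lemma g_8_20 : gramK 8 20 = 0 := by decide
private lemma g_8_21 : gramK 8 21 = 0 := by decide
private lemma g_9_0 : gramK 9 0 = 0 := by decide
private lemma g_9_1 : gramK 9 1 = 0 := by decide
private lemma g_9_2 : gramK 9 2 = 0 := by decide
private lemma g_9_3 : gramK 9 3 = 0 := by decide
private lemma g_9_4 : gramK 9 4 = 0 := by decide
private lemma g_9_5 : gramK 9 5 = 0 := by decide
private lemma g_9_6 : gramK 9 6 = 0 := by decide
private lemma g_9_7 : gramK 9 7 = 0 := by decide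
private lemma g_9_8 : gramK 9 8 = 0 := by decide
private lemma g_9_9 : gramK 9 9 = (-2) := by decide
private lemma g_9_10 : gramK 9 10 = 0 := by decide
private lemma g_9_11 : gramK 9 11 = 1 := by decide
private lemma g_9_12 : gramK 9 12 = 0 := by decide
private lemma g_9_13 : gramK 9 13 = 0 := by decide
private lemma g_9_14 : gramK 9 14 = 0 := by decide
private lemma g_9_15 : gramK 9 15 = 0 := by decide
private lemma g_9_16 : gramK 9 16 = 0 := by decide
private lemma g_9_17 : gramK 9 17 = 0 := by decide
private lemma g_9_18 : gramK 9 18 = 0 := by decide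
private lemma g_9_19 : gramK 9 19 = 0 := by decide
private lemma g_9_20 : gramK 9 20 = 0 := by decide
private lemma g_9_21 : gramK 9 21 = 0 := by decide
private lemma g_10_0 : gramK 10 0 = 0 := by decide
private lemma g_10_1 : gramK 10 1 = 0 := by decide
private lemma g_10_2 : gramK 10 2 = 0 := by decide
private lemma g_10_3 : gramK 10 3 = 0 := by decide
private lemma g_10_4 : gramK 10 4 = 0 := by decide
private lemma g_10_5 : gramK 10 5 = 0 := by decide
private lemma g_10_6 : gramK 10 6 = 0 := by decide
private lemma g_10_7 : gramK 10 7 = 0 := by decide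
private lemma g_10_8 : gramK 10 8 = 1 := by decide
private lemma g_10_9 : gramK 10 9 = 0 := by decide
private lemma g_10_10 : gramK 10 10 = (-2) := by decide
private lemma g_10_11 : gramK 10 11 = 1 := by decide
private lemma g_10_12 : gramK 10 12 = 0 := by decide
private lemma g_10_13 : gramK 10 13 = 0 := by decide
private lemma g_10_14 : gramK 10 14 = 0 := by decide
private lemma g_10_15 : gramK 10 15 = 0 := by decide
private lemma g_10_16 : gramK 10 16 = 0 := by decide
private lemma g_10_17 : gramK 10 17 = 0 := by decide
private lemma g_10_18 : gramK 10 18 = 0 := by decide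
private lemma g_10_19 : gramK 10 19 = 0 := by decide
private lemma g_10_20 : gramK 10 20 = 0 := by decide
private lemma g_10_21 : gramK 10 21 = 0 := by decide
private lemma g_11_0 : gramK 11 0 = 0 := by decide
private lemma g_11_1 : gramK 11 1 = 0 := by decide
private lemma g_11_2 : gramK 11 2 = 0 := by decide
private lemma g_11_3 : gramK 11 3 = 0 := by decide
private lemma g_11_4 : gramK 11 4 = 0 := by decide
private lemma g_11_5 : gramK 11 5 = 0 := by decide
private lemma g_11_6 : gramK 11 6 = 0 := by decide
private lemma g_11_7 : gramK 11 7 = 0 := by decide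
private lemma g_11_8 : gramK 11 8 = 0 := by decide
private lemma g_11_9 : gramK 11 9 = 1 := by decide
private lemma g_11_10 : gramK 11 10 = 1 := by decide
private lemma g_11_11 : gramK 11 11 = (-2) := by decide
private lemma g_11_12 : gramK 11 12 = 1 := by decide
private lemma g_11_13 : gramK 11 13 = 0 := by decide
private lemma g_11_14 : gramK 11 14 = 0 := by decide
private lemma g_11_15 : gramK 11 15 = 0 := by decide
private lemma g_11_16 : gramK 11 16 = 0 := by decide
private lemma g_11_17 : gramK 11 17 = 0 := by decide
private lemma g_11_18 : gramK 11 18 = 0 := by decide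
private lemma g_11_19 : gramK 11 19 = 0 := by decide
private lemma g_11_20 : gramK 11 20 = 0 := by decide
private lemma g_11_21 : gramK 11 21 = 0 := by decide
private lemma g_12_0 : gramK 12 0 = 0 := by decide
private lemma g_12_1 : gramK 12 1 = 0 := by decide
private lemma g_12_2 : gramK 12 2 = 0 := by decide
private lemma g_12_3 : gramK 12 3 = 0 := by decide
private lemma g_12_4 : gramK 12 4 = 0 := by decide
private lemma g_12_5 : gramK 12 5 = 0 := by decide
private lemma g_12_6 : gramK 12 6 = 0 := by decide
private lemma g_12_7 : gramK 12 7 = 0 := by decide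
private lemma g_12_8 : gramK 12 8 = 0 := by decide
private lemma g_12_9 : gramK 12 9 = 0 := by decide
private lemma g_12_10 : gramK 12 10 = 0 := by decide
private lemma g_12_11 : gramK 12 11 = 1 := by decide
private lemma g_12_12 : gramK 12 12 = (-2) := by decide
private lemma g_12_13 : gramK 12 13 = 1 := by decide
private lemma g_12_14 : gramK 12 14 = 0 := by decide
private lemma g_12_15 : gramK 12 15 = 0 := by decide
private lemma g_12_16 : gramK 12 16 = 0 := by decide
private lemma g_12_17 : gramK 12 17 = 0 := by decide
private lemma g_12_18 : gramK 12 18 = 0 := by decide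
private lemma g_12_19 : gramK 12 19 = 0 := by decide
private lemma g_12_20 : gramK 12 20 = 0 := by decide
private lemma g_12_21 : gramK 12 21 = 0 := by decide
private lemma g_13_0 : gramK 13 0 = 0 := by decide
private lemma g_13_1 : gramK 13 1 = 0 := by decide
private lemma g_13_2 : gramK 13 2 = 0 := by decide
private lemma g_13_3 : gramK 13 3 = 0 := by decide
private lemma g_13_4 : gramK 13 4 = 0 := by decide
private lemma g_13_5 : gramK 13 5 = 0 := by decide
private lemma g_13_6 : gramK 13 6 = 0 := by decide
private lemma g_13_7 : gramK 13 7 = 0 := by decide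
private lemma g_13_8 : gramK 13 8 = 0 := by decide
private lemma g_13_9 : gramK 13 9 = 0 := by decide
private lemma g_13_10 : gramK 13 10 = 0 := by decide
private lemma g_13_11 : gramK 13 11 = 0 := by decide
private lemma g_13_12 : gramK 13 12 = 1 := by decide
private lemma g_13_13 : gramK 13 13 = (-2) := by decide
private lemma g_13_14 : gramK 13 14 = 1 := by decide
private lemma g_13_15 : gramK 13 15 = 0 := by decide
private lemma g_13_16 : gramK 13 16 = 0 := by decide
private lemma g_13_17 : gramK 13 17 = 0 := by decide
private lemma g_13_18 : gramK 13 18 = 0 := by decide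
private lemma g_13_19 : gramK 13 19 = 0 := by decide
private lemma g_13_20 : gramK 13 20 = 0 := by decide
private lemma g_13_21 : gramK 13 21 = 0 := by decide
private lemma g_14_0 : gramK 14 0 = 0 := by decide
private lemma g_14_1 : gramK 14 1 = 0 := by decide
private lemma g_14_2 : gramK 14 2 = 0 := by decide
private lemma g_14_3 : gramK 14 3 = 0 := by decide
private lemma g_14_4 : gramK 14 4 = 0 := by decide
private lemma g_14_5 : gramK 14 5 = 0 := by decide
private lemma g_14_6 : gramK 14 6 = 0 := by decide
private lemma g_14_7 : gramK 14 7 = 0 := by decide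
private lemma g_14_8 : gramK 14 8 = 0 := by decide
private lemma g_14_9 : gramK 14 9 = 0 := by decide
private lemma g_14_10 : gramK 14 10 = 0 := by decide
private lemma g_14_11 : gramK 14 11 = 0 := by decide
private lemma g_14_12 : gramK 14 12 = 0 := by decide
private lemma g_14_13 : gramK 14 13 = 1 := by decide
private lemma g_14_14 : gramK 14 14 = (-2) := by decide
private lemma g_14_15 : gramK 14 15 = 1 := by decide
private lemma g_14_16 : gramK 14 16 = 0 := by decide
private lemma g_14_17 : gramK 14 17 = 0 := by decide
private lemma g_14_18 : gramK 14 18 = 0 := by decide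
private lemma g_14_19 : gramK 14 19 = 0 := by decide
private lemma g_14_20 : gramK 14 20 = 0 := by decide
private lemma g_14_21 : gramK 14 21 = 0 := by decide
private lemma g_15_0 : gramK 15 0 = 0 := by decide
private lemma g_15_1 : gramK 15 1 = 0 := by decide
private lemma g_15_2 : gramK 15 2 = 0 := by decide
private lemma g_15_3 : gramK 15 3 = 0 := by decide
private lemma g_15_4 : gramK 15 4 = 0 := by decide
private lemma g_15_5 : gramK 15 5 = 0 := by decide
private lemma g_15_6 : gramK 15 6 = 0 := by decide
private lemma g_15_7 : gramK 15 7 = 0 := by decide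
private lemma g_15_8 : gramK 15 8 = 0 := by decide
private lemma g_15_9 : gramK 15 9 = 0 := by decide
private lemma g_15_10 : gramK 15 10 = 0 := by decide
private lemma g_15_11 : gramK 15 11 = 0 := by decide
private lemma g_15_12 : gramK 15 12 = 0 := by decide
private lemma g_15_13 : gramK 15 13 = 0 := by decide
private lemma g_15_14 : gramK 15 14 = 1 := by decide
private lemma g_15_15 : gramK 15 15 = (-2) := by decide
private lemma g_15_16 : gramK 15 16 = 0 := by decide
private lemma g_15_17 : gramK 15 17 = 0 := by decide
private lemma g_15_18 : gramK 15 18 = 0 := by decide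
private lemma g_15_19 : gramK 15 19 = 0 := by decide
private lemma g_15_20 : gramK 15 20 = 0 := by decide
private lemma g_15_21 : gramK 15 21 = 0 := by decide
private lemma g_16_0 : gramK 16 0 = 0 := by decide
private lemma g_16_1 : gramK 16 1 = 0 := by decide
private lemma g_16_2 : gramK 16 2 = 0 := by decide
private lemma g_16_3 : gramK 16 3 = 0 := by decide
private lemma g_16_4 : gramK 16 4 = 0 := by decide
private lemma g_16_5 : gramK 16 5 = 0 := by decide
private lemma g_16_6 : gramK 16 6 = 0 := by decide
private lemma g_16_7 : gramK 16 7 = 0 := by decide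
private lemma g_16_8 : gramK 16 8 = 0 := by decide
private lemma g_16_9 : gramK 16 9 = 0 := by decide
private lemma g_16_10 : gramK 16 10 = 0 := by decide
private lemma g_16_11 : gramK 16 11 = 0 := by decide
private lemma g_16_12 : gramK 16 12 = 0 := by decide
private lemma g_16_13 : gramK 16 13 = 0 := by decide
private lemma g_16_14 : gramK 16 14 = 0 := by decide
private lemma g_16_15 : gramK 16 15 = 0 := by decide
private lemma g_16_16 : gramK 16 16 = 0 := by decide
private lemma g_16_17 : gramK 16 17 = 1 := by decide
private lemma g_16_18 : gramK 16 18 = 0 := by decide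
private lemma g_16_19 : gramK 16 19 = 0 := by decide
private lemma g_16_20 : gramK 16 20 = 0 := by decide
private lemma g_16_21 : gramK 16 21 = 0 := by decide
private lemma g_17_0 : gramK 17 0 = 0 := by decide
private lemma g_17_1 : gramK 17 1 = 0 := by decide
private lemma g_17_2 : gramK 17 2 = 0 := by decide
private lemma g_17_3 : gramK 17 3 = 0 := by decide
private lemma g_17_4 : gramK 17 4 = 0 := by decide
private lemma g_17_5 : gramK 17 5 = 0 := by decide
private lemma g_17_6 : gramK 17 6 = 0 := by decide
private lemma g_17_7 : gramK 17 7 = 0 := by decide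
private lemma g_17_8 : gramK 17 8 = 0 := by decide
private lemma g_17_9 : gramK 17 9 = 0 := by decide
private lemma g_17_10 : gramK 17 10 = 0 := by decide
private lemma g_17_11 : gramK 17 11 = 0 := by decide
private lemma g_17_12 : gramK 17 12 = 0 := by decide
private lemma g_17_13 : gramK 17 13 = 0 := by decide
private lemma g_17_14 : gramK 17 14 = 0 := by decide
private lemma g_17_15 : gramK 17 15 = 0 := by decide
private lemma g_17_16 : gramK 17 16 = 1 := by decide
private lemma g_17_17 : gramK 17 17 = 0 := by decide
private lemma g_17_18 : gramK 17 18 = 0 := by decide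
private lemma g_17_19 : gramK 17 19 = 0 := by decide
private lemma g_17_20 : gramK 17 20 = 0 := by decide
private lemma g_17_21 : gramK 17 21 = 0 := by decide
private lemma g_18_0 : gramK 18 0 = 0 := by decide
private lemma g_18_1 : gramK 18 1 = 0 := by decide
private lemma g_18_2 : gramK 18 2 = 0 := by decide
private lemma g_18_3 : gramK 18 3 = 0 := by decide
private lemma g_18_4 : gramK 18 4 = 0 := by decide
private lemma g_18_5 : gramK 18 5 = 0 := by decide
private lemma g_18_6 : gramK 18 6 = 0 := by decide
private lemma g_18_7 : gramK 18 7 = 0 := by decide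
private lemma g_18_8 : gramK 18 8 = 0 := by decide
private lemma g_18_9 : gramK 18 9 = 0 := by decide
private lemma g_18_10 : gramK 18 10 = 0 := by decide
private lemma g_18_11 : gramK 18 11 = 0 := by decide
private lemma g_18_12 : gramK 18 12 = 0 := by decide
private lemma g_18_13 : gramK 18 13 = 0 := by decide
private lemma g_18_14 : gramK 18 14 = 0 := by decide
private lemma g_18_15 : gramK 18 15 = 0 := by decide
private lemma g_18_16 : gramK 18 16 = 0 := by decide
private lemma g_18_17 : gramK 18 17 = 0 := by decide
private lemma g_18_18 : gramK 18 18 = 0 := by decide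
private lemma g_18_19 : gramK 18 19 = 1 := by decide
private lemma g_18_20 : gramK 18 20 = 0 := by decide
private lemma g_18_21 : gramK 18 21 = 0 := by decide
private lemma g_19_0 : gramK 19 0 = 0 := by decide
private lemma g_19_1 : gramK 19 1 = 0 := by decide
private lemma g_19_2 : gramK 19 2 = 0 := by decide
private lemma g_19_3 : gramK 19 3 = 0 := by decide
private lemma g_19_4 : gramK 19 4 = 0 := by decide
private lemma g_19_5 : gramK 19 5 = 0 := by decide
private lemma g_19_6 : gramK 19 6 = 0 := by decide
private lemma g_19_7 : gramK 19 7 = 0 := by decide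
private lemma g_19_8 : gramK 19 8 = 0 := by decide
private lemma g_19_9 : gramK 19 9 = 0 := by decide
private lemma g_19_10 : gramK 19 10 = 0 := by decide
private lemma g_19_11 : gramK 19 11 = 0 := by decide
private lemma g_19_12 : gramK 19 12 = 0 := by decide
private lemma g_19_13 : gramK 19 13 = 0 := by decide
private lemma g_19_14 : gramK 19 14 = 0 := by decide
private lemma g_19_15 : gramK 19 15 = 0 := by decide
private lemma g_19_16 : gramK 19 16 = 0 := by decide
private lemma g_19_17 : gramK 19 17 = 0 := by decide
private lemma g_19_18 : gramK 19 18 = 1 := by decide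
private lemma g_19_19 : gramK 19 19 = 0 := by decide
private lemma g_19_20 : gramK 19 20 = 0 := by decide
private lemma g_19_21 : gramK 19 21 = 0 := by decide
private lemma g_20_0 : gramK 20 0 = 0 := by decide
private lemma g_20_1 : gramK 20 1 = 0 := by decide
private lemma g_20_2 : gramK 20 2 = 0 := by decide
private lemma g_20_3 : gramK 20 3 = 0 := by decide
private lemma g_20_4 : gramK 20 4 = 0 := by decide
private lemma g_20_5 : gramK 20 5 = 0 := by decide
private lemma g_20_6 : gramK 20 6 = 0 := by decide
private lemma g_20_7 : gramK 20 7 = 0 := by decide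
private lemma g_20_8 : gramK 20 8 = 0 := by decide
private lemma g_20_9 : gramK 20 9 = 0 := by decide
private lemma g_20_10 : gramK 20 10 = 0 := by decide
private lemma g_20_11 : gramK 20 11 = 0 := by decide
private lemma g_20_12 : gramK 20 12 = 0 := by decide
private lemma g_20_13 : gramK 20 13 = 0 := by decide
private lemma g_20_14 : gramK 20 14 = 0 := by decide
private lemma g_20_15 : gramK 20 15 = 0 := by decide
private lemma g_20_16 : gramK 20 16 = 0 := by decide
private lemma g_20_17 : gramK 20 17 = 0 := by decide
private lemma g_20_18 : gramK 20 18 = 0 := by decide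
private lemma g_20_19 : gramK 20 19 = 0 := by decide
private lemma g_20_20 : gramK 20 20 = 0 := by decide
private lemma g_20_21 : gramK 20 21 = 1 := by decide
private lemma g_21_0 : gramK 21 0 = 0 := by decide
private lemma g_21_1 : gramK 21 1 = 0 := by decide
private lemma g_21_2 : gramK 21 2 = 0 := by decide
private lemma g_21_3 : gramK 21 3 = 0 := by decide
private lemma g_21_4 : gramK 21 4 = 0 := by decide
private lemma g_21_5 : gramK 21 5 = 0 := by decide
private lemma g_21_6 : gramK 21 6 = 0 := by decide
private lemma g_21_7 : gramK 21 7 = 0 := by decide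
private lemma g_21_8 : gramK 21 8 = 0 := by decide
private lemma g_21_9 : gramK 21 9 = 0 := by decide
private lemma g_21_10 : gramK 21 10 = 0 := by decide
private lemma g_21_11 : gramK 21 11 = 0 := by decide
private lemma g_21_12 : gramK 21 12 = 0 := by decide
private lemma g_21_13 : gramK 21 13 = 0 := by decide
private lemma g_21_14 : gramK 21 14 = 0 := by decide
private lemma g_21_15 : gramK 21 15 = 0 := by decide
private lemma g_21_16 : gramK 21 16 = 0 := by decide
private lemma g_21_17 : gramK 21 17 = 0 := by decide
private lemma g_21_18 : gramK 21 18 = 0 := by decide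
private lemma g_21_19 : gramK 21 19 = 0 := by decide
private lemma g_21_20 : gramK 21 20 = 1 := by decide
private lemma g_21_21 : gramK 21 21 = 0 := by decide

set_option maxHeartbeats 4000000 in
theorem KB_expand (x y : Fin 22 → ℤ) : KB x y = (-2) * x 0 * y 0 + x 0 * y 2 + (-2) * x 1 * y 1 + x 1 * y 3 + x 2 * y 0 + (-2) * x 2 * y 2 + x 2 * y 3 + x 3 * y 1 + x 3 * y 2 + (-2) * x 3 * y 3 + x 3 * y 4 + x 4 * y 3 + (-2) * x 4 * y 4 + x 4 * y 5 + x 5 * y 4 + (-2) * x 5 * y 5 + x 5 * y 6 + x 6 * y 5 + (-2) * x 6 * y 6 + x 6 * y 7 + x 7 * y 6 + (-2) * x 7 * y 7 + (-2) * x 8 * y 8 + x 8 * y 10 + (-2) * x 9 * y 9 + x 9 * y 11 + x 10 * y 8 + (-2) * x 10 * y 10 + x 10 * y 11 + x 11 * y 9 + x 11 * y 10 + (-2) * x 11 * y 11 + x 11 * y 12 + x 12 * y 11 + (-2) * x 12 * y 12 + x 12 * y 13 + x 13 * y 12 + (-2) * x 13 * y 13 + x 13 * y 14 + x 14 * y 13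 + (-2) * x 14 * y 14 + x 14 * y 15 + x 15 * y 14 + (-2) * x 15 * y 15 + x 16 * y 17 + x 17 * y 16 + x 18 * y 19 + x 19 * y 18 + x 20 * y 21 + x 21 * y 20 := by
  simp only [KB, Fin.sum_univ_succ, Fin.sum_univ_zero, c1, c2, c3, c4, c5, c6, c7, c8, c9, c10, c11, c12, c13, c14, c15, c16, c17, c18, c19, c20, c21, g_0_0, g_0_1, g_0_2, g_0_3, g_0_4, g_0_5, g_0_6, g_0_7, g_0_8, g_0_9, g_0_10, g_0_11, g_0_12, g_0_13, g_0_14, g_0_15, g_0_16, g_0_17, g_0_18, g_0_19, g_0_20, g_0_21, g_1_0, g_1_1, g_1_2, g_1_3, g_1_4, g_1_5, g_1_6, g_1_7, g_1_8, g_1_9, g_1_10, g_1_11, g_1_12, g_1_13, g_1_14, g_1_15, g_1_16, g_1_17, g_1_18, g_1_19, g_1_20, g_1_21, g_2_0, g_2_1, g_2_2, g_2_3, g_2_4, g_2_5, g_2_6, g_2_7, g_2_8, g_2_9, g_2_10, g_2_11, g_2_12, g_2_13, g_2_14, g_2_15, g_2_16, g_2_17, g_2_18, g_2_19, g_2_20,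 g_2_21, g_3_0, g_3_1, g_3_2, g_3_3, g_3_4, g_3_5, g_3_6, g_3_7, g_3_8, g_3_9, g_3_10, g_3_11, g_3_12, g_3_13, g_3_14, g_3_15, g_3_16, g_3_17, g_3_18, g_3_19, g_3_20, g_3_21, g_4_0, g_4_1, g_4_2, g_4_3, g_4_4, g_4_5, g_4_6, g_4_7, g_4_8, g_4_9, g_4_10, g_4_11, g_4_12, g_4_13, g_4_14, g_4_15, g_4_16, g_4_17, g_4_18, g_4_19, g_4_20, g_4_21, g_5_0, g_5_1, g_5_2, g_5_3, g_5_4, g_5_5, g_5_6, g_5_7, g_5_8, g_5_9, g_5_10, g_5_11, g_5_12, g_5_13, g_5_14, g_5_15, g_5_16, g_5_17, g_5_18, g_5_19, g_5_20, g_5_21, g_6_0, g_6_1, g_6_2, g_6_3, g_6_4, g_6_5, g_6_6, g_6_7, g_6_8, g_6_9, g_6_10, g_6_11, g_6_12, g_6_13, g_6_14, g_6_15, g_6_16, g_6_17, g_6_18, g_6_19, g_6_20, g_6_21, g_7_0, g_7_1, g_7_2, g_7_3, g_7_4, g_7_5, g_7_6, g_7_7, g_7_8, g_7_9, g_7_10,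 g_7_11, g_7_12, g_7_13, g_7_14, g_7_15, g_7_16, g_7_17, g_7_18, g_7_19, g_7_20, g_7_21, g_8_0, g_8_1, g_8_2, g_8_3, g_8_4, g_8_5, g_8_6, g_8_7, g_8_8, g_8_9, g_8_10, g_8_11, g_8_12, g_8_13, g_8_14, g_8_15, g_8_16, g_8_17, g_8_18, g_8_19, g_8_20, g_8_21, g_9_0, g_9_1, g_9_2, g_9_3, g_9_4, g_9_5, g_9_6, g_9_7, g_9_8, g_9_9, g_9_10, g_9_11, g_9_12, g_9_13, g_9_14, g_9_15, g_9_16, g_9_17, g_9_18, g_9_19, g_9_20, g_9_21, g_10_0, g_10_1, g_10_2, g_10_3, g_10_4, g_10_5, g_10_6, g_10_7, g_10_8, g_10_9, g_10_10, g_10_11, g_10_12, g_10_13, g_10_14, g_10_15, g_10_16, g_10_17, g_10_18, g_10_19, g_10_20, g_10_21, g_11_0, g_11_1, g_11_2, g_11_3, g_11_4, g_11_5, g_11_6, g_11_7, g_11_8, g_11_9, g_11_10, g_11_11, g_11_12, g_11_13, g_11_14, g_11_15, g_11_16, g_11_17, g_11_18, g_11_19, g_11_20, g_11_21, g_12_0,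 g_12_1, g_12_2, g_12_3, g_12_4, g_12_5, g_12_6, g_12_7, g_12_8, g_12_9, g_12_10, g_12_11, g_12_12, g_12_13, g_12_14, g_12_15, g_12_16, g_12_17, g_12_18, g_12_19, g_12_20, g_12_21, g_13_0, g_13_1, g_13_2, g_13_3, g_13_4, g_13_5, g_13_6, g_13_7, g_13_8, g_13_9, g_13_10, g_13_11, g_13_12, g_13_13, g_13_14, g_13_15, g_13_16, g_13_17, g_13_18, g_13_19, g_13_20, g_13_21, g_14_0, g_14_1, g_14_2, g_14_3, g_14_4, g_14_5, g_14_6, g_14_7, g_14_8, g_14_9, g_14_10, g_14_11, g_14_12, g_14_13, g_14_14, g_14_15, g_14_16, g_14_17, g_14_18, g_14_19, g_14_20, g_14_21, g_15_0, g_15_1, g_15_2, g_15_3, g_15_4, g_15_5, g_15_6, g_15_7, g_15_8, g_15_9, g_15_10, g_15_11, g_15_12, g_15_13, g_15_14, g_15_15, g_15_16, g_15_17, g_15_18, g_15_19, g_15_20, g_15_21, g_16_0, g_16_1, g_16_2, g_16_3, g_16_4, g_16_5, g_16_6, g_16_7, g_16_8, g_16_9, g_16_10, g_16_11, g_16_12,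 g_16_13, g_16_14, g_16_15, g_16_16, g_16_17, g_16_18, g_16_19, g_16_20, g_16_21, g_17_0, g_17_1, g_17_2, g_17_3, g_17_4, g_17_5, g_17_6, g_17_7, g_17_8, g_17_9, g_17_10, g_17_11, g_17_12, g_17_13, g_17_14, g_17_15, g_17_16, g_17_17, g_17_18, g_17_19, g_17_20, g_17_21, g_18_0, g_18_1, g_18_2, g_18_3, g_18_4, g_18_5, g_18_6, g_18_7, g_18_8, g_18_9, g_18_10, g_18_11, g_18_12, g_18_13, g_18_14, g_18_15, g_18_16, g_18_17, g_18_18, g_18_19, g_18_20, g_18_21, g_19_0, g_19_1, g_19_2, g_19_3, g_19_4, g_19_5, g_19_6, g_19_7, g_19_8, g_19_9, g_19_10, g_19_11, g_19_12, g_19_13, g_19_14, g_19_15, g_19_16, g_19_17, g_19_18, g_19_19, g_19_20, g_19_21, g_20_0, g_20_1, g_20_2, g_20_3, g_20_4, g_20_5, g_20_6, g_20_7, g_20_8, g_20_9, g_20_10, g_20_11, g_20_12, g_20_13, g_20_14, g_20_15, g_20_16, g_20_17, g_20_18, g_20_19, g_20_20, g_20_21, g_21_0, g_21_1, g_21_2,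 g_21_3, g_21_4, g_21_5, g_21_6, g_21_7, g_21_8, g_21_9, g_21_10, g_21_11, g_21_12, g_21_13, g_21_14, g_21_15, g_21_16, g_21_17, g_21_18, g_21_19, g_21_20, g_21_21,
    zero_mul, mul_zero, add_zero, zero_add, one_mul, neg_mul, neg_neg]
  ring


private lemma el0 (e : ℤ) : ell (2*e) 0 = 0 := by simp [ell, Pi.single_apply]
private lemma el1 (e : ℤ) : ell (2*e) 1 = 0 := by simp [ell, Pi.single_apply]
private lemma el2 (e : ℤ) : ell (2*e) 2 = 0 := by simp [ell, Pi.single_apply]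
private lemma el3 (e : ℤ) : ell (2*e) 3 = 0 := by simp [ell, Pi.single_apply]
private lemma el4 (e : ℤ) : ell (2*e) 4 = 0 := by simp [ell, Pi.single_apply]
private lemma el5 (e : ℤ) : ell (2*e) 5 = 0 := by simp [ell, Pi.single_apply]
private lemma el6 (e : ℤ) : ell (2*e) 6 = 0 := by simp [ell, Pi.single_apply]
private lemma el7 (e : ℤ) : ell (2*e) 7 = 0 := by simp [ell, Pi.single_apply]
private lemma el8 (e : ℤ) : ell (2*e) 8 = 0 := by simp [ell, Pi.single_apply]
private lemma el9 (e : ℤ) : ell (2*e) 9 = 0 := by simp [ell, Pi.single_apply]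
private lemma el10 (e : ℤ) : ell (2*e) 10 = 0 := by simp [ell, Pi.single_apply]
private lemma el11 (e : ℤ) : ell (2*e) 11 = 0 := by simp [ell, Pi.single_apply]
private lemma el12 (e : ℤ) : ell (2*e) 12 = 0 := by simp [ell, Pi.single_apply]
private lemma el13 (e : ℤ) : ell (2*e) 13 = 0 := by simp [ell, Pi.single_apply]
private lemma el14 (e : ℤ) : ell (2*e) 14 = 0 := by simp [ell, Pi.single_apply]
private lemma el15 (e : ℤ) : ell (2*e) 15 = 0 := by simp [ell, Pi.single_apply]
private lemma el16 (e : ℤ) : ell (2*e) 16 = 0 := by simp [ell, Pi.single_apply]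
private lemma el17 (e : ℤ) : ell (2*e) 17 = 0 := by simp [ell, Pi.single_apply]
private lemma el18 (e : ℤ) : ell (2*e) 18 = 1 := by simp [ell, Pi.single_apply]
private lemma el19 (e : ℤ) : ell (2*e) 19 = e := by simp [ell, Pi.single_apply, Int.mul_ediv_cancel_left e two_ne_zero]
private lemma el20 (e : ℤ) : ell (2*e) 20 = 0 := by simp [ell, Pi.single_apply]
private lemma el21 (e : ℤ) : ell (2*e) 21 = 0 := by simp [ell, Pi.single_apply]

theorem ell_pair (e : ℤ) (w : Fin 22 → ℤ) : KB (ell (2 * e)) w = w 19 + e * w 18 := by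
  rw [KB_expand]
  simp only [el0, el1, el2, el3, el4, el5, el6, el7, el8, el9, el10, el11, el12, el13, el14, el15, el16, el17, el18, el19, el20, el21]
  ring


set_option maxHeartbeats 16000000 in
/-- If `δ ∈ Λ_d` satisfies `(δ.δ) = -2` and `(δ.w) ∈ 2ℤ` for all `w ∈ Λ_d`,
then `d ≡ 2 (mod 8)`. -/
theorem stmt_10 (d : ℤ) (hd : 0 < d) (heven : 2 ∣ d) (δ : Fin 22 → ℤ)
    (hmem : KB (ell d) δ = 0) (hsq : KB δ δ = -2)
    (hdiv : ∀ w : Fin 22 → ℤ, KB (ell d) w = 0 → (2 : ℤ) ∣ KB δ w) :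
    d % 8 = 2 := by
  obtain ⟨e, rfl⟩ := heven
  rw [ell_pair] at hmem
  have hmom : δ 19 = -(e * δ 18) := by linarith
  have h0 : (2:ℤ) ∣ KB δ (Pi.single 0 1) :=
    hdiv _ (by rw [ell_pair]; simp [Pi.single_apply])
  rw [KB_expand] at h0
  simp [Pi.single_apply] at h0
  have h1 : (2:ℤ) ∣ KB δ (Pi.single 1 1) :=
    hdiv _ (by rw [ell_pair]; simp [Pi.single_apply])
  rw [KB_expand] at h1
  simp [Pi.single_apply] at h1
  have h2 : (2:ℤ) ∣ KB δ (Pi.single 2 1) :=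
    hdiv _ (by rw [ell_pair]; simp [Pi.single_apply])
  rw [KB_expand] at h2
  simp [Pi.single_apply] at h2
  have h3 : (2:ℤ) ∣ KB δ (Pi.single 3 1) :=
    hdiv _ (by rw [ell_pair]; simp [Pi.single_apply])
  rw [KB_expand] at h3
  simp [Pi.single_apply] at h3
  have h4 : (2:ℤ) ∣ KB δ (Pi.single 4 1) :=
    hdiv _ (by rw [ell_pair]; simp [Pi.single_apply])
  rw [KB_expand] at h4
  simp [Pi.single_apply] at h4
  have h5 : (2:ℤ) ∣ KB δ (Pi.single 5 1) :=
    hdiv _ (by rw [ell_pair]; simp [Pi.single_apply])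
  rw [KB_expand] at h5
  simp [Pi.single_apply] at h5
  have h6 : (2:ℤ) ∣ KB δ (Pi.single 6 1) :=
    hdiv _ (by rw [ell_pair]; simp [Pi.single_apply])
  rw [KB_expand] at h6
  simp [Pi.single_apply] at h6
  have h7 : (2:ℤ) ∣ KB δ (Pi.single 7 1) :=
    hdiv _ (by rw [ell_pair]; simp [Pi.single_apply])
  rw [KB_expand] at h7
  simp [Pi.single_apply] at h7
  have h8 : (2:ℤ) ∣ KB δ (Pi.single 8 1) :=
    hdiv _ (by rw [ell_pair]; simp [Pi.single_apply])
  rw [KB_expand] at h8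
  simp [Pi.single_apply] at h8
  have h9 : (2:ℤ) ∣ KB δ (Pi.single 9 1) :=
    hdiv _ (by rw [ell_pair]; simp [Pi.single_apply])
  rw [KB_expand] at h9
  simp [Pi.single_apply] at h9
  have h10 : (2:ℤ) ∣ KB δ (Pi.single 10 1) :=
    hdiv _ (by rw [ell_pair]; simp [Pi.single_apply])
  rw [KB_expand] at h10
  simp [Pi.single_apply] at h10
  have h11 : (2:ℤ) ∣ KB δ (Pi.single 11 1) :=
    hdiv _ (by rw [ell_pair]; simp [Pi.single_apply])
  rw [KB_expand] at h11
  simp [Pi.single_apply] at h11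
  have h12 : (2:ℤ) ∣ KB δ (Pi.single 12 1) :=
    hdiv _ (by rw [ell_pair]; simp [Pi.single_apply])
  rw [KB_expand] at h12
  simp [Pi.single_apply] at h12
  have h13 : (2:ℤ) ∣ KB δ (Pi.single 13 1) :=
    hdiv _ (by rw [ell_pair]; simp [Pi.single_apply])
  rw [KB_expand] at h13
  simp [Pi.single_apply] at h13
  have h14 : (2:ℤ) ∣ KB δ (Pi.single 14 1) :=
    hdiv _ (by rw [ell_pair]; simp [Pi.single_apply])
  rw [KB_expand] at h14
  simp [Pi.single_apply] at h14
  have h15 : (2:ℤ) ∣ KB δ (Pi.single 15 1) :=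
    hdiv _ (by rw [ell_pair]; simp [Pi.single_apply])
  rw [KB_expand] at h15
  simp [Pi.single_apply] at h15
  have h16 : (2:ℤ) ∣ KB δ (Pi.single 16 1) :=
    hdiv _ (by rw [ell_pair]; simp [Pi.single_apply])
  rw [KB_expand] at h16
  simp [Pi.single_apply] at h16
  have h17 : (2:ℤ) ∣ KB δ (Pi.single 17 1) :=
    hdiv _ (by rw [ell_pair]; simp [Pi.single_apply])
  rw [KB_expand] at h17
  simp [Pi.single_apply] at h17
  have h20 : (2:ℤ) ∣ KB δ (Pi.single 20 1) :=
    hdiv _ (by rw [ell_pair]; simp [Pi.single_apply])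
  rw [KB_expand] at h20
  simp [Pi.single_apply] at h20
  have h21 : (2:ℤ) ∣ KB δ (Pi.single 21 1) :=
    hdiv _ (by rw [ell_pair]; simp [Pi.single_apply])
  rw [KB_expand] at h21
  simp [Pi.single_apply] at h21
  have pA : (2:ℤ) ∣ δ 0 ∧ (2:ℤ) ∣ δ 1 ∧ (2:ℤ) ∣ δ 2 ∧ (2:ℤ) ∣ δ 3 ∧ (2:ℤ) ∣ δ 4 ∧ (2:ℤ) ∣ δ 5 ∧ (2:ℤ) ∣ δ 6 ∧ (2:ℤ) ∣ δ 7 := by clear hdiv hmem hmom hd; clear h8 h9 h10 h11 h12 h13 h14 h15 h16 h17 h20 h21; omega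
  have pB : (2:ℤ) ∣ δ 8 ∧ (2:ℤ) ∣ δ 9 ∧ (2:ℤ) ∣ δ 10 ∧ (2:ℤ) ∣ δ 11 ∧ (2:ℤ) ∣ δ 12 ∧ (2:ℤ) ∣ δ 13 ∧ (2:ℤ) ∣ δ 14 ∧ (2:ℤ) ∣ δ 15 := by clear hdiv hmem hmom hd; clear h0 h1 h2 h3 h4 h5 h6 h7 h16 h17 h20 h21; omega
  obtain ⟨p0,p1,p2,p3,p4,p5,p6,p7⟩ := pA
  obtain ⟨p8,p9,p10,p11,p12,p13,p14,p15⟩ := pB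
  obtain ⟨b0, hb0⟩ := p0
  obtain ⟨b1, hb1⟩ := p1
  obtain ⟨b2, hb2⟩ := p2
  obtain ⟨b3, hb3⟩ := p3
  obtain ⟨b4, hb4⟩ := p4
  obtain ⟨b5, hb5⟩ := p5
  obtain ⟨b6, hb6⟩ := p6
  obtain ⟨b7, hb7⟩ := p7
  obtain ⟨b8, hb8⟩ := p8
  obtain ⟨b9, hb9⟩ := p9
  obtain ⟨b10, hb10⟩ := p10
  obtain ⟨b11, hb11⟩ := p11
  obtain ⟨b12, hb12⟩ := p12
  obtain ⟨b13, hb13⟩ := p13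
  obtain ⟨b14, hb14⟩ := p14
  obtain ⟨b15, hb15⟩ := p15
  obtain ⟨b16, hb16⟩ := h17
  obtain ⟨b17, hb17⟩ := h16
  obtain ⟨b20, hb20⟩ := h21
  obtain ⟨b21, hb21⟩ := h20
  rw [KB_expand] at hsq
  rw [hb0, hb1, hb2, hb3, hb4, hb5, hb6, hb7, hb8, hb9, hb10, hb11, hb12, hb13, hb14, hb15, hb16, hb17, hb20, hb21, hmom] at hsq
  rcases Int.even_or_odd (δ 18) with ⟨t, ht⟩ | ⟨t, ht⟩
  · rw [ht] at hsq
    have hW : ∃ W : ℤ, 8 * W = -2 :=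
      ⟨(-(b0*b0 + b1*b1 + b2*b2 + b3*b3 + b4*b4 + b5*b5 + b6*b6 + b7*b7) + (b0*b2 + b1*b3 + b2*b3 + b3*b4 + b4*b5 + b5*b6 + b6*b7) + (-(b8*b8 + b9*b9 + b10*b10 + b11*b11 + b12*b12 + b13*b13 + b14*b14 + b15*b15)) + (b8*b10 + b9*b11 + b10*b11 + b11*b12 + b12*b13 + b13*b14 + b14*b15) + b16*b17 + b20*b21) - e * (t*t), by linear_combination hsq⟩
    obtain ⟨W, hW⟩ := hW
    omega
  · rw [ht] at hsq
    have hK : ∃ K : ℤ, 2 * e = 8 * K + 2 :=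
      ⟨(-(b0*b0 + b1*b1 + b2*b2 + b3*b3 + b4*b4 + b5*b5 + b6*b6 + b7*b7) + (b0*b2 + b1*b3 + b2*b3 + b3*b4 + b4*b5 + b5*b6 + b6*b7) + (-(b8*b8 + b9*b9 + b10*b10 + b11*b11 + b12*b12 + b13*b13 + b14*b14 + b15*b15)) + (b8*b10 + b9*b11 + b10*b11 + b11*b12 + b12*b13 + b13*b14 + b14*b15) + b16*b17 + b20*b21) - e * (t*t + t), by linear_combination -hsq⟩
    obtain ⟨K, hK⟩ := hK
    omega
end

section
/- Let d be a positive even integer with d ≡ 2 (mod 8). Then the set Δ_d := {δ ∈ Λ_d : (δ.δ) = −2} decomposes into exactly two orbits under the group of ℤ-linear isometries g : Λ → Λ with g(ℓ) = ℓ (acting on Λ_d by restriction); representatives of the two orbits are δ₀ := e₁ − f₁ and δ₁ := 2e₁ + ((d/2 − 1)/2)f₁ + e₂ − (d/2)f₂. -/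
open scoped BigOperators

/-- `δ₀ = e₁ - f₁`. -/
def del0 : Fin 22 → ℤ := Pi.single 16 1 - Pi.single 17 1

/-- `δ₁ = 2e₁ + ((d/2 - 1)/2) f₁ + e₂ - (d/2) f₂`. -/
def del1 (d : ℤ) : Fin 22 → ℤ :=
  (2 : ℤ) • Pi.single 16 1 + ((d / 2 - 1) / 2) • Pi.single 17 1 +
    Pi.single 18 1 - (d / 2) • Pi.single 19 1

abbrev V := Fin 22 → ℤ

namespace K3

lemma gram_symm : ∀ i j : Fin 22, gramK i j = gramK j i := by decide

lemma KB_add_left (x y z : V) : KB (x + y) z = KB x z + KB y z := by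
  unfold KB
  rw [← Finset.sum_add_distrib]
  refine Finset.sum_congr rfl fun i _ => ?_
  rw [← Finset.sum_add_distrib]
  refine Finset.sum_congr rfl fun j _ => ?_
  simp only [Pi.add_apply]; ring

lemma KB_add_right (x y z : V) : KB x (y + z) = KB x y + KB x z := by
  unfold KB
  rw [← Finset.sum_add_distrib]
  refine Finset.sum_congr rfl fun i _ => ?_
  rw [← Finset.sum_add_distrib]
  refine Finset.sum_congr rfl fun j _ => ?_
  simp only [Pi.add_apply]; ring

lemma KB_smul_left (k : ℤ) (x z : V) : KB (k • x) z = k * KB x z := by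
  unfold KB
  rw [Finset.mul_sum]
  refine Finset.sum_congr rfl fun i _ => ?_
  rw [Finset.mul_sum]
  refine Finset.sum_congr rfl fun j _ => ?_
  simp only [Pi.smul_apply, smul_eq_mul]; ring

lemma KB_smul_right (k : ℤ) (x z : V) : KB x (k • z) = k * KB x z := by
  unfold KB
  rw [Finset.mul_sum]
  refine Finset.sum_congr rfl fun i _ => ?_
  rw [Finset.mul_sum]
  refine Finset.sum_congr rfl fun j _ => ?_
  simp only [Pi.smul_apply, smul_eq_mul]; ring

lemma KB_neg_left (x z : V) : KB (-x) z = - KB x z := by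
  have := KB_smul_left (-1) x z; simpa using this

lemma KB_neg_right (x z : V) : KB x (-z) = - KB x z := by
  have := KB_smul_right (-1) x z; simpa using this

lemma KB_sub_left (x y z : V) : KB (x - y) z = KB x z - KB y z := by
  rw [sub_eq_add_neg, KB_add_left, KB_neg_left]; ring

lemma KB_sub_right (x y z : V) : KB x (y - z) = KB x y - KB x z := by
  rw [sub_eq_add_neg, KB_add_right, KB_neg_right]; ring

lemma KB_comm (x y : V) : KB x y = KB y x := by
  unfold KB
  rw [Finset.sum_comm]
  refine Finset.sum_congr rfl fun i _ => ?_
  refine Finset.sum_congr rfl fun j _ => ?_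
  rw [gram_symm]; ring

lemma KB_single_right (x : V) (j : Fin 22) :
    KB x (Pi.single j 1) = ∑ i, gramK i j * x i := by
  unfold KB
  refine Finset.sum_congr rfl fun i _ => ?_
  rw [Finset.sum_eq_single j]
  · simp
  · intro b _ hb
    simp [Pi.single_apply, hb]
  · simp

end K3

namespace K3

-- concrete pairing lemmas
lemma KB_s16 (x : V) : KB x (Pi.single 16 1) = x 17 := by
  rw [KB_single_right, Finset.sum_eq_single 17]
  · have : gramK 17 16 = 1 := by decide
    rw [this]; ring
  · have h : ∀ i : Fin 22, i ≠ 17 → gramK i 16 = 0 := by decide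
    intro b _ hb; rw [h b hb]; ring
  · simp

lemma KB_s17 (x : V) : KB x (Pi.single 17 1) = x 16 := by
  rw [KB_single_right, Finset.sum_eq_single 16]
  · have : gramK 16 17 = 1 := by decide
    rw [this]; ring
  · have h : ∀ i : Fin 22, i ≠ 16 → gramK i 17 = 0 := by decide
    intro b _ hb; rw [h b hb]; ring
  · simp

lemma KB_s18 (x : V) : KB x (Pi.single 18 1) = x 19 := by
  rw [KB_single_right, Finset.sum_eq_single 19]
  · have : gramK 19 18 = 1 := by decide
    rw [this]; ring
  · have h : ∀ i : Fin 22, i ≠ 19 → gramK i 18 = 0 := by decide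
    intro b _ hb; rw [h b hb]; ring
  · simp

lemma KB_s19 (x : V) : KB x (Pi.single 19 1) = x 18 := by
  rw [KB_single_right, Finset.sum_eq_single 18]
  · have : gramK 18 19 = 1 := by decide
    rw [this]; ring
  · have h : ∀ i : Fin 22, i ≠ 18 → gramK i 19 = 0 := by decide
    intro b _ hb; rw [h b hb]; ring
  · simp

lemma KB_s20 (x : V) : KB x (Pi.single 20 1) = x 21 := by
  rw [KB_single_right, Finset.sum_eq_single 21]
  · have : gramK 21 20 = 1 := by decide
    rw [this]; ring
  · have h : ∀ i : Fin 22, i ≠ 21 → gramK i 20 = 0 := by decide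
    intro b _ hb; rw [h b hb]; ring
  · simp

lemma KB_s21 (x : V) : KB x (Pi.single 21 1) = x 20 := by
  rw [KB_single_right, Finset.sum_eq_single 20]
  · have : gramK 20 21 = 1 := by decide
    rw [this]; ring
  · have h : ∀ i : Fin 22, i ≠ 20 → gramK i 21 = 0 := by decide
    intro b _ hb; rw [h b hb]; ring
  · simp

-- the transvection
def tau (e a : V) (m : ℤ) : V → V :=
  fun x => x + KB x e • a - (KB x a + m * KB x e) • e

def tauL (e a : V) (m : ℤ) : V →ₗ[ℤ] V where
  toFun := tau e a m
  map_add' x y := by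
    simp only [tau, KB_add_left]
    module
  map_smul' k x := by
    simp only [tau, KB_smul_left, RingHom.id_apply, smul_eq_mul]
    module

section TauFacts

variable {e a : V} {m : ℤ}

lemma tau_tau (he : KB e e = 0) (hae : KB a e = 0) (ham : KB a a = 2 * m) (x : V) :
    tau e a m (tau e (-a) m x) = x := by
  have hea : KB e a = 0 := by rw [KB_comm]; exact hae
  have hna : KB (-a) e = 0 := by rw [KB_neg_left, hae]; ring
  simp only [tau, KB_sub_left, KB_add_left, KB_smul_left, he, hae, hea, ham,
    KB_neg_left, KB_neg_right]
  ring_nf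

end TauFacts

end K3

namespace K3

section TauFacts2

variable (e a : V) (m : ℤ)

lemma tau_isom (he : KB e e = 0) (hae : KB a e = 0) (ham : KB a a = 2 * m) (x y : V) :
    KB (tau e a m x) (tau e a m y) = KB x y := by
  have hea : KB e a = 0 := by rw [KB_comm]; exact hae
  have hxy : ∀ z w : V, KB z w = KB w z := KB_comm
  simp only [tau, KB_add_left, KB_add_right, KB_sub_left, KB_sub_right,
    KB_smul_left, KB_smul_right, he, hae, hea, ham]
  rw [hxy e y, hxy a y]
  ring

def tauE (he : KB e e = 0) (hae : KB a e = 0) (ham : KB a a = 2 * m) : V ≃ₗ[ℤ] V :=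
  LinearEquiv.ofLinear (tauL e a m) (tauL e (-a) m)
    (LinearMap.ext fun x => tau_tau he hae ham x)
    (LinearMap.ext fun x => by
      have h2 : KB (-a) (-a) = 2 * m := by rw [KB_neg_left, KB_neg_right, ham]; ring
      have h3 : KB (-a) e = 0 := by rw [KB_neg_left, hae]; ring
      have hne : -(-a) = a := by ring
      have := tau_tau (e := e) (a := -a) (m := m) he h3 h2 x
      rw [hne] at this
      exact this)

lemma tauE_isom (he : KB e e = 0) (hae : KB a e = 0) (ham : KB a a = 2 * m) :
    IsIsomK (tauE e a m he hae ham) := by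
  intro x y
  have : (tauE e a m he hae ham) x = tau e a m x := rfl
  have : (tauE e a m he hae ham) y = tau e a m y := rfl
  exact tau_isom e a m he hae ham x y

lemma tauE_apply (he : KB e e = 0) (hae : KB a e = 0) (ham : KB a a = 2 * m) (x : V) :
    (tauE e a m he hae ham) x = tau e a m x := rfl

lemma tau_fix (he : KB e e = 0) (hae : KB a e = 0) (ham : KB a a = 2 * m)
    {z : V} (hz1 : KB z e = 0) (hz2 : KB z a = 0) : tau e a m z = z := by
  simp [tau, hz1, hz2]

end TauFacts2

/-- the reachability relation -/
def Rel (d : ℤ) (x y : V) : Prop :=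
  ∃ g : V ≃ₗ[ℤ] V, IsIsomK g ∧ g (ell d) = ell d ∧ g x = y

lemma Rel.refl (d : ℤ) (x : V) : Rel d x x :=
  ⟨LinearEquiv.refl ℤ V, fun _ _ => rfl, rfl, rfl⟩

lemma Rel.trans {d : ℤ} {x y z : V} (h1 : Rel d x y) (h2 : Rel d y z) : Rel d x z := by
  obtain ⟨g, hg, hgl, hgx⟩ := h1
  obtain ⟨g', hg', hgl', hgy⟩ := h2
  refine ⟨g.trans g', fun u v => ?_, ?_, ?_⟩
  · simpa [LinearEquiv.trans_apply] using (hg' (g u) (g v)).trans (hg u v)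
  · simp [LinearEquiv.trans_apply, hgl, hgl']
  · simp [LinearEquiv.trans_apply, hgx, hgy]

lemma Rel.symm {d : ℤ} {x y : V} (h : Rel d x y) : Rel d y x := by
  obtain ⟨g, hg, hgl, hgx⟩ := h
  refine ⟨g.symm, fun u v => ?_, ?_, ?_⟩
  · conv_rhs => rw [← g.apply_symm_apply u, ← g.apply_symm_apply v]
    exact (hg _ _).symm
  · conv_lhs => rw [← hgl]
    exact g.symm_apply_apply _
  · conv_lhs => rw [← hgx]
    exact g.symm_apply_apply _

lemma Rel.norm {d : ℤ} {x y : V} (h : Rel d x y) : KB y y = KB x x := by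
  obtain ⟨g, hg, _, hgx⟩ := h; rw [← hgx]; exact hg x x

lemma Rel.perp {d : ℤ} {x y : V} (h : Rel d x y) (hx : KB (ell d) x = 0) :
    KB (ell d) y = 0 := by
  obtain ⟨g, hg, hgl, hgx⟩ := h
  rw [← hgx, ← hgl, hg]; exact hx

lemma rel_tau {d : ℤ} (e a : V) (m : ℤ) (he : KB e e = 0) (hae : KB a e = 0)
    (ham : KB a a = 2 * m) (hle : KB (ell d) e = 0) (hla : KB (ell d) a = 0) (x : V) :
    Rel d x (tau e a m x) := by
  refine ⟨tauE e a m he hae ham, tauE_isom e a m he hae ham, ?_, rfl⟩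
  rw [tauE_apply]
  exact tau_fix e a m he hae ham hle hla

end K3

namespace K3

section Perm

variable (σ : Equiv.Perm (Fin 22))

def permE : V ≃ₗ[ℤ] V := LinearEquiv.funCongrLeft ℤ ℤ σ

lemma permE_apply (x : V) (i : Fin 22) : (permE σ) x i = x (σ i) := rfl

lemma permE_isom (hσ : ∀ i j, gramK (σ i) (σ j) = gramK i j) : IsIsomK (permE σ) := by
  intro x y
  show (∑ i, ∑ j, gramK i j * x (σ i) * y (σ j)) = ∑ i, ∑ j, gramK i j * x i * y j
  conv_rhs => rw [← Equiv.sum_comp σ (fun i => ∑ j, gramK i j * x i * y j)]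
  refine Finset.sum_congr rfl fun i _ => ?_
  conv_rhs => rw [← Equiv.sum_comp σ (fun j => gramK (σ i) j * x (σ i) * y j)]
  refine Finset.sum_congr rfl fun j _ => ?_
  rw [hσ]

end Perm

end K3

namespace K3

def E1 : V := Pi.single 16 1
def F1 : V := Pi.single 17 1
def E3 : V := Pi.single 20 1
def F3 : V := Pi.single 21 1
def Lp (d : ℤ) : V := Pi.single 18 1 - (d / 2) • Pi.single 19 1

lemma KB_E1 (x : V) : KB x E1 = x 17 := KB_s16 x
lemma KB_F1 (x : V) : KB x F1 = x 16 := KB_s17 x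
lemma KB_E3 (x : V) : KB x E3 = x 21 := KB_s20 x
lemma KB_F3 (x : V) : KB x F3 = x 20 := KB_s21 x
lemma KB_Lp (d : ℤ) (x : V) : KB x (Lp d) = x 19 - d / 2 * x 18 := by
  unfold Lp
  rw [KB_sub_right, KB_smul_right, KB_s18, KB_s19]

lemma ell_apply (d : ℤ) (i : Fin 22) :
    ell d i = if i = 18 then 1 else if i = 19 then d / 2 else 0 := by
  unfold ell
  rw [Pi.add_apply, Pi.smul_apply, smul_eq_mul, Pi.single_apply, Pi.single_apply]
  by_cases h18 : i = 18 <;> by_cases h19 : i = 19 <;> simp_all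

lemma KB_ell (d : ℤ) (x : V) : KB (ell d) x = x 19 + d / 2 * x 18 := by
  rw [KB_comm]
  show KB x (Pi.single 18 1 + (d / 2) • Pi.single 19 1) = _
  rw [KB_add_right, KB_smul_right, KB_s18, KB_s19]

-- evenness of the form
lemma gram_diag_even : ∀ i : Fin 22, (2 : ℤ) ∣ gramK i i := by decide

lemma KB_self_even (x : V) : (2 : ℤ) ∣ KB x x := by
  have hcast : ((KB x x : ℤ) : ZMod 2) = 0 := by
    unfold KB
    push_cast
    rw [← Finset.sum_product']
    rw [← Finset.diag_union_offDiag (Finset.univ : Finset (Fin 22)),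
      Finset.sum_union (Finset.disjoint_diag_offDiag _)]
    have h1 : ∑ p ∈ (Finset.univ : Finset (Fin 22)).diag,
        ((gramK p.1 p.2 : ZMod 2) * (x p.1 : ZMod 2) * (x p.2 : ZMod 2)) = 0 := by
      rw [Finset.sum_diag]
      refine Finset.sum_eq_zero fun i _ => ?_
      have : (gramK i i : ZMod 2) = 0 := by
        have := gram_diag_even i
        exact_mod_cast (ZMod.intCast_zmod_eq_zero_iff_dvd _ 2).2 this
      rw [this]; ring
    have h2 : ∑ p ∈ (Finset.univ : Finset (Fin 22)).offDiag,
        ((gramK p.1 p.2 : ZMod 2) * (x p.1 : ZMod 2) * (x p.2 : ZMod 2)) = 0 := by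
      refine Finset.sum_involution (fun p _ => Prod.swap p) ?_ ?_ ?_ ?_
      · intro p _
        have hsy : gramK p.2 p.1 = gramK p.1 p.2 := gram_symm _ _
        show (gramK p.1 p.2 : ZMod 2) * _ * _ + (gramK p.2 p.1 : ZMod 2) * _ * _ = 0
        rw [hsy]
        have hcc : ∀ c : ZMod 2, c + c = 0 := by decide
        rw [mul_right_comm]
        exact hcc _
      · intro p hp _
        have hne : p.1 ≠ p.2 := (Finset.mem_offDiag.1 hp).2.2
        intro hsw
        have := congrArg Prod.fst hsw
        exact hne this.symm
      · intro p hp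
        have h := Finset.mem_offDiag.1 hp
        exact Finset.mem_offDiag.2 ⟨h.2.1, h.1, fun hh => h.2.2 hh.symm⟩
      · intro p _; rfl
    rw [h1, h2]; ring
  exact (ZMod.intCast_zmod_eq_zero_iff_dvd _ 2).1 hcast

end K3

namespace K3

variable {d : ℤ}

@[simp] lemma ell_16 : ell d 16 = 0 := by rw [ell_apply, if_neg (by decide), if_neg (by decide)]
@[simp] lemma ell_17 : ell d 17 = 0 := by rw [ell_apply, if_neg (by decide), if_neg (by decide)]
@[simp] lemma ell_18 : ell d 18 = 1 := by rw [ell_apply, if_pos rfl]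
@[simp] lemma ell_19 : ell d 19 = d / 2 := by
  rw [ell_apply, if_neg (by decide), if_pos rfl]
@[simp] lemma ell_20 : ell d 20 = 0 := by rw [ell_apply, if_neg (by decide), if_neg (by decide)]
@[simp] lemma ell_21 : ell d 21 = 0 := by rw [ell_apply, if_neg (by decide), if_neg (by decide)]

lemma Lp_apply (i : Fin 22) :
    Lp d i = if i = 18 then 1 else if i = 19 then -(d / 2) else 0 := by
  unfold Lp
  rw [Pi.sub_apply, Pi.smul_apply, smul_eq_mul, Pi.single_apply, Pi.single_apply]
  by_cases h18 : i = 18 <;> by_cases h19 : i = 19 <;> simp_all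

-- permutation isometries fixing ell
lemma rel_perm (σ : Equiv.Perm (Fin 22)) (hσ : ∀ i j, gramK (σ i) (σ j) = gramK i j)
    (h18 : σ 18 = 18) (h19 : σ 19 = 19) (x : V) :
    Rel d x ((permE σ) x) := by
  refine ⟨permE σ, permE_isom σ hσ, ?_, rfl⟩
  funext i
  rw [permE_apply, ell_apply, ell_apply]
  by_cases hi18 : i = 18
  · subst hi18; rw [h18]
  by_cases hi19 : i = 19
  · subst hi19; rw [h19]
  have hs18 : σ i ≠ 18 := fun h => hi18 (by
    have := congrArg σ.symm h
    rw [Equiv.symm_apply_apply] at this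
    rw [this, ← congrArg σ.symm h18, Equiv.symm_apply_apply])
  have hs19 : σ i ≠ 19 := fun h => hi19 (by
    have := congrArg σ.symm h
    rw [Equiv.symm_apply_apply] at this
    rw [this, ← congrArg σ.symm h19, Equiv.symm_apply_apply])
  rw [if_neg hs18, if_neg hs19, if_neg hi18, if_neg hi19]

lemma rel_swapU1 (x : V) : Rel d x ((permE (Equiv.swap 16 17)) x) :=
  rel_perm _ (by decide) (by decide) (by decide) x

lemma rel_swapU3 (x : V) : Rel d x ((permE (Equiv.swap 20 21)) x) :=
  rel_perm _ (by decide) (by decide) (by decide) x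

@[simp] lemma swapU1_apply (x : V) (i : Fin 22) :
    (permE (Equiv.swap 16 17)) x i = x (Equiv.swap (16:Fin 22) 17 i) := rfl

-- sign change on U1
def sgn1 : V := fun i => if i = 16 ∨ i = 17 then -1 else 1

def negU1 : V ≃ₗ[ℤ] V where
  toFun x := sgn1 * x
  invFun x := sgn1 * x
  left_inv x := by
    funext i
    show sgn1 i * (sgn1 i * x i) = x i
    have : sgn1 i * sgn1 i = 1 := by unfold sgn1; split <;> norm_num
    rw [← mul_assoc, this, one_mul]
  right_inv x := by
    funext i
    show sgn1 i * (sgn1 i * x i) = x i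
    have : sgn1 i * sgn1 i = 1 := by unfold sgn1; split <;> norm_num
    rw [← mul_assoc, this, one_mul]
  map_add' x y := by funext i; show sgn1 i * (x i + y i) = _; simp [mul_add]
  map_smul' k x := by funext i; show sgn1 i * (k * x i) = k * (sgn1 i * x i); ring

lemma negU1_isom : IsIsomK negU1 := by
  intro x y
  show (∑ i, ∑ j, gramK i j * (sgn1 * x) i * (sgn1 * y) j) = _
  have hs : ∀ i j, gramK i j * sgn1 i * sgn1 j = gramK i j := by decide
  unfold KB
  refine Finset.sum_congr rfl fun i _ => Finset.sum_congr rfl fun j _ => ?_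
  show gramK i j * (sgn1 i * x i) * (sgn1 j * y j) = _
  calc gramK i j * (sgn1 i * x i) * (sgn1 j * y j)
      = (gramK i j * sgn1 i * sgn1 j) * x i * y j := by ring
    _ = gramK i j * x i * y j := by rw [hs]

lemma rel_negU1 (x : V) : Rel d x (negU1 x) := by
  refine ⟨negU1, negU1_isom, ?_, rfl⟩
  show sgn1 * ell d = ell d
  funext i
  show sgn1 i * ell d i = ell d i
  by_cases h : i = 16 ∨ i = 17
  · rcases h with h | h <;> subst h <;> simp
  · have : sgn1 i = 1 := by unfold sgn1; rw [if_neg h]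
    rw [this, one_mul]

@[simp] lemma negU1_apply (x : V) (i : Fin 22) :
    negU1 x i = (if i = 16 ∨ i = 17 then -1 else 1) * x i := rfl

end K3

namespace K3

-- inverse of the E8 gram block, for unimodularity
def NE8 : Matrix (Fin 8) (Fin 8) ℤ :=
  !![-4, -5, -7, -10, -8, -6, -4, -2;
     -5, -8, -10, -15, -12, -9, -6, -3;
     -7, -10, -14, -20, -16, -12, -8, -4;
     -10, -15, -20, -30, -24, -18, -12, -6;
     -8, -12, -16, -24, -20, -15, -10, -5;
     -6, -9, -12, -18, -15, -12, -8, -4;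
     -4, -6, -8, -12, -10, -8, -6, -3;
     -2, -3, -4, -6, -5, -4, -3, -2]

def N22 : Fin 22 → Fin 22 → ℤ := fun i j =>
  if i.val < 8 ∧ j.val < 8 then
    NE8 ⟨i.val % 8, Nat.mod_lt _ (by norm_num)⟩ ⟨j.val % 8, Nat.mod_lt _ (by norm_num)⟩
  else if 8 ≤ i.val ∧ i.val < 16 ∧ 8 ≤ j.val ∧ j.val < 16 then
    NE8 ⟨(i.val - 8) % 8, Nat.mod_lt _ (by norm_num)⟩ ⟨(j.val - 8) % 8, Nat.mod_lt _ (by norm_num)⟩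
  else 0

lemma N22_inv : ∀ i k : Fin 22, i.val < 16 →
    (∑ j, N22 i j * gramK k j) = if k = i then (1:ℤ) else 0 := by decide

lemma N22_right_zero : ∀ i j : Fin 22, ¬ j.val < 16 → N22 i j = 0 := by decide

lemma e8_dvd (B : ℤ) (x : V) (h : ∀ j : Fin 22, j.val < 16 → B ∣ KB x (Pi.single j 1)) :
    ∀ i : Fin 22, i.val < 16 → B ∣ x i := by
  intro i hi
  have hx : x i = ∑ j, N22 i j * KB x (Pi.single j 1) := by
    have step1 : x i = ∑ k, (if k = i then (1:ℤ) else 0) * x k := by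
      rw [Finset.sum_congr rfl (fun k (_ : k ∈ Finset.univ) => ite_mul (k = i) 1 0 (x k))]
      simp
    rw [step1]
    calc ∑ k, (if k = i then (1:ℤ) else 0) * x k
        = ∑ k, (∑ j, N22 i j * gramK k j) * x k := by
          refine Finset.sum_congr rfl fun k _ => ?_
          rw [N22_inv i k hi]
      _ = ∑ k, ∑ j, N22 i j * gramK k j * x k := by
          refine Finset.sum_congr rfl fun k _ => ?_
          rw [Finset.sum_mul]
      _ = ∑ j, ∑ k, N22 i j * gramK k j * x k := Finset.sum_comm
      _ = ∑ j, N22 i j * KB x (Pi.single j 1) := by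
          refine Finset.sum_congr rfl fun j _ => ?_
          rw [KB_single_right, Finset.mul_sum]
          refine Finset.sum_congr rfl fun k _ => ?_
          ring
  rw [hx]
  refine Finset.dvd_sum fun j _ => ?_
  by_cases hj : j.val < 16
  · exact Dvd.dvd.mul_left (h j hj) _
  · rw [N22_right_zero i j hj, zero_mul]
    exact dvd_zero B

end K3

namespace K3

variable {d : ℤ}

lemma rel_mvPB (k : ℤ) (x : V) : Rel d x (x + (k * x 21) • E1 - (k * x 17) • E3) := by
  have h := rel_tau (d := d) E3 (k • E1) 0
    (by rw [KB_E3]; decide)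
    (by rw [KB_smul_left, KB_E3]; simp [show E1 21 = (0:ℤ) from by decide])
    (by rw [KB_smul_left, KB_smul_right, KB_E1]
        simp [show E1 17 = (0:ℤ) from by decide])
    (by rw [KB_E3]; simp)
    (by rw [KB_smul_right, KB_E1]; simp) x
  have he : tau E3 (k • E1) 0 x = x + (k * x 21) • E1 - (k * x 17) • E3 := by
    unfold tau
    rw [KB_E3, KB_smul_right, KB_E1]
    module
  rwa [he] at h

lemma rel_mvQB (k : ℤ) (x : V) : Rel d x (x + (k * x 20) • E1 - (k * x 17) • F3) := by
  have h := rel_tau (d := d) F3 (k • E1) 0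
    (by rw [KB_F3]; decide)
    (by rw [KB_smul_left, KB_F3]; simp [show E1 20 = (0:ℤ) from by decide])
    (by rw [KB_smul_left, KB_smul_right, KB_E1]
        simp [show E1 17 = (0:ℤ) from by decide])
    (by rw [KB_F3]; simp)
    (by rw [KB_smul_right, KB_E1]; simp) x
  have he : tau F3 (k • E1) 0 x = x + (k * x 20) • E1 - (k * x 17) • F3 := by
    unfold tau
    rw [KB_F3, KB_smul_right, KB_E1]
    module
  rwa [he] at h

lemma rel_mvBP (k : ℤ) (x : V) : Rel d x (x + (k * x 20) • F1 - (k * x 16) • F3) := by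
  have h := rel_tau (d := d) F3 (k • F1) 0
    (by rw [KB_F3]; decide)
    (by rw [KB_smul_left, KB_F3]; simp [show F1 20 = (0:ℤ) from by decide])
    (by rw [KB_smul_left, KB_smul_right, KB_F1]
        simp [show F1 16 = (0:ℤ) from by decide])
    (by rw [KB_F3]; simp)
    (by rw [KB_smul_right, KB_F1]; simp) x
  have he : tau F3 (k • F1) 0 x = x + (k * x 20) • F1 - (k * x 16) • F3 := by
    unfold tau
    rw [KB_F3, KB_smul_right, KB_F1]
    module
  rwa [he] at h

lemma rel_mvBQ (k : ℤ) (x : V) : Rel d x (x + (k * x 21) • F1 - (k * x 16) • E3) := by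
  have h := rel_tau (d := d) E3 (k • F1) 0
    (by rw [KB_E3]; decide)
    (by rw [KB_smul_left, KB_E3]; simp [show F1 21 = (0:ℤ) from by decide])
    (by rw [KB_smul_left, KB_smul_right, KB_F1]
        simp [show F1 16 = (0:ℤ) from by decide])
    (by rw [KB_E3]; simp)
    (by rw [KB_smul_right, KB_F1]; simp) x
  have he : tau E3 (k • F1) 0 x = x + (k * x 21) • F1 - (k * x 16) • E3 := by
    unfold tau
    rw [KB_E3, KB_smul_right, KB_F1]
    module
  rwa [he] at h

lemma rel_mvAE8 (w : V) (m : ℤ) (h17 : w 17 = 0) (h18 : w 18 = 0) (h19 : w 19 = 0)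
    (hm : KB w w = 2 * m) (x : V) :
    Rel d x (x + x 17 • w - (KB x w + m * x 17) • E1) := by
  have h := rel_tau (d := d) E1 w m
    (by rw [KB_E1]; decide)
    (by rw [KB_E1]; exact h17)
    hm
    (by rw [KB_E1]; simp)
    (by rw [KB_ell, h18, h19]; ring) x
  have he : tau E1 w m x = x + x 17 • w - (KB x w + m * x 17) • E1 := by
    unfold tau
    rw [KB_E1]
  rwa [he] at h

lemma rel_mvAL (heven : 2 ∣ d) (k : ℤ) (x : V) :
    Rel d x (x + (k * x 17) • Lp d -
      (k * (x 19 - d / 2 * x 18) - d / 2 * k * k * x 17) • E1) := by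
  have hd2 : 2 * (d / 2) = d := by omega
  have hLL : KB (Lp d) (Lp d) = -d := by
    rw [KB_Lp, Lp_apply, Lp_apply, if_neg (by decide), if_pos rfl, if_pos rfl]
    omega
  have h := rel_tau (d := d) E1 (k • Lp d) (-(d / 2) * k * k)
    (by rw [KB_E1]; decide)
    (by rw [KB_smul_left, KB_E1, Lp_apply, if_neg (by decide), if_neg (by decide)]; ring)
    (by obtain ⟨c, hc⟩ := heven
        have hc2 : d / 2 = c := by omega
        rw [KB_smul_left, KB_smul_right, hLL, hc2, hc]; ring)
    (by rw [KB_E1]; simp)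
    (by rw [KB_smul_right, KB_ell, Lp_apply, Lp_apply,
          if_neg (by decide), if_pos rfl, if_pos rfl]; ring) x
  have he : tau E1 (k • Lp d) (-(d / 2) * k * k) x
      = x + (k * x 17) • Lp d - (k * (x 19 - d / 2 * x 18) - d / 2 * k * k * x 17) • E1 := by
    unfold tau
    rw [KB_E1, KB_smul_right, KB_Lp]
    module
  rwa [he] at h

lemma rel_mvBL (heven : 2 ∣ d) (k : ℤ) (x : V) :
    Rel d x (x + (k * x 16) • Lp d -
      (k * (x 19 - d / 2 * x 18) - d / 2 * k * k * x 16) • F1) := by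
  have hLL : KB (Lp d) (Lp d) = -d := by
    rw [KB_Lp, Lp_apply, Lp_apply, if_neg (by decide), if_pos rfl, if_pos rfl]
    omega
  have h := rel_tau (d := d) F1 (k • Lp d) (-(d / 2) * k * k)
    (by rw [KB_F1]; decide)
    (by rw [KB_smul_left, KB_F1, Lp_apply, if_neg (by decide), if_neg (by decide)]; ring)
    (by obtain ⟨c, hc⟩ := heven
        have hc2 : d / 2 = c := by omega
        rw [KB_smul_left, KB_smul_right, hLL, hc2, hc]; ring)
    (by rw [KB_F1]; simp)
    (by rw [KB_smul_right, KB_ell, Lp_apply, Lp_apply,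
          if_neg (by decide), if_pos rfl, if_pos rfl]; ring) x
  have he : tau F1 (k • Lp d) (-(d / 2) * k * k) x
      = x + (k * x 16) • Lp d - (k * (x 19 - d / 2 * x 18) - d / 2 * k * k * x 16) • F1 := by
    unfold tau
    rw [KB_F1, KB_smul_right, KB_Lp]
    module
  rwa [he] at h

end K3

namespace K3

variable {d : ℤ}

@[simp] lemma E1_apply (i : Fin 22) : E1 i = if i = 16 then 1 else 0 := Pi.single_apply _ _ _
@[simp] lemma F1_apply (i : Fin 22) : F1 i = if i = 17 then 1 else 0 := Pi.single_apply _ _ _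
@[simp] lemma E3_apply (i : Fin 22) : E3 i = if i = 20 then 1 else 0 := Pi.single_apply _ _ _
@[simp] lemma F3_apply (i : Fin 22) : F3 i = if i = 21 then 1 else 0 := Pi.single_apply _ _ _

lemma KB_single_single (i j : Fin 22) :
    KB (Pi.single i 1) (Pi.single j 1) = gramK i j := by
  rw [KB_single_right, Finset.sum_eq_single i]
  · rw [Pi.single_eq_same, mul_one]
  · intro b _ hb
    rw [Pi.single_eq_of_ne hb, mul_zero]
  · simp

-- the form restricted to coordinates 16-19
lemma KB_four (x : V) (h : ∀ i : Fin 22, i ≠ 16 → i ≠ 17 → i ≠ 18 → i ≠ 19 → x i = 0) :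
    KB x x = 2 * (x 16 * x 17) + 2 * (x 18 * x 19) := by
  have hx : x = x 16 • E1 + x 17 • F1 + x 18 • (Pi.single 18 1 : V)
      + x 19 • (Pi.single 19 1 : V) := by
    funext i
    simp only [Pi.add_apply, Pi.smul_apply, smul_eq_mul, E1_apply, F1_apply, Pi.single_apply]
    by_cases h16 : i = 16
    · subst h16; simp
    by_cases h17 : i = 17
    · subst h17; simp
    by_cases h18 : i = 18
    · subst h18; simp
    by_cases h19 : i = 19
    · subst h19; simp
    rw [h i h16 h17 h18 h19]
    simp [h16, h17, h18, h19]
  conv_lhs => rw [hx]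
  simp only [KB_add_right, KB_smul_right, KB_E1, KB_F1, KB_s18, KB_s19]
  simp [Pi.single_apply]
  ring

end K3

namespace K3

variable {d : ℤ}

lemma del0_apply (i : Fin 22) :
    del0 i = if i = 16 then 1 else if i = 17 then -1 else 0 := by
  unfold del0
  rw [Pi.sub_apply, Pi.single_apply, Pi.single_apply]
  by_cases h16 : i = 16 <;> by_cases h17 : i = 17 <;> simp_all

lemma del1_apply (i : Fin 22) :
    del1 d i = if i = 16 then 2 else if i = 17 then (d / 2 - 1) / 2 else
      if i = 18 then 1 else if i = 19 then -(d / 2) else 0 := by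
  unfold del1
  rw [Pi.sub_apply, Pi.add_apply, Pi.add_apply, Pi.smul_apply, Pi.smul_apply, Pi.smul_apply,
    smul_eq_mul, smul_eq_mul, smul_eq_mul, Pi.single_apply, Pi.single_apply, Pi.single_apply,
    Pi.single_apply]
  by_cases h16 : i = 16 <;> by_cases h17 : i = 17 <;> by_cases h18 : i = 18 <;>
    by_cases h19 : i = 19 <;> simp_all

lemma part1 : KB (ell d) del0 = 0 ∧ KB del0 del0 = -2 := by
  constructor
  · show KB (ell d) (Pi.single 16 1 - Pi.single 17 1) = 0
    rw [KB_sub_right, KB_s16, KB_s17, ell_17, ell_16]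
    ring
  · show KB del0 (Pi.single 16 1 - Pi.single 17 1) = -2
    rw [KB_sub_right, KB_s16, KB_s17, del0_apply, del0_apply]
    decide

lemma part2 (h8 : d % 8 = 2) :
    KB (ell d) (del1 d) = 0 ∧ KB (del1 d) (del1 d) = -2 := by
  have expand : ∀ x : V, KB x (del1 d)
      = 2 * x 17 + (d / 2 - 1) / 2 * x 16 + x 19 - d / 2 * x 18 := by
    intro x
    show KB x ((2 : ℤ) • Pi.single 16 1 + ((d / 2 - 1) / 2) • Pi.single 17 1 +
      Pi.single 18 1 - (d / 2) • Pi.single 19 1) = _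
    rw [KB_sub_right, KB_add_right, KB_add_right, KB_smul_right, KB_smul_right, KB_smul_right,
      KB_s16, KB_s17, KB_s18, KB_s19]
  constructor
  · rw [expand, ell_17, ell_16, ell_19, ell_18]
    ring
  · rw [expand, del1_apply, del1_apply, del1_apply, del1_apply]
    simp
    omega

lemma part4 (h8 : d % 8 = 2) :
    ¬ ∃ g : V ≃ₗ[ℤ] V, IsIsomK g ∧ g (ell d) = ell d ∧ g del0 = del1 d := by
  rintro ⟨g, -, hgl, hg0⟩
  -- δ₁ + ℓ is divisible by 2, δ₀ + ℓ is not
  set w : V := fun i => (del1 d i + ell d i) / 2 with hw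
  have hval : del1 d + ell d = (2 : ℤ) • w := by
    funext i
    rw [Pi.smul_apply, smul_eq_mul, hw]
    show del1 d i + ell d i = 2 * ((del1 d i + ell d i) / 2)
    rw [del1_apply, ell_apply]
    split_ifs <;> first | omega | simp_all
  have hsum : g (del0 + ell d) = (2 : ℤ) • w := by
    rw [map_add, hg0, hgl, hval]
  have : del0 + ell d = (2 : ℤ) • g.symm w := by
    have := congrArg g.symm hsum
    rw [g.symm_apply_apply, map_smul] at this
    exact this
  have h16 := congrFun this 16
  rw [Pi.add_apply, del0_apply, ell_16, Pi.smul_apply, smul_eq_mul] at h16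
  simp at h16
  omega

end K3

namespace K3

variable {d : ℤ}

lemma abs_natAbs (B : ℤ) : |B| = (B.natAbs : ℤ) := Int.abs_eq_natAbs B

lemma coord (x : V) (c c' : ℤ) (Y Z : V) (i : Fin 22) :
    (x + c • Y - c' • Z) i = x i + c * Y i - c' * Z i := by simp

/-- Euclid step when `δ 17` does not divide `δ 20`. -/
lemma euclid_P (δ : V) (hB : δ 17 ≠ 0) (hndvd : ¬ δ 17 ∣ δ 20) :
    ∃ δ' : V, Rel d δ δ' ∧ δ' 17 ≠ 0 ∧ (δ' 17).natAbs < (δ 17).natAbs := by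
  obtain ⟨M, hM⟩ : ∃ M, M = δ 20 % δ 17 := ⟨_, rfl⟩
  have h1 := rel_mvPB (d := d) (δ 20 / δ 17) δ
  set δ₁ := δ + (δ 20 / δ 17 * δ 21) • E1 - (δ 20 / δ 17 * δ 17) • E3 with hδ₁
  have e17 : δ₁ 17 = δ 17 := by
    rw [hδ₁, coord, E1_apply, E3_apply, if_neg (by decide), if_neg (by decide)]; ring
  have e16 : δ₁ 16 = δ 16 + δ 20 / δ 17 * δ 21 := by
    rw [hδ₁, coord, E1_apply, E3_apply, if_pos rfl, if_neg (by decide)]; ring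
  have e20 : δ₁ 20 = M := by
    rw [hδ₁, coord, E1_apply, E3_apply, if_neg (by decide), if_pos rfl, hM, Int.emod_def]
    ring
  have hP1ne : M ≠ 0 := by
    rw [hM]; exact fun hh => hndvd (Int.dvd_of_emod_eq_zero hh)
  have hP1nn : 0 ≤ M := hM ▸ Int.emod_nonneg _ hB
  have hP1lt : M < |δ 17| := hM ▸ Int.emod_lt_abs _ hB
  have habs := abs_natAbs (δ 17)
  by_cases hdvd2 : M ∣ δ 17
  · have h2 := rel_mvBP (d := d) ((M - δ 17) / M) δ₁
    set δ₂ := δ₁ + ((M - δ 17) / M * δ₁ 20) • F1 - ((M - δ 17) / M * δ₁ 16) • F3 with hδ₂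
    have hdd : M ∣ (M - δ 17) := dvd_sub dvd_rfl hdvd2
    have hcan : (M - δ 17) / M * M = M - δ 17 := Int.ediv_mul_cancel hdd
    have f17 : δ₂ 17 = M := by
      rw [hδ₂, coord, F1_apply, F3_apply, if_pos rfl, if_neg (by decide), e17, e20]
      rw [mul_one, mul_zero, hcan]
      ring
    exact ⟨δ₂, h1.trans h2, by rw [f17]; exact hP1ne, by rw [f17]; omega⟩
  · obtain ⟨M', hM'⟩ : ∃ M', M' = δ 17 % M := ⟨_, rfl⟩
    have h2 := rel_mvBP (d := d) (-(δ 17 / M)) δ₁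
    set δ₂ := δ₁ + (-(δ 17 / M) * δ₁ 20) • F1 - (-(δ 17 / M) * δ₁ 16) • F3 with hδ₂
    have f17 : δ₂ 17 = M' := by
      rw [hδ₂, coord, F1_apply, F3_apply, if_pos rfl, if_neg (by decide), e17, e20]
      rw [mul_one, mul_zero, hM', Int.emod_def]
      ring
    have hne : M' ≠ 0 := by
      rw [hM']; exact fun hh => hdvd2 (Int.dvd_of_emod_eq_zero hh)
    have hnn : 0 ≤ M' := hM' ▸ Int.emod_nonneg _ hP1ne
    have hlt : M' < |M| := hM' ▸ Int.emod_lt_abs _ hP1ne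
    have habs2 := abs_natAbs M
    exact ⟨δ₂, h1.trans h2, by rw [f17]; exact hne, by rw [f17]; omega⟩

/-- Euclid step when `δ 17` does not divide `δ 21`. -/
lemma euclid_Q (δ : V) (hB : δ 17 ≠ 0) (hndvd : ¬ δ 17 ∣ δ 21) :
    ∃ δ' : V, Rel d δ δ' ∧ δ' 17 ≠ 0 ∧ (δ' 17).natAbs < (δ 17).natAbs := by
  have hs := rel_swapU3 (d := d) δ
  set δ₁ := permE (Equiv.swap 20 21) δ with hδ₁
  have e17 : δ₁ 17 = δ 17 := by
    rw [hδ₁, permE_apply, Equiv.swap_apply_of_ne_of_ne (by decide) (by decide)]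
  have e20 : δ₁ 20 = δ 21 := by rw [hδ₁, permE_apply, Equiv.swap_apply_left]
  obtain ⟨δ', h', hne, hlt⟩ := euclid_P δ₁ (by rw [e17]; exact hB) (by rw [e17, e20]; exact hndvd)
  refine ⟨δ', hs.trans h', hne, ?_⟩
  rw [e17] at hlt
  exact hlt

end K3

namespace K3

variable {d : ℤ}

/-- Zero out coordinates 20 and 21 when they are divisible by `δ 17`. -/
lemma zero_PQ (δ : V) (hP : δ 17 ∣ δ 20) (hQ : δ 17 ∣ δ 21) :
    ∃ δ' : V, Rel d δ δ' ∧ δ' 17 = δ 17 ∧ δ' 20 = 0 ∧ δ' 21 = 0 ∧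
      (∀ i : Fin 22, i ≠ 16 → i ≠ 20 → i ≠ 21 → δ' i = δ i) := by
  have h1 := rel_mvPB (d := d) (δ 20 / δ 17) δ
  set δ₁ := δ + (δ 20 / δ 17 * δ 21) • E1 - (δ 20 / δ 17 * δ 17) • E3 with hδ₁
  have e20 : δ₁ 20 = 0 := by
    rw [hδ₁, coord, E1_apply, E3_apply, if_neg (by decide), if_pos rfl, mul_zero, mul_one]
    have := Int.ediv_mul_cancel hP
    linarith
  have eoth : ∀ i : Fin 22, i ≠ 16 → i ≠ 20 → δ₁ i = δ i := by
    intro i h16 h20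
    rw [hδ₁, coord, E1_apply, E3_apply, if_neg h16, if_neg h20]
    ring
  have e17 : δ₁ 17 = δ 17 := eoth 17 (by decide) (by decide)
  have e21 : δ₁ 21 = δ 21 := eoth 21 (by decide) (by decide)
  have h2 := rel_mvQB (d := d) (δ 21 / δ 17) δ₁
  set δ₂ := δ₁ + (δ 21 / δ 17 * δ₁ 20) • E1 - (δ 21 / δ 17 * δ₁ 17) • F3 with hδ₂
  have foth : ∀ i : Fin 22, i ≠ 16 → i ≠ 21 → δ₂ i = δ₁ i := by
    intro i h16 h21
    rw [hδ₂, coord, E1_apply, F3_apply, if_neg h16, if_neg h21]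
    ring
  refine ⟨δ₂, h1.trans h2, ?_, ?_, ?_, ?_⟩
  · rw [foth 17 (by decide) (by decide), e17]
  · rw [foth 20 (by decide) (by decide), e20]
  · rw [hδ₂, coord, E1_apply, F3_apply, if_neg (by decide), if_pos rfl, mul_zero, mul_one,
      e21, e17]
    have := Int.ediv_mul_cancel hQ
    linarith
  · intro i h16 h20 h21
    rw [foth i h16 h21, eoth i h16 h20]

/-- When `δ 17` does not divide `δ 16` (with zero 20,21 coordinates), reduce. -/
lemma from_A (δ : V) (hB : δ 17 ≠ 0) (hP : δ 20 = 0) (hQ : δ 21 = 0)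
    (hA : ¬ δ 17 ∣ δ 16) :
    ∃ δ' : V, Rel d δ δ' ∧ δ' 17 ≠ 0 ∧ (δ' 17).natAbs < (δ 17).natAbs := by
  have h1 := rel_mvBQ (d := d) 1 δ
  set δ₁ := δ + (1 * δ 21) • F1 - (1 * δ 16) • E3 with hδ₁
  have e17 : δ₁ 17 = δ 17 := by
    rw [hδ₁, coord, F1_apply, E3_apply, if_pos rfl, if_neg (by decide), hQ]
    ring
  have e20 : δ₁ 20 = - δ 16 := by
    rw [hδ₁, coord, F1_apply, E3_apply, if_neg (by decide), if_pos rfl, hP]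
    ring
  obtain ⟨δ', h', hne, hlt⟩ := euclid_P δ₁ (by rw [e17]; exact hB)
    (by rw [e17, e20]; exact fun hh => hA ((dvd_neg).1 hh))
  refine ⟨δ', h1.trans h', hne, by rw [e17] at hlt; exact hlt⟩

lemma gram_e8_diag : ∀ j : Fin 22, j.val < 16 → gramK j j = -2 := by decide

lemma single_hi_zero (j : Fin 22) (hj : j.val < 16) :
    ∀ i : Fin 22, 16 ≤ i.val → (Pi.single j (1:ℤ) : V) i = 0 := by
  intro i hi
  exact Pi.single_eq_of_ne (fun hh => by rw [hh] at hi; omega) 1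

/-- E8-pairing residue step. -/
lemma e8_pair_step (δ : V) (hB : δ 17 ≠ 0) (hP : δ 20 = 0) (hQ : δ 21 = 0)
    (hA : δ 17 ∣ δ 16) (j : Fin 22) (hj : j.val < 16)
    (hnd : ¬ δ 17 ∣ KB δ (Pi.single j 1)) :
    ∃ δ' : V, Rel d δ δ' ∧ δ' 17 ≠ 0 ∧ (δ' 17).natAbs < (δ 17).natAbs := by
  have hm : KB (Pi.single j (1:ℤ) : V) (Pi.single j 1) = 2 * (-1) := by
    rw [KB_single_single, gram_e8_diag j hj]
    norm_num
  have h1 := rel_mvAE8 (d := d) (Pi.single j 1) (-1)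
    (single_hi_zero j hj 17 (by decide)) (single_hi_zero j hj 18 (by decide))
    (single_hi_zero j hj 19 (by decide)) hm δ
  set δ₁ := δ + δ 17 • (Pi.single j 1 : V) - (KB δ (Pi.single j 1) + -1 * δ 17) • E1 with hδ₁
  have e17 : δ₁ 17 = δ 17 := by
    rw [hδ₁, coord, E1_apply, if_neg (by decide), single_hi_zero j hj 17 (by decide)]
    ring
  have e20 : δ₁ 20 = 0 := by
    rw [hδ₁, coord, E1_apply, if_neg (by decide), single_hi_zero j hj 20 (by decide), hP]
    ring
  have e21 : δ₁ 21 = 0 := by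
    rw [hδ₁, coord, E1_apply, if_neg (by decide), single_hi_zero j hj 21 (by decide), hQ]
    ring
  have e16 : δ₁ 16 = δ 16 + δ 17 * (Pi.single j (1:ℤ) : V) 16 -
      (KB δ (Pi.single j 1) + -1 * δ 17) := by
    rw [hδ₁, coord, E1_apply, if_pos rfl]
    ring
  have hnd16 : ¬ δ₁ 17 ∣ δ₁ 16 := by
    rw [e17, e16]
    intro hh
    apply hnd
    have hdvd2 : δ 17 ∣ δ 17 * (Pi.single j (1:ℤ) : V) 16 := Dvd.intro _ rfl
    have : KB δ (Pi.single j 1) =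
        (δ 16 + δ 17 * (Pi.single j (1:ℤ) : V) 16 - (KB δ (Pi.single j 1) + -1 * δ 17))
        * (-1) + δ 16 + δ 17 * (Pi.single j (1:ℤ) : V) 16 + δ 17 := by ring
    rw [this]
    exact dvd_add (dvd_add (dvd_add (hh.mul_right _) hA) hdvd2) dvd_rfl
  obtain ⟨δ', h', hne, hlt⟩ := from_A δ₁ (by rw [e17]; exact hB) e20 e21 hnd16
  rw [e17] at hlt
  exact ⟨δ', h1.trans h', hne, hlt⟩

end K3

namespace K3

variable {d : ℤ}

lemma fin_hi (i : Fin 22) (h : ¬ i.val < 16) :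
    i = 16 ∨ i = 17 ∨ i = 18 ∨ i = 19 ∨ i = 20 ∨ i = 21 := by
  have h22 := i.isLt
  have hv : i.val = 16 ∨ i.val = 17 ∨ i.val = 18 ∨ i.val = 19 ∨ i.val = 20 ∨ i.val = 21 := by
    omega
  rcases hv with h|h|h|h|h|h
  · exact Or.inl (Fin.ext h)
  · exact Or.inr (Or.inl (Fin.ext h))
  · exact Or.inr (Or.inr (Or.inl (Fin.ext h)))
  · exact Or.inr (Or.inr (Or.inr (Or.inl (Fin.ext h))))
  · exact Or.inr (Or.inr (Or.inr (Or.inr (Or.inl (Fin.ext h)))))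
  · exact Or.inr (Or.inr (Or.inr (Or.inr (Or.inr (Fin.ext h)))))

/-- Kill the E8 block when all its pairings are divisible by `δ 17`. -/
lemma kill_E8 (δ : V) (hall : ∀ j : Fin 22, j.val < 16 → δ 17 ∣ KB δ (Pi.single j 1))
    (hP : δ 20 = 0) (hQ : δ 21 = 0) :
    ∃ δ' : V, Rel d δ δ' ∧ (∀ i : Fin 22, i.val < 16 → δ' i = 0) ∧ δ' 17 = δ 17 ∧
      δ' 18 = δ 18 ∧ δ' 19 = δ 19 ∧ δ' 20 = 0 ∧ δ' 21 = 0 := by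
  have hdvd : ∀ i : Fin 22, i.val < 16 → δ 17 ∣ δ i := e8_dvd _ δ hall
  set w : V := fun i => if i.val < 16 then -(δ i / δ 17) else 0 with hw
  have hw_hi : ∀ i : Fin 22, ¬ i.val < 16 → w i = 0 := by
    intro i hi
    rw [hw]
    exact if_neg hi
  have hm := (Int.mul_ediv_cancel' (KB_self_even w)).symm
  have h1 := rel_mvAE8 (d := d) w (KB w w / 2) (hw_hi 17 (by decide)) (hw_hi 18 (by decide))
    (hw_hi 19 (by decide)) hm δ
  set δ₁ := δ + δ 17 • w - (KB δ w + KB w w / 2 * δ 17) • E1 with hδ₁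
  have elow : ∀ i : Fin 22, i.val < 16 → δ₁ i = 0 := by
    intro i hi
    have n16 : i ≠ 16 := fun hh => by subst hh; exact absurd hi (by decide)
    rw [hδ₁, coord, E1_apply, if_neg n16, hw]
    show δ i + δ 17 * (if i.val < 16 then -(δ i / δ 17) else 0) - _ * 0 = 0
    rw [if_pos hi]
    have := Int.mul_ediv_cancel' (hdvd i hi)
    linarith
  have eoth : ∀ i : Fin 22, ¬ i.val < 16 → i ≠ 16 → δ₁ i = δ i := by
    intro i hi n16
    rw [hδ₁, coord, E1_apply, if_neg n16, hw_hi i hi]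
    ring
  exact ⟨δ₁, h1, elow, eoth 17 (by decide) (by decide), eoth 18 (by decide) (by decide),
    eoth 19 (by decide) (by decide), by rw [eoth 20 (by decide) (by decide)]; exact hP,
    by rw [eoth 21 (by decide) (by decide)]; exact hQ⟩

/-- Step when `δ 17` does not divide `d * δ 18`. -/
lemma dt_step (heven : 2 ∣ d) (δ : V) (hperp : KB (ell d) δ = 0) (hB : δ 17 ≠ 0)
    (hP : δ 20 = 0) (hQ : δ 21 = 0) (hA : δ 17 ∣ δ 16) (hndt : ¬ δ 17 ∣ d * δ 18) :
    ∃ δ' : V, Rel d δ δ' ∧ δ' 17 ≠ 0 ∧ (δ' 17).natAbs < (δ 17).natAbs := by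
  have h19 : δ 19 = -(d / 2) * δ 18 := by
    rw [KB_ell] at hperp
    linarith
  have hdd : 2 * (d / 2) = d := by omega
  have h1 := rel_mvAL (d := d) heven 1 δ
  set δ₁ := δ + (1 * δ 17) • Lp d -
    (1 * (δ 19 - d / 2 * δ 18) - d / 2 * 1 * 1 * δ 17) • E1 with hδ₁
  have e17 : δ₁ 17 = δ 17 := by
    rw [hδ₁, coord, Lp_apply, E1_apply, if_neg (by decide), if_neg (by decide),
      if_neg (by decide)]
    ring
  have e20 : δ₁ 20 = 0 := by
    rw [hδ₁, coord, Lp_apply, E1_apply, if_neg (by decide), if_neg (by decide),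
      if_neg (by decide), hP]
    ring
  have e21 : δ₁ 21 = 0 := by
    rw [hδ₁, coord, Lp_apply, E1_apply, if_neg (by decide), if_neg (by decide),
      if_neg (by decide), hQ]
    ring
  have e16 : δ₁ 16 = δ 16 + d * δ 18 + d / 2 * δ 17 := by
    rw [hδ₁, coord, Lp_apply, E1_apply, if_neg (by decide), if_neg (by decide), if_pos rfl,
      h19]
    obtain ⟨c, hc⟩ := heven
    have hc2 : d / 2 = c := by omega
    rw [hc2, hc]
    ring
  have hnd16 : ¬ δ₁ 17 ∣ δ₁ 16 := by
    rw [e17, e16]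
    intro hh
    apply hndt
    have : d * δ 18 = (δ 16 + d * δ 18 + d / 2 * δ 17) - δ 16 - d / 2 * δ 17 := by ring
    rw [this]
    exact dvd_sub (dvd_sub hh hA) (Dvd.intro_left _ rfl)
  obtain ⟨δ', h', hne, hlt⟩ := from_A δ₁ (by rw [e17]; exact hB) e20 e21 hnd16
  rw [e17] at hlt
  exact ⟨δ', h1.trans h', hne, hlt⟩

end K3

namespace K3

variable {d : ℤ}

/-- Final classification of fully reduced vectors. -/
lemma endgame (hd : 0 < d) (heven : 2 ∣ d) (h8 : d % 8 = 2)
    (δ : V) (hperp : KB (ell d) δ = 0) (hnorm : KB δ δ = -2) (hB : δ 17 ≠ 0)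
    (hE8 : ∀ i : Fin 22, i.val < 16 → δ i = 0) (hP : δ 20 = 0) (hQ : δ 21 = 0)
    (ht0 : 0 ≤ δ 18) (htB : δ 18 < |δ 17|) (hdt : δ 17 ∣ d * δ 18) :
    Rel d δ del0 ∨ Rel d δ (del1 d) := by
  have h19 : δ 19 = -(d / 2) * δ 18 := by
    rw [KB_ell] at hperp
    linarith
  have hdd : 2 * (d / 2) = d := by omega
  have hfour : KB δ δ = 2 * (δ 16 * δ 17) + 2 * (δ 18 * δ 19) := by
    refine KB_four δ fun i h16 h17 h18 h19' => ?_
    by_cases hlow : i.val < 16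
    · exact hE8 i hlow
    rcases fin_hi i hlow with rfl|rfl|rfl|rfl|rfl|rfl
    · exact absurd rfl h16
    · exact absurd rfl h17
    · exact absurd rfl h18
    · exact absurd rfl h19'
    · exact hP
    · exact hQ
  rw [hfour] at hnorm
  rw [h19] at hnorm
  -- hnorm : 2 * (δ16 * δ17) + 2 * (δ18 * (-(d/2) * δ18)) = -2
  have key : d * (δ 18 * δ 18) = 2 * (δ 16 * δ 17) + 2 := by
    have : (2 * (d / 2)) * (δ 18 * δ 18) = 2 * (δ 16 * δ 17) + 2 := by linarith [hnorm]
    rw [hdd] at this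
    exact this
  have hB2 : δ 17 ∣ 2 := by
    have h1 : δ 17 ∣ d * δ 18 * δ 18 := hdt.mul_right _
    have h2 : δ 17 ∣ 2 * δ 16 * δ 17 := Dvd.intro_left _ rfl
    have : (2 : ℤ) = d * δ 18 * δ 18 - 2 * δ 16 * δ 17 := by
      rw [show d * δ 18 * δ 18 = d * (δ 18 * δ 18) from by ring, key]
      ring
    rw [this]
    exact dvd_sub h1 h2
  have hnat : (δ 17).natAbs ∣ 2 := by
    have := Int.natAbs_dvd_natAbs.2 hB2
    simpa using this
  have habs := abs_natAbs (δ 17)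
  have h12 : (δ 17).natAbs = 1 ∨ (δ 17).natAbs = 2 := (Nat.dvd_prime Nat.prime_two).1 hnat
  rcases h12 with h1 | h2
  · -- |B| = 1, t = 0, δ = ±δ₀
    have ht : δ 18 = 0 := by omega
    have h19' : δ 19 = 0 := by rw [h19, ht]; ring
    have hAB : δ 16 * δ 17 = -1 := by
      rw [ht] at key
      linarith
    have hBcase : δ 17 = 1 ∨ δ 17 = -1 := by omega
    rcases hBcase with hB1 | hB1
    · -- B = 1, A = -1 : use negation
      have hA : δ 16 = -1 := by rw [hB1] at hAB; linarith
      have hrel := rel_negU1 (d := d) δ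
      have heq : negU1 δ = del0 := by
        funext i
        rw [negU1_apply, del0_apply]
        by_cases hlow : i.val < 16
        · have n16 : i ≠ 16 := fun hh => by subst hh; exact absurd hlow (by decide)
          have n17 : i ≠ 17 := fun hh => by subst hh; exact absurd hlow (by decide)
          rw [hE8 i hlow, if_neg n16, if_neg n17]
          ring
        rcases fin_hi i hlow with rfl|rfl|rfl|rfl|rfl|rfl
        · simp [hA]
        · simp [hB1]
        · simp [ht]
        · simp [h19']
        · simp [hP]
        · simp [hQ]
      rw [heq] at hrel
      exact Or.inl hrel
    · -- B = -1, A = 1 : δ = δ₀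
      have hA : δ 16 = 1 := by rw [hB1] at hAB; linarith
      have heq : δ = del0 := by
        funext i
        rw [del0_apply]
        by_cases hlow : i.val < 16
        · have n16 : i ≠ 16 := fun hh => by subst hh; exact absurd hlow (by decide)
          have n17 : i ≠ 17 := fun hh => by subst hh; exact absurd hlow (by decide)
          rw [hE8 i hlow, if_neg n16, if_neg n17]
        rcases fin_hi i hlow with rfl|rfl|rfl|rfl|rfl|rfl
        · simp [hA]
        · simp [hB1]
        · simp [ht]
        · simp [h19']
        · simp [hP]
        · simp [hQ]
      rw [heq]
      exact Or.inl (Rel.refl d del0)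
  · -- |B| = 2
    have ht : δ 18 = 0 ∨ δ 18 = 1 := by omega
    rcases ht with ht | ht
    · -- impossible: A*B = -1 with |B| = 2
      exfalso
      have hAB : δ 16 * δ 17 = -1 := by
        rw [ht] at key
        linarith
      have : IsUnit (δ 17) := IsUnit.of_mul_eq_one (-δ 16) (by linear_combination -hAB)
      rcases Int.isUnit_iff.1 this with h | h <;> omega
    · -- t = 1 : δ₁ orbit
      have h19' : δ 19 = -(d / 2) := by rw [h19, ht]; ring
      have hABkey : 2 * (δ 16 * δ 17) = d - 2 := by
        rw [ht] at key
        linarith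
      have hBcase : δ 17 = 2 ∨ δ 17 = -2 := by omega
      rcases hBcase with hB1 | hB1
      · -- B = 2 : swap gives δ₁
        have hA : 4 * δ 16 = d - 2 := by rw [hB1] at hABkey; linarith
        have hrel := rel_swapU1 (d := d) δ
        have heq : permE (Equiv.swap 16 17) δ = del1 d := by
          funext i
          rw [permE_apply, del1_apply]
          by_cases hlow : i.val < 16
          · have n16 : i ≠ 16 := fun hh => by subst hh; exact absurd hlow (by decide)
            have n17 : i ≠ 17 := fun hh => by subst hh; exact absurd hlow (by decide)
            have n18 : i ≠ 18 := fun hh => by subst hh; exact absurd hlow (by decide)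
            have n19 : i ≠ 19 := fun hh => by subst hh; exact absurd hlow (by decide)
            have hfix : Equiv.swap (16 : Fin 22) 17 i = i :=
              Equiv.swap_apply_of_ne_of_ne n16 n17
            rw [hfix, hE8 i hlow, if_neg n16, if_neg n17, if_neg n18, if_neg n19]
          rcases fin_hi i hlow with rfl|rfl|rfl|rfl|rfl|rfl
          · rw [Equiv.swap_apply_left]
            simp [hB1]
          · rw [Equiv.swap_apply_right]
            simp
            omega
          · rw [Equiv.swap_apply_of_ne_of_ne (by decide) (by decide)]
            simp [ht]
          · rw [Equiv.swap_apply_of_ne_of_ne (by decide) (by decide)]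
            simp [h19']
          · rw [Equiv.swap_apply_of_ne_of_ne (by decide) (by decide)]
            simp [hP]
          · rw [Equiv.swap_apply_of_ne_of_ne (by decide) (by decide)]
            simp [hQ]
        rw [heq] at hrel
        exact Or.inr hrel
      · -- B = -2 : negate then swap
        have hA : 4 * δ 16 = -(d - 2) := by rw [hB1] at hABkey; linarith
        have hrel1 := rel_negU1 (d := d) δ
        have hrel2 := rel_swapU1 (d := d) (negU1 δ)
        have heq : permE (Equiv.swap 16 17) (negU1 δ) = del1 d := by
          funext i
          rw [permE_apply, del1_apply]
          by_cases hlow : i.val < 16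
          · have n16 : i ≠ 16 := fun hh => by subst hh; exact absurd hlow (by decide)
            have n17 : i ≠ 17 := fun hh => by subst hh; exact absurd hlow (by decide)
            have n18 : i ≠ 18 := fun hh => by subst hh; exact absurd hlow (by decide)
            have n19 : i ≠ 19 := fun hh => by subst hh; exact absurd hlow (by decide)
            have hfix : Equiv.swap (16 : Fin 22) 17 i = i :=
              Equiv.swap_apply_of_ne_of_ne n16 n17
            rw [hfix, negU1_apply, if_neg (by tauto), hE8 i hlow,
              if_neg n16, if_neg n17, if_neg n18, if_neg n19]
            ring
          rcases fin_hi i hlow with rfl|rfl|rfl|rfl|rfl|rfl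
          · rw [Equiv.swap_apply_left, negU1_apply]
            simp [hB1]
          · rw [Equiv.swap_apply_right, negU1_apply]
            simp
            omega
          · rw [Equiv.swap_apply_of_ne_of_ne (by decide) (by decide), negU1_apply]
            simp [ht]
          · rw [Equiv.swap_apply_of_ne_of_ne (by decide) (by decide), negU1_apply]
            simp [h19']
          · rw [Equiv.swap_apply_of_ne_of_ne (by decide) (by decide), negU1_apply]
            simp [hP]
          · rw [Equiv.swap_apply_of_ne_of_ne (by decide) (by decide), negU1_apply]
            simp [hQ]
        rw [heq] at hrel2
        exact Or.inr (hrel1.trans hrel2)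

end K3

namespace K3

variable {d : ℤ}

/-- The main strong-induction reduction. -/
lemma main_reduce (hd : 0 < d) (heven : 2 ∣ d) (h8 : d % 8 = 2) :
    ∀ n : ℕ, ∀ δ : V, KB (ell d) δ = 0 → KB δ δ = -2 → (δ 17).natAbs = n → δ 17 ≠ 0 →
      Rel d δ del0 ∨ Rel d δ (del1 d) := by
  intro n
  induction n using Nat.strong_induction_on with
  | _ n IH =>
    intro δ hperp hnorm hn hB0
    have step : ∀ δ' : V, Rel d δ δ' → δ' 17 ≠ 0 → (δ' 17).natAbs < (δ 17).natAbs →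
        Rel d δ del0 ∨ Rel d δ (del1 d) := by
      intro δ' hrel hne hlt
      rcases IH _ (hn ▸ hlt) δ' (hrel.perp hperp) (hrel.norm.trans hnorm) rfl hne with h | h
      · exact Or.inl (hrel.trans h)
      · exact Or.inr (hrel.trans h)
    by_cases hP : δ 17 ∣ δ 20
    swap
    · obtain ⟨δ', h', hne, hlt⟩ := euclid_P (d := d) δ hB0 hP
      exact step δ' h' hne hlt
    by_cases hQ : δ 17 ∣ δ 21
    swap
    · obtain ⟨δ', h', hne, hlt⟩ := euclid_Q (d := d) δ hB0 hQ
      exact step δ' h' hne hlt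
    obtain ⟨δ₂, h2, e17, e20, e21, eoth⟩ := zero_PQ (d := d) δ hP hQ
    have hB2 : δ₂ 17 ≠ 0 := by rw [e17]; exact hB0
    by_cases hA : δ₂ 17 ∣ δ₂ 16
    swap
    · obtain ⟨δ', h', hne, hlt⟩ := from_A (d := d) δ₂ hB2 e20 e21 hA
      rw [e17] at hlt
      exact step δ' (h2.trans h') hne hlt
    by_cases hE8 : ∀ j : Fin 22, j.val < 16 → δ₂ 17 ∣ KB δ₂ (Pi.single j 1)
    swap
    · push_neg at hE8
      obtain ⟨j, hj, hnd⟩ := hE8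
      obtain ⟨δ', h', hne, hlt⟩ := e8_pair_step (d := d) δ₂ hB2 e20 e21 hA j hj hnd
      rw [e17] at hlt
      exact step δ' (h2.trans h') hne hlt
    obtain ⟨δ₃, h3, flow, f17, f18, f19, f20, f21⟩ := kill_E8 (d := d) δ₂ hE8 e20 e21
    have rel3 : Rel d δ δ₃ := h2.trans h3
    have hB3 : δ₃ 17 ≠ 0 := by rw [f17, e17]; exact hB0
    have e17' : δ₃ 17 = δ 17 := by rw [f17, e17]
    by_cases hA3 : δ₃ 17 ∣ δ₃ 16
    swap
    · obtain ⟨δ', h', hne, hlt⟩ := from_A (d := d) δ₃ hB3 f20 f21 hA3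
      rw [e17'] at hlt
      exact step δ' (rel3.trans h') hne hlt
    by_cases hdt : δ₃ 17 ∣ d * δ₃ 18
    swap
    · obtain ⟨δ', h', hne, hlt⟩ := dt_step heven δ₃ (rel3.perp hperp) hB3 f20 f21 hA3 hdt
      rw [e17'] at hlt
      exact step δ' (rel3.trans h') hne hlt
    -- reduce the t coordinate and finish
    have h4 := rel_mvAL (d := d) heven (-(δ₃ 18 / δ₃ 17)) δ₃
    set δ₄ := δ₃ + (-(δ₃ 18 / δ₃ 17) * δ₃ 17) • Lp d -
      (-(δ₃ 18 / δ₃ 17) * (δ₃ 19 - d / 2 * δ₃ 18) -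
        d / 2 * -(δ₃ 18 / δ₃ 17) * -(δ₃ 18 / δ₃ 17) * δ₃ 17) • E1 with hδ₄
    have goth : ∀ i : Fin 22, i ≠ 16 → i ≠ 18 → i ≠ 19 → δ₄ i = δ₃ i := by
      intro i n16 n18 n19
      rw [hδ₄, coord, Lp_apply, E1_apply, if_neg n18, if_neg n19, if_neg n16]
      ring
    have g17 : δ₄ 17 = δ₃ 17 := goth 17 (by decide) (by decide) (by decide)
    have g18 : δ₄ 18 = δ₃ 18 % δ₃ 17 := by
      rw [hδ₄, coord, Lp_apply, E1_apply, if_pos rfl, if_neg (by decide), Int.emod_def]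
      ring
    have glow : ∀ i : Fin 22, i.val < 16 → δ₄ i = 0 := by
      intro i hi
      have n16 : i ≠ 16 := fun hh => by subst hh; exact absurd hi (by decide)
      have n18 : i ≠ 18 := fun hh => by subst hh; exact absurd hi (by decide)
      have n19 : i ≠ 19 := fun hh => by subst hh; exact absurd hi (by decide)
      rw [goth i n16 n18 n19]
      exact flow i hi
    have g20 : δ₄ 20 = 0 := by
      rw [goth 20 (by decide) (by decide) (by decide)]; exact f20
    have g21 : δ₄ 21 = 0 := by
      rw [goth 21 (by decide) (by decide) (by decide)]; exact f21
    have rel4 : Rel d δ δ₄ := rel3.trans h4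
    have hB4 : δ₄ 17 ≠ 0 := by rw [g17]; exact hB3
    have hdt4 : δ₄ 17 ∣ d * δ₄ 18 := by
      rw [g17, g18, Int.emod_def]
      have : d * (δ₃ 18 - δ₃ 17 * (δ₃ 18 / δ₃ 17)) =
          d * δ₃ 18 - (d * (δ₃ 18 / δ₃ 17)) * δ₃ 17 := by ring
      rw [this]
      exact dvd_sub hdt (Dvd.intro_left _ rfl)
    have hend := endgame hd heven h8 δ₄ (rel4.perp hperp) (rel4.norm.trans hnorm) hB4 glow
      g20 g21 (by rw [g18]; exact Int.emod_nonneg _ hB3)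
      (by rw [g18, g17]; exact Int.emod_lt_abs _ hB3) hdt4
    rcases hend with h | h
    · exact Or.inl (rel4.trans h)
    · exact Or.inr (rel4.trans h)

/-- Make the coordinate 17 nonzero. -/
lemma init_B (hd : 0 < d) (heven : 2 ∣ d) (δ : V)
    (hperp : KB (ell d) δ = 0) (hnorm : KB δ δ = -2) :
    ∃ δ' : V, Rel d δ δ' ∧ δ' 17 ≠ 0 := by
  by_cases h17 : δ 17 ≠ 0
  · exact ⟨δ, Rel.refl d δ, h17⟩
  push_neg at h17
  by_cases h16 : δ 16 ≠ 0
  · refine ⟨permE (Equiv.swap 16 17) δ, rel_swapU1 δ, ?_⟩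
    rw [permE_apply, Equiv.swap_apply_right]
    exact h16
  push_neg at h16
  by_cases h21 : δ 21 ≠ 0
  · refine ⟨δ + (1 * δ 21) • F1 - (1 * δ 16) • E3, rel_mvBQ 1 δ, ?_⟩
    rw [coord, F1_apply, E3_apply, if_pos rfl, if_neg (by decide), h17]
    simpa using h21
  push_neg at h21
  by_cases h20 : δ 20 ≠ 0
  · refine ⟨δ + (1 * δ 20) • F1 - (1 * δ 16) • F3, rel_mvBP 1 δ, ?_⟩
    rw [coord, F1_apply, F3_apply, if_pos rfl, if_neg (by decide), h17]
    simpa using h20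
  push_neg at h20
  by_cases hE8 : ∃ j : Fin 22, j.val < 16 ∧ KB δ (Pi.single j 1) ≠ 0
  · obtain ⟨j, hj, hkb⟩ := hE8
    have hm : KB (Pi.single j (1:ℤ) : V) (Pi.single j 1) = 2 * (-1) := by
      rw [KB_single_single, gram_e8_diag j hj]
      norm_num
    have h1 := rel_mvAE8 (d := d) (Pi.single j 1) (-1)
      (single_hi_zero j hj 17 (by decide)) (single_hi_zero j hj 18 (by decide))
      (single_hi_zero j hj 19 (by decide)) hm δ
    set δ₁ := δ + δ 17 • (Pi.single j 1 : V) - (KB δ (Pi.single j 1) + -1 * δ 17) • E1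
      with hδ₁
    have e16 : δ₁ 16 = - KB δ (Pi.single j 1) := by
      rw [hδ₁, coord, E1_apply, if_pos rfl, h16, h17]
      ring
    have h2 := rel_swapU1 (d := d) δ₁
    refine ⟨permE (Equiv.swap 16 17) δ₁, h1.trans h2, ?_⟩
    rw [permE_apply, Equiv.swap_apply_right, e16]
    simpa using hkb
  push_neg at hE8
  by_cases h18 : δ 18 ≠ 0
  · have h19 : δ 19 = -(d / 2) * δ 18 := by
      rw [KB_ell] at hperp
      linarith
    have hdd : 2 * (d / 2) = d := by omega
    refine ⟨δ + (1 * δ 16) • Lp d -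
      (1 * (δ 19 - d / 2 * δ 18) - d / 2 * 1 * 1 * δ 16) • F1, rel_mvBL heven 1 δ, ?_⟩
    rw [coord, Lp_apply, F1_apply, if_neg (by decide), if_neg (by decide), if_pos rfl,
      h16, h17, h19]
    have hne : d * δ 18 ≠ 0 := mul_ne_zero (by omega) h18
    intro hh
    apply hne
    rw [← hdd]
    linarith
  push_neg at h18
  -- everything vanishes : contradiction with the norm
  exfalso
  have h19 : δ 19 = 0 := by
    rw [KB_ell, h18] at hperp
    linarith
  have hz : δ = 0 := by
    funext i
    by_cases hlow : i.val < 16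
    · have := e8_dvd 0 δ (fun j hj => by rw [hE8 j hj]) i hlow
      simpa using this
    rcases fin_hi i hlow with rfl|rfl|rfl|rfl|rfl|rfl
    · exact h16
    · exact h17
    · exact h18
    · exact h19
    · exact h20
    · exact h21
  rw [hz] at hnorm
  have : KB (0 : V) 0 = 0 := by
    unfold KB
    simp
  rw [this] at hnorm
  norm_num at hnorm

end K3

/-- For a positive even `d` with `d ≡ 2 (mod 8)`, the set
`Δ_d = {δ ∈ Λ_d : (δ.δ) = -2}` consists of exactly two orbits under the isometries of `Λ`
fixing `ℓ`, with representatives `δ₀` and `δ₁`. -/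
theorem stmt_12 (d : ℤ) (hd : 0 < d) (heven : 2 ∣ d) (h8 : d % 8 = 2) :
    (KB (ell d) del0 = 0 ∧ KB del0 del0 = -2) ∧
    (KB (ell d) (del1 d) = 0 ∧ KB (del1 d) (del1 d) = -2) ∧
    (∀ δ : Fin 22 → ℤ, KB (ell d) δ = 0 → KB δ δ = -2 →
      (∃ g : (Fin 22 → ℤ) ≃ₗ[ℤ] (Fin 22 → ℤ), IsIsomK g ∧ g (ell d) = ell d ∧ g del0 = δ) ∨
      (∃ g : (Fin 22 → ℤ) ≃ₗ[ℤ] (Fin 22 → ℤ), IsIsomK g ∧ g (ell d) = ell d ∧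
        g (del1 d) = δ)) ∧
    ¬ ∃ g : (Fin 22 → ℤ) ≃ₗ[ℤ] (Fin 22 → ℤ), IsIsomK g ∧ g (ell d) = ell d ∧
        g del0 = del1 d := by
  refine ⟨K3.part1, K3.part2 h8, ?_, K3.part4 h8⟩
  intro δ hperp hnorm
  obtain ⟨δ', hrel, hB⟩ := K3.init_B hd heven δ hperp hnorm
  rcases K3.main_reduce hd heven h8 (δ' 17).natAbs δ' (hrel.perp hperp)
      (hrel.norm.trans hnorm) rfl hB with h | h
  · exact Or.inl (K3.Rel.symm (hrel.trans h))
  · exact Or.inr (K3.Rel.symm (hrel.trans h))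
end

section
/- For every primitive v ∈ Γ, the subgroup {(v.w) : w ∈ Γ} of ℤ equals either ℤ or 3ℤ. -/
open scoped BigOperators

noncomputable section

/-- The Gram matrix of the cubic lattice `Γ̄ = E₈(-1)² ⊕ U² ⊕ I₀,₃` on `ℤ²³`. -/
def gramC : Fin 23 → Fin 23 → ℤ := fun i j =>
  if i.val < 8 ∧ j.val < 8 then
    E8M ⟨i.val % 8, Nat.mod_lt _ (by norm_num)⟩ ⟨j.val % 8, Nat.mod_lt _ (by norm_num)⟩
  else if 8 ≤ i.val ∧ i.val < 16 ∧ 8 ≤ j.val ∧ j.val < 16 then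
    E8M ⟨(i.val - 8) % 8, Nat.mod_lt _ (by norm_num)⟩ ⟨(j.val - 8) % 8, Nat.mod_lt _ (by norm_num)⟩
  else if (i.val = 16 ∧ j.val = 17) ∨ (i.val = 17 ∧ j.val = 16) ∨
      (i.val = 18 ∧ j.val = 19) ∨ (i.val = 19 ∧ j.val = 18) then 1
  else if 20 ≤ i.val ∧ i = j then -1
  else 0

/-- The bilinear form of the cubic lattice `Γ̄`. -/
def GB (x y : Fin 23 → ℤ) : ℤ := ∑ i, ∑ j, gramC i j * x i * y j

/-- The class `h² = (0,…,0,1,1,1)`. -/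
def h2 : Fin 23 → ℤ := Pi.single 20 1 + Pi.single 21 1 + Pi.single 22 1

/-- A vector is primitive if it is not `m • w` with `|m| ≥ 2`. -/
def PrimitiveC (v : Fin 23 → ℤ) : Prop :=
  ¬ ∃ (m : ℤ) (w : Fin 23 → ℤ), 2 ≤ |m| ∧ v = m • w

/-- Membership in `Γ = (h²)^⊥ ⊂ Γ̄`. -/
def inGamma (x : Fin 23 → ℤ) : Prop := GB h2 x = 0

lemma GB_add_right (x y z : Fin 23 → ℤ) : GB x (y + z) = GB x y + GB x z := by
  simp [GB, Pi.add_apply, mul_add, Finset.sum_add_distrib]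

lemma GB_smul_right (c : ℤ) (x y : Fin 23 → ℤ) : GB x (c • y) = c * GB x y := by
  simp only [GB, Finset.mul_sum]
  refine Finset.sum_congr rfl fun i _ => Finset.sum_congr rfl fun j _ => ?_
  simp only [Pi.smul_apply, smul_eq_mul]; ring

/-- `Γ = (h²)^⊥` as a submodule of `ℤ²³`. -/
def Gamma : Submodule ℤ (Fin 23 → ℤ) where
  carrier := {x | GB h2 x = 0}
  add_mem' := by
    intro a b ha hb
    simp only [Set.mem_setOf_eq] at *
    rw [GB_add_right, ha, hb, add_zero]
  zero_mem' := by simp [GB]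
  smul_mem' := by
    intro c x hx
    simp only [Set.mem_setOf_eq] at *
    rw [GB_smul_right, hx, mul_zero]

/-- The saturation `K_v` of `ℤh² + ℤv` in `Γ̄`. -/
def Kv (v : Fin 23 → ℤ) : Submodule ℤ (Fin 23 → ℤ) :=
  sat (Submodule.span ℤ ({h2, v} : Set (Fin 23 → ℤ)))

/-- `d` is the discriminant of `K_v`: some ℤ-basis of `K_v` has Gram determinant `d`. -/
def discIs (v : Fin 23 → ℤ) (d : ℤ) : Prop :=
  ∃ x y : Fin 23 → ℤ, Kv v = Submodule.span ℤ ({x, y} : Set (Fin 23 → ℤ)) ∧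
    d = GB x x * GB y y - GB x y * GB y x

/-- The index of `ℤh² + ℤv` in its saturation `K_v`. -/
def idx (v : Fin 23 → ℤ) : ℕ :=
  (Submodule.span ℤ ({h2, v} : Set (Fin 23 → ℤ))).toAddSubgroup.relIndex
    (Kv v).toAddSubgroup

/-- Isometries of the cubic lattice `Γ̄`. -/
def IsIsomC (g : (Fin 23 → ℤ) ≃ₗ[ℤ] (Fin 23 → ℤ)) : Prop := ∀ x y, GB (g x) (g y) = GB x y

end

section Aux

lemma gramC_symm : ∀ i j, gramC i j = gramC j i := by decide

/-- An explicit integral inverse of the Gram matrix `gramC`. -/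
def NinvC : Matrix (Fin 23) (Fin 23) ℤ :=
  !![-4, -5, -7, -10, -8, -6, -4, -2, 0, 0, 0, 0, 0, 0, 0, 0, 0, 0, 0, 0, 0, 0, 0;
    -5, -8, -10, -15, -12, -9, -6, -3, 0, 0, 0, 0, 0, 0, 0, 0, 0, 0, 0, 0, 0, 0, 0;
    -7, -10, -14, -20, -16, -12, -8, -4, 0, 0, 0, 0, 0, 0, 0, 0, 0, 0, 0, 0, 0, 0, 0;
    -10, -15, -20, -30, -24, -18, -12, -6, 0, 0, 0, 0, 0, 0, 0, 0, 0, 0, 0, 0, 0, 0, 0;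
    -8, -12, -16, -24, -20, -15, -10, -5, 0, 0, 0, 0, 0, 0, 0, 0, 0, 0, 0, 0, 0, 0, 0;
    -6, -9, -12, -18, -15, -12, -8, -4, 0, 0, 0, 0, 0, 0, 0, 0, 0, 0, 0, 0, 0, 0, 0;
    -4, -6, -8, -12, -10, -8, -6, -3, 0, 0, 0, 0, 0, 0, 0, 0, 0, 0, 0, 0, 0, 0, 0;
    -2, -3, -4, -6, -5, -4, -3, -2, 0, 0, 0, 0, 0, 0, 0, 0, 0, 0, 0, 0, 0, 0, 0;
    0, 0, 0, 0, 0, 0, 0, 0, -4, -5, -7, -10, -8, -6, -4, -2, 0, 0, 0, 0, 0, 0, 0;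
    0, 0, 0, 0, 0, 0, 0, 0, -5, -8, -10, -15, -12, -9, -6, -3, 0, 0, 0, 0, 0, 0, 0;
    0, 0, 0, 0, 0, 0, 0, 0, -7, -10, -14, -20, -16, -12, -8, -4, 0, 0, 0, 0, 0, 0, 0;
    0, 0, 0, 0, 0, 0, 0, 0, -10, -15, -20, -30, -24, -18, -12, -6, 0, 0, 0, 0, 0, 0, 0;
    0, 0, 0, 0, 0, 0, 0, 0, -8, -12, -16, -24, -20, -15, -10, -5, 0, 0, 0, 0, 0, 0, 0;
    0, 0, 0, 0, 0, 0, 0, 0, -6, -9, -12, -18, -15, -12, -8, -4, 0, 0, 0, 0, 0, 0, 0;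
    0, 0, 0, 0, 0, 0, 0, 0, -4, -6, -8, -12, -10, -8, -6, -3, 0, 0, 0, 0, 0, 0, 0;
    0, 0, 0, 0, 0, 0, 0, 0, -2, -3, -4, -6, -5, -4, -3, -2, 0, 0, 0, 0, 0, 0, 0;
    0, 0, 0, 0, 0, 0, 0, 0, 0, 0, 0, 0, 0, 0, 0, 0, 0, 1, 0, 0, 0, 0, 0;
    0, 0, 0, 0, 0, 0, 0, 0, 0, 0, 0, 0, 0, 0, 0, 0, 1, 0, 0, 0, 0, 0, 0;
    0, 0, 0, 0, 0, 0, 0, 0, 0, 0, 0, 0, 0, 0, 0, 0, 0, 0, 0, 1, 0, 0, 0;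
    0, 0, 0, 0, 0, 0, 0, 0, 0, 0, 0, 0, 0, 0, 0, 0, 0, 0, 1, 0, 0, 0, 0;
    0, 0, 0, 0, 0, 0, 0, 0, 0, 0, 0, 0, 0, 0, 0, 0, 0, 0, 0, 0, -1, 0, 0;
    0, 0, 0, 0, 0, 0, 0, 0, 0, 0, 0, 0, 0, 0, 0, 0, 0, 0, 0, 0, 0, -1, 0;
    0, 0, 0, 0, 0, 0, 0, 0, 0, 0, 0, 0, 0, 0, 0, 0, 0, 0, 0, 0, 0, 0, -1]

lemma gram_inv : ∀ i j : Fin 23, (∑ k, gramC i k * NinvC k j) = if i = j then 1 else 0 := by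
  decide

lemma GB_symm (x y : Fin 23 → ℤ) : GB x y = GB y x := by
  unfold GB
  rw [Finset.sum_comm]
  refine Finset.sum_congr rfl fun i _ => Finset.sum_congr rfl fun j _ => ?_
  rw [gramC_symm]; ring

lemma GB_hh : GB h2 h2 = -3 := by decide

lemma prim_combo (v : Fin 23 → ℤ) (hv : PrimitiveC v) :
    ∃ c : Fin 23 → ℤ, ∑ i, c i * v i = 1 := by
  set I : Ideal ℤ := Ideal.span (Set.range v) with hI
  obtain ⟨⟨d, hd⟩⟩ := IsPrincipalIdealRing.principal I
  have hdvd : ∀ i, d ∣ v i := by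
    intro i
    have hm : v i ∈ I := Ideal.subset_span ⟨i, rfl⟩
    rw [hd] at hm
    exact Ideal.mem_span_singleton.mp hm
  choose w hw using hdvd
  have hv_eq : v = d • w := funext fun i => by
    rw [hw i]; simp [Pi.smul_apply, smul_eq_mul]
  have hd0 : d ≠ 0 := by
    intro h0
    apply hv
    refine ⟨2, 0, by norm_num, ?_⟩
    rw [hv_eq, h0]; simp
  have hd2 : ¬ (2 ≤ |d|) := fun h => hv ⟨d, w, h, hv_eq⟩
  have hdu : IsUnit d := by
    rw [Int.isUnit_iff]
    have habs : |d| ≤ 1 := by omega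
    obtain ⟨hl, hr⟩ := abs_le.mp habs
    omega
  have h1 : (1 : ℤ) ∈ I := by
    rw [Ideal.eq_top_of_isUnit_mem I (hd ▸ Ideal.subset_span rfl) hdu]
    exact Submodule.mem_top
  have h1' : (1 : ℤ) ∈ Submodule.span ℤ (Set.range v) := h1
  rw [Submodule.mem_span_range_iff_exists_fun] at h1'
  obtain ⟨c, hc⟩ := h1'
  exact ⟨c, by simpa [smul_eq_mul] using hc⟩

lemma exists_GB_one (v : Fin 23 → ℤ) (hv : PrimitiveC v) : ∃ w, GB v w = 1 := by
  obtain ⟨c, hc⟩ := prim_combo v hv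
  refine ⟨fun j => ∑ k, NinvC j k * c k, ?_⟩
  unfold GB
  have key : ∀ i : Fin 23,
      (∑ j, gramC i j * v i * (∑ k, NinvC j k * c k)) = v i * c i := by
    intro i
    calc ∑ j, gramC i j * v i * (∑ k, NinvC j k * c k)
        = ∑ j, ∑ k, v i * c k * (gramC i j * NinvC j k) := by
          refine Finset.sum_congr rfl fun j _ => ?_
          rw [Finset.mul_sum]
          exact Finset.sum_congr rfl fun k _ => by ring
      _ = ∑ k, ∑ j, v i * c k * (gramC i j * NinvC j k) := Finset.sum_comm
      _ = ∑ k, v i * c k * (∑ j, gramC i j * NinvC j k) := by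
          refine Finset.sum_congr rfl fun k _ => ?_
          rw [Finset.mul_sum]
      _ = ∑ k, v i * c k * (if i = k then 1 else 0) := by
          refine Finset.sum_congr rfl fun k _ => ?_
          rw [gram_inv]
      _ = v i * c i := by
          simp [mul_ite]
  calc ∑ i, ∑ j, gramC i j * v i * (∑ k, NinvC j k * c k)
      = ∑ i, v i * c i := Finset.sum_congr rfl fun i _ => key i
    _ = ∑ i, c i * v i := Finset.sum_congr rfl fun i _ => mul_comm _ _
    _ = 1 := hc

lemma exists_GB_three (v : Fin 23 → ℤ) (hvG : inGamma v) (hv : PrimitiveC v) :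
    ∃ w, inGamma w ∧ GB v w = 3 := by
  obtain ⟨w1, hw1⟩ := exists_GB_one v hv
  refine ⟨(3 : ℤ) • w1 + (GB h2 w1) • h2, ?_, ?_⟩
  · unfold inGamma
    rw [GB_add_right, GB_smul_right, GB_smul_right, GB_hh]; ring
  · have hvh : GB v h2 = 0 := by rw [GB_symm]; exact hvG
    rw [GB_add_right, GB_smul_right, GB_smul_right, hw1, hvh]; ring

end Aux

/-- For every primitive `v ∈ Γ`, the subgroup `{(v.w) : w ∈ Γ} ⊆ ℤ` equals
either `ℤ` or `3ℤ`. -/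
theorem stmt_13 (v : Fin 23 → ℤ) (hvG : inGamma v) (hv : PrimitiveC v) :
    {n : ℤ | ∃ w : Fin 23 → ℤ, inGamma w ∧ GB v w = n} = (Set.univ : Set ℤ) ∨
    {n : ℤ | ∃ w : Fin 23 → ℤ, inGamma w ∧ GB v w = n} = {n : ℤ | (3 : ℤ) ∣ n} := by
  obtain ⟨w3, hw3G, hw3⟩ := exists_GB_three v hvG hv
  by_cases h : ∀ w, inGamma w → (3 : ℤ) ∣ GB v w
  · right
    ext n
    simp only [Set.mem_setOf_eq]
    constructor
    · rintro ⟨w, hwG, rfl⟩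
      exact h w hwG
    · rintro ⟨k, rfl⟩
      refine ⟨k • w3, ?_, ?_⟩
      · unfold inGamma at hw3G ⊢
        rw [GB_smul_right, hw3G, mul_zero]
      · rw [GB_smul_right, hw3]; ring
  · left
    push_neg at h
    obtain ⟨w2, hw2G, hnd⟩ := h
    set m := GB v w2 with hm
    have hg : Int.gcd 3 m = 1 := by
      have hdl : Int.gcd 3 m ∣ 3 := by
        have h3 : (Int.gcd 3 m : ℤ) ∣ 3 := Int.gcd_dvd_left 3 m
        exact_mod_cast h3
      rcases (Nat.prime_three.eq_one_or_self_of_dvd _ hdl) with h1 | h3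
      · exact h1
      · exfalso
        apply hnd
        have hdr : (Int.gcd 3 m : ℤ) ∣ m := Int.gcd_dvd_right 3 m
        rw [h3] at hdr
        exact_mod_cast hdr
    have hb : (1 : ℤ) = 3 * Int.gcdA 3 m + m * Int.gcdB 3 m := by
      have hh := Int.gcd_eq_gcd_ab 3 m
      rw [hg] at hh
      exact_mod_cast hh
    ext n
    simp only [Set.mem_setOf_eq, Set.mem_univ, iff_true]
    set a := Int.gcdA 3 m
    set b := Int.gcdB 3 m
    refine ⟨n • (a • w3 + b • w2), ?_, ?_⟩
    · unfold inGamma at hw3G hw2G ⊢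
      rw [GB_smul_right, GB_add_right, GB_smul_right, GB_smul_right, hw3G, hw2G]
      ring
    · rw [GB_smul_right, GB_add_right, GB_smul_right, GB_smul_right, hw3, ← hm]
      linear_combination n * hb.symm
end
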